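/- arXiv:2205.03851 — 7 statements merged into one kernel-verified Lean document; each statement's English description precedes it below -/
import Mathlib

section
/- Let m, n, N, N' be positive integers and let p = (p_{i,j})_{0≤i≤m,0≤j≤n} be positive reals summing to 1, with row sums p_i = Σ_{j=0}^n p_{i,j}. Then the risk difference satisfies Δ_p(N, N') = log((N + N' + (1+m)(1+n)/2)/(N + (1+m)(1+n)/2)) + Σ_{i=0}^m p_i · E[log((X_i + (1+n)/2)/(X_i + Y_i + (1+n)/2))], where for each i, X_i ~ Binomial(N, p_i) and Y_i ~ Binomial(N', p_i) are independent, and the expectations are finite sums against the binomial probability mass functions. -/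
open Finset

/-- Binomial(N, q) probability mass function at `x`. -/
noncomputable def binPMF (N : ℕ) (q : ℝ) (x : ℕ) : ℝ :=
  (N.choose x : ℝ) * q ^ x * (1 - q) ^ (N - x)

/-- The entropy loss `L(d, p) = ∑ᵢ ∑ⱼ pᵢⱼ log (pᵢⱼ / dᵢⱼ)`. -/
noncomputable def entropyLoss {m n : ℕ} (d p : Fin (m+1) → Fin (n+1) → ℝ) : ℝ :=
  ∑ i, ∑ j, p i j * Real.log (p i j / d i j)

/-- Support of the Multinomial(N, p) distribution on (1+m)(1+n) cells. -/
def suppX (m n N : ℕ) : Finset (Fin (m+1) → Fin (n+1) → Fin (N+1)) :=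
  Finset.univ.filter fun x => ∑ i, ∑ j, (x i j : ℕ) = N

/-- Support of the Multinomial(N', p·) distribution on 1+m cells. -/
def suppY (m N' : ℕ) : Finset (Fin (m+1) → Fin (N'+1)) :=
  Finset.univ.filter fun y => ∑ i, (y i : ℕ) = N'

/-- Multinomial(N, p) probability of the outcome `x`. -/
noncomputable def wX {m n N : ℕ} (p : Fin (m+1) → Fin (n+1) → ℝ)
    (x : Fin (m+1) → Fin (n+1) → Fin (N+1)) : ℝ :=
  (Nat.multinomial Finset.univ (fun k : Fin (m+1) × Fin (n+1) => (x k.1 k.2 : ℕ)) : ℝ) *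
    ∏ i, ∏ j, p i j ^ (x i j : ℕ)

/-- Multinomial(N', (pᵢ.)ᵢ) probability of the outcome `y`, where `pᵢ. = ∑ⱼ pᵢⱼ`. -/
noncomputable def wY {m n N' : ℕ} (p : Fin (m+1) → Fin (n+1) → ℝ)
    (y : Fin (m+1) → Fin (N'+1)) : ℝ :=
  (Nat.multinomial Finset.univ (fun i => (y i : ℕ)) : ℝ) *
    ∏ i, (∑ j, p i j) ^ (y i : ℕ)

/-- The estimator `p̃` based on the direct observations only. -/
noncomputable def ptilde {m n N : ℕ} (x : Fin (m+1) → Fin (n+1) → Fin (N+1)) :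
    Fin (m+1) → Fin (n+1) → ℝ :=
  fun i j => ((x i j : ℝ) + 1/2) / ((N : ℝ) + (1 + m) * (1 + n) / 2)

/-- The estimator `p̂` based on the direct and aggregated observations. -/
noncomputable def phat {m n N N' : ℕ} (x : Fin (m+1) → Fin (n+1) → Fin (N+1))
    (y : Fin (m+1) → Fin (N'+1)) : Fin (m+1) → Fin (n+1) → ℝ :=
  fun i j =>
    ((((∑ j', (x i j' : ℕ)) : ℕ) : ℝ) + (y i : ℝ) + (1 + n) / 2) /
        ((N : ℝ) + (N' : ℝ) + (1 + m) * (1 + n) / 2) *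
      (((x i j : ℝ) + 1/2) / ((((∑ j', (x i j' : ℕ)) : ℕ) : ℝ) + (1 + n) / 2))

/-- The risk difference `Δ_p(N, N') = E_p[L(p̂, p)] − E_p[L(p̃, p)]`, the expectation being
a finite sum over the supports of the independent multinomial observations. -/
noncomputable def riskDiff (m n : ℕ) (p : Fin (m+1) → Fin (n+1) → ℝ) (N N' : ℕ) : ℝ :=
  ∑ x ∈ suppX m n N, ∑ y ∈ suppY m N',
    wX p x * wY p y * (entropyLoss (phat x y) p - entropyLoss (ptilde x) p)


lemma multinomial_disjUnion {ι : Type*} [DecidableEq ι] {s t : Finset ι} (hst : Disjoint s t)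
    (k : ι → ℕ) :
    Nat.multinomial (s ∪ t) k =
      ((∑ i ∈ s, k i) + ∑ i ∈ t, k i).choose (∑ i ∈ s, k i) *
        (Nat.multinomial s k * Nat.multinomial t k) := by
  have hpos : 0 < (∏ i ∈ s, Nat.factorial (k i)) * ∏ i ∈ t, Nat.factorial (k i) :=
    Nat.mul_pos (Finset.prod_pos fun i _ => Nat.factorial_pos _)
      (Finset.prod_pos fun i _ => Nat.factorial_pos _)
  apply Nat.eq_of_mul_eq_mul_left hpos
  have h1 := Nat.multinomial_spec (s := s ∪ t) (f := k)
  rw [Finset.prod_union hst, Finset.sum_union hst] at h1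
  have h2 := Nat.multinomial_spec (s := s) (f := k)
  have h3 := Nat.multinomial_spec (s := t) (f := k)
  have h4 := Nat.choose_mul_factorial_mul_factorial
    (Nat.le_add_right (∑ i ∈ s, k i) (∑ i ∈ t, k i))
  rw [Nat.add_sub_cancel_left] at h4
  calc (∏ i ∈ s, Nat.factorial (k i)) * (∏ i ∈ t, Nat.factorial (k i)) * Nat.multinomial (s ∪ t) k
      = Nat.factorial ((∑ i ∈ s, k i) + ∑ i ∈ t, k i) := h1
    _ = ((∑ i ∈ s, k i) + ∑ i ∈ t, k i).choose (∑ i ∈ s, k i) *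
          Nat.factorial (∑ i ∈ s, k i) * Nat.factorial (∑ i ∈ t, k i) := h4.symm
    _ = ((∑ i ∈ s, k i) + ∑ i ∈ t, k i).choose (∑ i ∈ s, k i) *
          ((∏ i ∈ s, Nat.factorial (k i)) * Nat.multinomial s k) *
          ((∏ i ∈ t, Nat.factorial (k i)) * Nat.multinomial t k) := by rw [h2, h3]
    _ = _ := by ring

lemma sum_piAntidiag_union {ι : Type*} [DecidableEq ι] {s t : Finset ι} (hst : Disjoint s t)
    (N : ℕ) (F : (ι → ℕ) → ℝ) :
    ∑ k ∈ Finset.piAntidiag (s ∪ t) N, F k =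
      ∑ ab ∈ Finset.HasAntidiagonal.antidiagonal N, ∑ g ∈ Finset.piAntidiag s ab.1,
        ∑ h ∈ Finset.piAntidiag t ab.2, F (g + h) := by
  have hrw : ∀ ab : ℕ × ℕ,
      (∑ g ∈ Finset.piAntidiag s ab.1, ∑ h ∈ Finset.piAntidiag t ab.2, F (g + h))
      = ∑ gh ∈ Finset.piAntidiag s ab.1 ×ˢ Finset.piAntidiag t ab.2, F (gh.1 + gh.2) :=
    fun ab => (Finset.sum_product (Finset.piAntidiag s ab.1) (Finset.piAntidiag t ab.2) (fun gh => F (gh.1 + gh.2))).symm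
  simp_rw [hrw]
  rw [← Finset.sum_sigma (Finset.HasAntidiagonal.antidiagonal N)
    (fun ab => Finset.piAntidiag s ab.1 ×ˢ Finset.piAntidiag t ab.2)
    (fun z => F (z.2.1 + z.2.2))]
  refine Finset.sum_nbij' (i := fun k => ⟨(∑ i ∈ s, k i, ∑ i ∈ t, k i),
      (fun j => if j ∈ s then k j else 0, fun j => if j ∈ t then k j else 0)⟩)
    (j := fun z => z.2.1 + z.2.2) ?_ ?_ ?_ ?_ ?_
  · intro k hk
    rw [Finset.mem_piAntidiag] at hk
    simp only [Finset.mem_sigma, Finset.HasAntidiagonal.mem_antidiagonal, Finset.mem_product,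
      Finset.mem_piAntidiag]
    refine ⟨by rw [← Finset.sum_union hst]; exact hk.1, ⟨?_, ?_⟩, ⟨?_, ?_⟩⟩
    · exact Finset.sum_congr rfl fun i hi => if_pos hi
    · intro i hi
      by_contra hmem
      exact hi (if_neg hmem)
    · exact Finset.sum_congr rfl fun i hi => if_pos hi
    · intro i hi
      by_contra hmem
      exact hi (if_neg hmem)
  · rintro ⟨⟨a, b⟩, g, h⟩ hz
    simp only [Finset.mem_sigma, Finset.HasAntidiagonal.mem_antidiagonal, Finset.mem_product,
      Finset.mem_piAntidiag] at hz
    obtain ⟨hab, ⟨hga, hgs⟩, hhb, hht⟩ := hz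
    rw [Finset.mem_piAntidiag]
    constructor
    · have hg0 : ∀ i ∈ t, g i = 0 := fun i hi => by
        by_contra h0
        exact (Finset.disjoint_left.mp hst (hgs i h0)) hi
      have hh0 : ∀ i ∈ s, h i = 0 := fun i hi => by
        by_contra h0
        exact (Finset.disjoint_left.mp hst hi) (hht i h0)
      rw [Finset.sum_union hst]
      simp only [Pi.add_apply]
      rw [Finset.sum_add_distrib, Finset.sum_add_distrib,
        Finset.sum_eq_zero hh0, Finset.sum_eq_zero hg0, add_zero, zero_add, hga, hhb, hab]
    · intro i hi
      simp only [Pi.add_apply] at hi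
      rw [Finset.mem_union]
      by_contra hmem
      push_neg at hmem
      have h1 : g i = 0 := by
        by_contra h0; exact hmem.1 (hgs i h0)
      have h2 : h i = 0 := by
        by_contra h0; exact hmem.2 (hht i h0)
      rw [h1, h2] at hi
      exact hi rfl
  · intro k hk
    rw [Finset.mem_piAntidiag] at hk
    funext j
    simp only [Pi.add_apply]
    by_cases hjs : j ∈ s
    · have hjt : j ∉ t := Finset.disjoint_left.mp hst hjs
      rw [if_pos hjs, if_neg hjt, add_zero]
    · by_cases hjt : j ∈ t
      · rw [if_neg hjs, if_pos hjt, zero_add]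
      · rw [if_neg hjs, if_neg hjt, add_zero]
        by_contra h0
        rcases Finset.mem_union.mp (hk.2 j (Ne.symm h0)) with h | h
        · exact hjs h
        · exact hjt h
  · rintro ⟨⟨a, b⟩, g, h⟩ hz
    simp only [Finset.mem_sigma, Finset.HasAntidiagonal.mem_antidiagonal, Finset.mem_product,
      Finset.mem_piAntidiag] at hz
    obtain ⟨hab, ⟨hga, hgs⟩, hhb, hht⟩ := hz
    have hg0 : ∀ i, i ∉ s → g i = 0 := fun i hi => by
      by_contra h0; exact hi (hgs i h0)
    have hh0 : ∀ i, i ∉ t → h i = 0 := fun i hi => by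
      by_contra h0; exact hi (hht i h0)
    have e1 : (∑ i ∈ s, (g + h) i) = a := by
      simp only [Pi.add_apply]
      rw [Finset.sum_add_distrib,
        Finset.sum_eq_zero (fun i hi => hh0 i (Finset.disjoint_left.mp hst hi)), add_zero, hga]
    have e2 : (∑ i ∈ t, (g + h) i) = b := by
      simp only [Pi.add_apply]
      rw [Finset.sum_add_distrib,
        Finset.sum_eq_zero (fun i hi => hg0 i (Finset.disjoint_right.mp hst hi)), zero_add, hhb]
    have e3 : (fun j => if j ∈ s then (g + h) j else 0) = g := by
      funext j
      by_cases hjs : j ∈ s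
      · rw [if_pos hjs]
        simp only [Pi.add_apply]
        rw [hh0 j (Finset.disjoint_left.mp hst hjs), add_zero]
      · rw [if_neg hjs, (hg0 j hjs).symm]
    have e4 : (fun j => if j ∈ t then (g + h) j else 0) = h := by
      funext j
      by_cases hjt : j ∈ t
      · rw [if_pos hjt]
        simp only [Pi.add_apply]
        rw [hg0 j (Finset.disjoint_right.mp hst hjt), zero_add]
      · rw [if_neg hjt, (hh0 j hjt).symm]
    simp only [e1, e2, e3, e4]
  · intro k hk
    rw [Finset.mem_piAntidiag] at hk
    show F k = F _
    congr 1
    funext j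
    simp only [Pi.add_apply]
    by_cases hjs : j ∈ s
    · have hjt : j ∉ t := Finset.disjoint_left.mp hst hjs
      rw [if_pos hjs, if_neg hjt, add_zero]
    · by_cases hjt : j ∈ t
      · rw [if_neg hjs, if_pos hjt, zero_add]
      · rw [if_neg hjs, if_neg hjt, add_zero]
        by_contra h0
        rcases Finset.mem_union.mp (hk.2 j h0) with h | h
        · exact hjs h
        · exact hjt h

lemma marg {ι : Type*} [Fintype ι] [DecidableEq ι] (q : ι → ℝ) (T : Finset ι) (N : ℕ)
    (f : ℕ → ℝ) :
    ∑ k ∈ Finset.piAntidiag (Finset.univ : Finset ι) N,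
      (Nat.multinomial Finset.univ k : ℝ) * (∏ i, q i ^ k i) * f (∑ i ∈ T, k i) =
    ∑ u ∈ Finset.range (N+1),
      (N.choose u : ℝ) * (∑ i ∈ T, q i) ^ u * (∑ i ∈ Tᶜ, q i) ^ (N - u) * f u := by
  have hd : Disjoint T Tᶜ := disjoint_compl_right
  rw [show (Finset.univ : Finset ι) = T ∪ Tᶜ from (Finset.union_compl T).symm,
    sum_piAntidiag_union hd, Finset.Nat.sum_antidiagonal_eq_sum_range_succ_mk]
  refine Finset.sum_congr rfl fun u hu => ?_
  rw [Finset.mem_range] at hu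
  have hu' : u ≤ N := Nat.lt_succ_iff.mp hu
  have key : ∀ g ∈ Finset.piAntidiag T u, ∀ h ∈ Finset.piAntidiag Tᶜ (N - u),
      (Nat.multinomial (T ∪ Tᶜ) (g + h) : ℝ) * (∏ i ∈ T ∪ Tᶜ, q i ^ (g + h) i) *
        f (∑ i ∈ T, (g + h) i) =
      ((N.choose u : ℝ) * f u) *
        (((Nat.multinomial T g : ℝ) * ∏ i ∈ T, q i ^ g i) *
         ((Nat.multinomial Tᶜ h : ℝ) * ∏ i ∈ Tᶜ, q i ^ h i)) := by
    intro g hg h hh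
    rw [Finset.mem_piAntidiag] at hg hh
    have hg0 : ∀ i, i ∉ T → g i = 0 := fun i hi => by
      by_contra h0; exact hi (hg.2 i h0)
    have hh0 : ∀ i, i ∉ Tᶜ → h i = 0 := fun i hi => by
      by_contra h0; exact hi (hh.2 i h0)
    have e1 : (∑ i ∈ T, (g + h) i) = u := by
      simp only [Pi.add_apply]
      rw [Finset.sum_add_distrib,
        Finset.sum_eq_zero (fun i hi => hh0 i (Finset.disjoint_left.mp hd hi)), add_zero, hg.1]
    have e2 : (∑ i ∈ Tᶜ, (g + h) i) = N - u := by
      simp only [Pi.add_apply]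
      rw [Finset.sum_add_distrib,
        Finset.sum_eq_zero (fun i hi => hg0 i (Finset.disjoint_right.mp hd hi)), zero_add, hh.1]
    have e3 : Nat.multinomial T (g + h) = Nat.multinomial T g :=
      Nat.multinomial_congr fun i hi => by
        simp only [Pi.add_apply]
        rw [hh0 i (Finset.disjoint_left.mp hd hi), add_zero]
    have e4 : Nat.multinomial Tᶜ (g + h) = Nat.multinomial Tᶜ h :=
      Nat.multinomial_congr fun i hi => by
        simp only [Pi.add_apply]
        rw [hg0 i (Finset.disjoint_right.mp hd hi), zero_add]
    have e5 : (∏ i ∈ T ∪ Tᶜ, q i ^ (g + h) i)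
        = (∏ i ∈ T, q i ^ g i) * ∏ i ∈ Tᶜ, q i ^ h i := by
      rw [Finset.prod_union hd]
      congr 1
      · exact Finset.prod_congr rfl fun i hi => by
          simp only [Pi.add_apply]
          rw [hh0 i (Finset.disjoint_left.mp hd hi), add_zero]
      · exact Finset.prod_congr rfl fun i hi => by
          simp only [Pi.add_apply]
          rw [hg0 i (Finset.disjoint_right.mp hd hi), zero_add]
    rw [multinomial_disjUnion hd, e1, e2, e3, e4, e5]
    rw [Nat.add_sub_cancel' hu']
    push_cast
    ring
  rw [Finset.sum_congr rfl (fun g hg => Finset.sum_congr rfl (fun h hh => key g hg h hh))]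
  simp only [← Finset.mul_sum]
  rw [← Finset.sum_mul]
  rw [← Finset.sum_pow_eq_sum_piAntidiag T q u, ← Finset.sum_pow_eq_sum_piAntidiag Tᶜ q (N - u)]
  ring


lemma sum_suppY (m N' : ℕ) (F : (Fin (m+1) → ℕ) → ℝ) :
    ∑ y ∈ suppY m N', F (fun i => (y i : ℕ)) =
    ∑ k ∈ Finset.piAntidiag (Finset.univ : Finset (Fin (m+1))) N', F k := by
  refine Finset.sum_nbij' (i := fun y => fun i => (y i : ℕ))
    (j := fun k => fun i => (⟨min (k i) N', Nat.lt_succ_of_le (Nat.min_le_right _ _)⟩ : Fin (N'+1)))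
    ?_ ?_ ?_ ?_ ?_
  · intro y hy
    rw [suppY, Finset.mem_filter] at hy
    rw [Finset.mem_piAntidiag]
    exact ⟨hy.2, fun i _ => Finset.mem_univ i⟩
  · intro k hk
    rw [suppY, Finset.mem_filter]
    rw [Finset.mem_piAntidiag] at hk
    have hle : ∀ i, k i ≤ N' := fun i => by
      rw [← hk.1]
      exact Finset.single_le_sum (fun j _ => Nat.zero_le _) (Finset.mem_univ i)
    refine ⟨Finset.mem_univ _, ?_⟩
    show ∑ i, min (k i) N' = N'
    rw [Finset.sum_congr rfl fun i _ => Nat.min_eq_left (hle i)]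
    exact hk.1
  · intro y hy
    funext i
    ext
    simp [Nat.min_eq_left (Nat.lt_succ_iff.mp (y i).isLt)]
  · intro k hk
    rw [Finset.mem_piAntidiag] at hk
    have hle : ∀ i, k i ≤ N' := fun i => by
      rw [← hk.1]
      exact Finset.single_le_sum (fun j _ => Nat.zero_le _) (Finset.mem_univ i)
    funext i
    simp [Nat.min_eq_left (hle i)]
  · intro y hy
    rfl

lemma sum_suppX (m n N : ℕ) (F : (Fin (m+1) × Fin (n+1) → ℕ) → ℝ) :
    ∑ x ∈ suppX m n N, F (fun ij => (x ij.1 ij.2 : ℕ)) =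
    ∑ k ∈ Finset.piAntidiag (Finset.univ : Finset (Fin (m+1) × Fin (n+1))) N, F k := by
  refine Finset.sum_nbij' (i := fun x => fun ij => (x ij.1 ij.2 : ℕ))
    (j := fun k => fun i j => (⟨min (k (i, j)) N, Nat.lt_succ_of_le (Nat.min_le_right _ _)⟩ :
      Fin (N+1))) ?_ ?_ ?_ ?_ ?_
  · intro x hx
    rw [suppX, Finset.mem_filter] at hx
    rw [Finset.mem_piAntidiag]
    refine ⟨?_, fun i _ => Finset.mem_univ i⟩
    rw [Fintype.sum_prod_type]
    exact hx.2
  · intro k hk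
    rw [suppX, Finset.mem_filter]
    rw [Finset.mem_piAntidiag] at hk
    have hle : ∀ ij, k ij ≤ N := fun ij => by
      rw [← hk.1]
      exact Finset.single_le_sum (fun j _ => Nat.zero_le _) (Finset.mem_univ ij)
    refine ⟨Finset.mem_univ _, ?_⟩
    show ∑ i, ∑ j, min (k (i, j)) N = N
    rw [Finset.sum_congr rfl fun i _ => Finset.sum_congr rfl
      fun j (_ : j ∈ Finset.univ) => Nat.min_eq_left (hle (i, j))]
    rw [← Fintype.sum_prod_type]
    exact hk.1
  · intro x hx
    funext i j
    ext
    simp [Nat.min_eq_left (Nat.lt_succ_iff.mp (x i j).isLt)]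
  · intro k hk
    rw [Finset.mem_piAntidiag] at hk
    have hle : ∀ ij, k ij ≤ N := fun ij => by
      rw [← hk.1]
      exact Finset.single_le_sum (fun j _ => Nat.zero_le _) (Finset.mem_univ ij)
    funext ij
    simp [Nat.min_eq_left (hle ij)]
  · intro x hx
    rfl

lemma mass {ι : Type*} [Fintype ι] [DecidableEq ι] (q : ι → ℝ) (N : ℕ) :
    ∑ k ∈ Finset.piAntidiag (Finset.univ : Finset ι) N,
      (Nat.multinomial Finset.univ k : ℝ) * ∏ i, q i ^ k i = (∑ i, q i) ^ N :=
  (Finset.sum_pow_eq_sum_piAntidiag Finset.univ q N).symm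

/-- The log-ratio statistic appearing in the decomposition. -/
noncomputable def lfun (n : ℕ) (u v : ℕ) : ℝ :=
  Real.log (((u : ℝ) + (1 + n) / 2) / ((u : ℝ) + (v : ℝ) + (1 + n) / 2))

lemma stepA {m n N N' : ℕ} (p : Fin (m+1) → Fin (n+1) → ℝ) (hp : ∀ i j, 0 < p i j)
    (hsum : ∑ i, ∑ j, p i j = 1) (x : Fin (m+1) → Fin (n+1) → Fin (N+1))
    (y : Fin (m+1) → Fin (N'+1)) :
    entropyLoss (phat x y) p - entropyLoss (ptilde x) p =
      Real.log (((N : ℝ) + (N' : ℝ) + (1 + m) * (1 + n) / 2) /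
          ((N : ℝ) + (1 + m) * (1 + n) / 2)) +
      ∑ i, (∑ j, p i j) * lfun n (∑ j', (x i j' : ℕ)) (y i : ℕ) := by
  have point : ∀ (i : Fin (m+1)) (j : Fin (n+1)),
      p i j * Real.log (p i j / phat x y i j) - p i j * Real.log (p i j / ptilde x i j)
      = p i j * (Real.log (((N : ℝ) + (N' : ℝ) + (1 + m) * (1 + n) / 2) /
          ((N : ℝ) + (1 + m) * (1 + n) / 2)) + lfun n (∑ j', (x i j' : ℕ)) (y i : ℕ)) := by
    intro i j
    have h1 : (0:ℝ) < (x i j : ℝ) + 1/2 := by positivity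
    have h2 : (0:ℝ) < (((∑ j', (x i j' : ℕ) : ℕ)) : ℝ) + (1 + n) / 2 := by positivity
    have h3 : (0:ℝ) < (((∑ j', (x i j' : ℕ) : ℕ)) : ℝ) + (y i : ℝ) + (1 + n) / 2 := by
      positivity
    have h4 : (0:ℝ) < (N : ℝ) + (1 + m) * (1 + n) / 2 := by positivity
    have h5 : (0:ℝ) < (N : ℝ) + (N' : ℝ) + (1 + m) * (1 + n) / 2 := by positivity
    rw [ptilde, phat, lfun]
    rw [Real.log_div (hp i j).ne' (by positivity),
      Real.log_div (hp i j).ne' (by positivity),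
      Real.log_mul (by positivity) (by positivity),
      Real.log_div h3.ne' h5.ne', Real.log_div h1.ne' h2.ne',
      Real.log_div h1.ne' h4.ne', Real.log_div h5.ne' h4.ne',
      Real.log_div h2.ne' h3.ne']
    push_cast
    ring
  rw [entropyLoss, entropyLoss, ← Finset.sum_sub_distrib]
  have : ∀ i : Fin (m+1), (∑ j, p i j * Real.log (p i j / phat x y i j))
        - ∑ j, p i j * Real.log (p i j / ptilde x i j)
      = (∑ j, p i j) * (Real.log (((N : ℝ) + (N' : ℝ) + (1 + m) * (1 + n) / 2) /
          ((N : ℝ) + (1 + m) * (1 + n) / 2)) + lfun n (∑ j', (x i j' : ℕ)) (y i : ℕ)) := by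
    intro i
    rw [← Finset.sum_sub_distrib, Finset.sum_congr rfl fun j _ => point i j,
      ← Finset.sum_mul]
  rw [Finset.sum_congr rfl fun i _ => this i]
  simp_rw [mul_add, Finset.sum_add_distrib, ← Finset.sum_mul, hsum, one_mul]

set_option maxHeartbeats 2000000 in
theorem risk_difference_decomposition (m n N N' : ℕ)
    (hm : 1 ≤ m) (hn : 1 ≤ n) (hN : 1 ≤ N) (hN' : 1 ≤ N')
    (p : Fin (m+1) → Fin (n+1) → ℝ) (hp : ∀ i j, 0 < p i j)
    (hsum : ∑ i, ∑ j, p i j = 1) :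
    riskDiff m n p N N' =
      Real.log (((N : ℝ) + (N' : ℝ) + (1 + m) * (1 + n) / 2) /
          ((N : ℝ) + (1 + m) * (1 + n) / 2)) +
        ∑ i, (∑ j, p i j) *
          ∑ x ∈ Finset.range (N+1), ∑ y ∈ Finset.range (N'+1),
            binPMF N (∑ j, p i j) x * binPMF N' (∑ j, p i j) y *
              Real.log (((x : ℝ) + (1 + n) / 2) / ((x : ℝ) + (y : ℝ) + (1 + n) / 2)) := by
  classical
  have hq1 : ∑ i, ∑ j, p i j = 1 := hsum
  have hpf1 : ∑ ij : Fin (m+1) × Fin (n+1), p ij.1 ij.2 = 1 := by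
    rw [Fintype.sum_prod_type]; exact hsum
  have hwX : ∀ x : Fin (m+1) → Fin (n+1) → Fin (N+1), wX p x =
      (Nat.multinomial Finset.univ (fun ij : Fin (m+1) × Fin (n+1) => (x ij.1 ij.2 : ℕ)) : ℝ) *
        ∏ ij : Fin (m+1) × Fin (n+1), p ij.1 ij.2 ^ (x ij.1 ij.2 : ℕ) := by
    intro x
    rw [wX, Fintype.prod_prod_type]
  have hwY : ∀ y : Fin (m+1) → Fin (N'+1), wY p y =
      (Nat.multinomial Finset.univ (fun i => (y i : ℕ)) : ℝ) *
        ∏ i, (∑ j, p i j) ^ (y i : ℕ) := fun y => rfl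
  have hX1 : ∑ x ∈ suppX m n N, wX p x = 1 := by
    calc ∑ x ∈ suppX m n N, wX p x
        = ∑ k ∈ Finset.piAntidiag (Finset.univ : Finset (Fin (m+1) × Fin (n+1))) N,
            (Nat.multinomial Finset.univ k : ℝ) * ∏ ij, p ij.1 ij.2 ^ k ij := by
          rw [← sum_suppX m n N
            (fun k => (Nat.multinomial Finset.univ k : ℝ) * ∏ ij, p ij.1 ij.2 ^ k ij)]
          exact Finset.sum_congr rfl fun x _ => hwX x
      _ = (∑ ij : Fin (m+1) × Fin (n+1), p ij.1 ij.2) ^ N := mass _ N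
      _ = 1 := by rw [hpf1, one_pow]
  have hY1 : ∑ y ∈ suppY m N', wY p y = 1 := by
    calc ∑ y ∈ suppY m N', wY p y
        = ∑ k ∈ Finset.piAntidiag (Finset.univ : Finset (Fin (m+1))) N',
            (Nat.multinomial Finset.univ k : ℝ) * ∏ i, (∑ j, p i j) ^ k i := by
          rw [← sum_suppY m N'
            (fun k => (Nat.multinomial Finset.univ k : ℝ) * ∏ i, (∑ j, p i j) ^ k i)]
          exact Finset.sum_congr rfl fun y _ => hwY y
      _ = (∑ i, ∑ j, p i j) ^ N' := mass _ N'
      _ = 1 := by rw [hq1, one_pow]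
  have hcomplY : ∀ i : Fin (m+1),
      ∑ i' ∈ ({i} : Finset (Fin (m+1)))ᶜ, (∑ j, p i' j) = 1 - ∑ j, p i j := by
    intro i
    have h := Finset.sum_compl_add_sum ({i} : Finset (Fin (m+1))) (fun i' => ∑ j, p i' j)
    rw [Finset.sum_singleton, hq1] at h
    linarith
  have hsingX : ∀ i : Fin (m+1),
      ∑ ij ∈ ({i} ×ˢ (Finset.univ : Finset (Fin (n+1)))), p ij.1 ij.2 = ∑ j, p i j := by
    intro i
    rw [Finset.sum_product, Finset.sum_singleton]
  have hcomplX : ∀ i : Fin (m+1),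
      ∑ ij ∈ (({i} ×ˢ (Finset.univ : Finset (Fin (n+1))))ᶜ :
        Finset (Fin (m+1) × Fin (n+1))), p ij.1 ij.2 = 1 - ∑ j, p i j := by
    intro i
    have h := Finset.sum_compl_add_sum ({i} ×ˢ (Finset.univ : Finset (Fin (n+1))))
      (fun ij : Fin (m+1) × Fin (n+1) => p ij.1 ij.2)
    rw [hsingX i, hpf1] at h
    linarith
  have hYmarg : ∀ (i : Fin (m+1)) (u : ℕ),
      ∑ y ∈ suppY m N', wY p y * lfun n u (y i : ℕ)
      = ∑ v ∈ Finset.range (N'+1), binPMF N' (∑ j, p i j) v * lfun n u v := by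
    intro i u
    calc ∑ y ∈ suppY m N', wY p y * lfun n u (y i : ℕ)
        = ∑ k ∈ Finset.piAntidiag (Finset.univ : Finset (Fin (m+1))) N',
            (Nat.multinomial Finset.univ k : ℝ) * (∏ i', (∑ j, p i' j) ^ k i') *
              lfun n u (∑ i' ∈ ({i} : Finset (Fin (m+1))), k i') := by
          rw [← sum_suppY m N' (fun k => (Nat.multinomial Finset.univ k : ℝ) *
            (∏ i', (∑ j, p i' j) ^ k i') * lfun n u (∑ i' ∈ ({i} : Finset (Fin (m+1))), k i'))]
          refine Finset.sum_congr rfl fun y _ => ?_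
          rw [hwY y]
          simp only [Finset.sum_singleton]
      _ = ∑ v ∈ Finset.range (N'+1), (N'.choose v : ℝ) *
            (∑ i' ∈ ({i} : Finset (Fin (m+1))), ∑ j, p i' j) ^ v *
            (∑ i' ∈ ({i} : Finset (Fin (m+1)))ᶜ, ∑ j, p i' j) ^ (N' - v) * lfun n u v :=
          by apply marg
      _ = ∑ v ∈ Finset.range (N'+1), binPMF N' (∑ j, p i j) v * lfun n u v := by
          refine Finset.sum_congr rfl fun v _ => ?_
          rw [Finset.sum_singleton, hcomplY i]
          simp only [binPMF]
  have hXmarg : ∀ (i : Fin (m+1)) (f : ℕ → ℝ),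
      ∑ x ∈ suppX m n N, wX p x * f (∑ j', (x i j' : ℕ))
      = ∑ u ∈ Finset.range (N+1), binPMF N (∑ j, p i j) u * f u := by
    intro i f
    have hT : ∀ k : Fin (m+1) × Fin (n+1) → ℕ,
        (∑ ij ∈ ({i} ×ˢ (Finset.univ : Finset (Fin (n+1)))), k ij) = ∑ j, k (i, j) := by
      intro k
      rw [Finset.sum_product, Finset.sum_singleton]
    calc ∑ x ∈ suppX m n N, wX p x * f (∑ j', (x i j' : ℕ))
        = ∑ k ∈ Finset.piAntidiag (Finset.univ : Finset (Fin (m+1) × Fin (n+1))) N,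
            (Nat.multinomial Finset.univ k : ℝ) * (∏ ij, p ij.1 ij.2 ^ k ij) *
              f (∑ ij ∈ ({i} ×ˢ (Finset.univ : Finset (Fin (n+1)))), k ij) := by
          rw [← sum_suppX m n N (fun k => (Nat.multinomial Finset.univ k : ℝ) *
            (∏ ij, p ij.1 ij.2 ^ k ij) *
            f (∑ ij ∈ ({i} ×ˢ (Finset.univ : Finset (Fin (n+1)))), k ij))]
          refine Finset.sum_congr rfl fun x _ => ?_
          rw [hwX x]
          simp only [hT]
      _ = ∑ u ∈ Finset.range (N+1), (N.choose u : ℝ) *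
            (∑ ij ∈ {i} ×ˢ (Finset.univ : Finset (Fin (n+1))), p ij.1 ij.2) ^ u *
            (∑ ij ∈ ({i} ×ˢ (Finset.univ : Finset (Fin (n+1))))ᶜ, p ij.1 ij.2) ^ (N - u) * f u :=
          by apply marg
      _ = ∑ u ∈ Finset.range (N+1), binPMF N (∑ j, p i j) u * f u := by
          refine Finset.sum_congr rfl fun u _ => ?_
          rw [hsingX i, hcomplX i]
          simp only [binPMF]
  have h0 : riskDiff m n p N N' = ∑ x ∈ suppX m n N, ∑ y ∈ suppY m N',
      wX p x * wY p y *
        (Real.log (((N : ℝ) + (N' : ℝ) + (1 + m) * (1 + n) / 2) /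
            ((N : ℝ) + (1 + m) * (1 + n) / 2)) +
          ∑ i, (∑ j, p i j) * lfun n (∑ j', (x i j' : ℕ)) (y i : ℕ)) := by
    rw [riskDiff]
    exact Finset.sum_congr rfl fun x _ => Finset.sum_congr rfl fun y _ => by
      rw [stepA p hp hsum x y]
  rw [h0]
  rw [Finset.sum_congr rfl (fun x (_ : x ∈ suppX m n N) => Finset.sum_congr rfl
    (fun y (_ : y ∈ suppY m N') => mul_add (wX p x * wY p y) _ _))]
  rw [Finset.sum_congr rfl (fun x (_ : x ∈ suppX m n N) => Finset.sum_add_distrib),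
    Finset.sum_add_distrib]
  congr 1
  · calc ∑ x ∈ suppX m n N, ∑ y ∈ suppY m N', wX p x * wY p y *
          Real.log (((N : ℝ) + (N' : ℝ) + (1 + m) * (1 + n) / 2) /
            ((N : ℝ) + (1 + m) * (1 + n) / 2))
        = ∑ x ∈ suppX m n N, wX p x * ((∑ y ∈ suppY m N', wY p y) *
            Real.log (((N : ℝ) + (N' : ℝ) + (1 + m) * (1 + n) / 2) /
              ((N : ℝ) + (1 + m) * (1 + n) / 2))) := by
          refine Finset.sum_congr rfl fun x _ => ?_
          rw [Finset.sum_mul, Finset.mul_sum]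
          exact Finset.sum_congr rfl fun y _ => by ring
      _ = _ := by rw [hY1, one_mul, ← Finset.sum_mul, hX1, one_mul]
  · have inner : ∀ i : Fin (m+1), ∑ x ∈ suppX m n N, ∑ y ∈ suppY m N',
        wX p x * wY p y * ((∑ j, p i j) * lfun n (∑ j', (x i j' : ℕ)) (y i : ℕ))
        = (∑ j, p i j) * ∑ x ∈ suppX m n N, wX p x *
            ∑ y ∈ suppY m N', wY p y * lfun n (∑ j', (x i j' : ℕ)) (y i : ℕ) := by
      intro i
      rw [Finset.mul_sum]
      refine Finset.sum_congr rfl fun x _ => ?_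
      conv_rhs => rw [Finset.mul_sum, Finset.mul_sum]
      exact Finset.sum_congr rfl fun y _ => by ring
    calc ∑ x ∈ suppX m n N, ∑ y ∈ suppY m N', wX p x * wY p y *
          ∑ i, (∑ j, p i j) * lfun n (∑ j', (x i j' : ℕ)) (y i : ℕ)
        = ∑ i, ∑ x ∈ suppX m n N, ∑ y ∈ suppY m N',
            wX p x * wY p y * ((∑ j, p i j) * lfun n (∑ j', (x i j' : ℕ)) (y i : ℕ)) := by
          simp_rw [Finset.mul_sum]
          rw [Finset.sum_congr rfl fun x (_ : x ∈ suppX m n N) => Finset.sum_comm,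
            Finset.sum_comm]
      _ = ∑ i, (∑ j, p i j) * ∑ x ∈ suppX m n N, wX p x *
            ∑ y ∈ suppY m N', wY p y * lfun n (∑ j', (x i j' : ℕ)) (y i : ℕ) :=
          Finset.sum_congr rfl fun i _ => inner i
      _ = _ := by
          refine Finset.sum_congr rfl fun i _ => ?_
          congr 1
          rw [Finset.sum_congr rfl fun x (_ : x ∈ suppX m n N) => by
            rw [hYmarg i (∑ j', (x i j' : ℕ))]]
          rw [hXmarg i (fun u => ∑ v ∈ Finset.range (N'+1),
            binPMF N' (∑ j, p i j) v * lfun n u v)]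
          refine Finset.sum_congr rfl fun u _ => ?_
          rw [Finset.mul_sum]
          refine Finset.sum_congr rfl fun v _ => ?_
          rw [lfun]
          ring
end

section
/- Let m, n, N, N' be positive integers and let p = (p_{i,j})_{0≤i≤m,0≤j≤n} be positive reals summing to 1. Then the risk difference telescopes over the aggregated sample size: Δ_p(N, N') = Σ_{ν=1}^{N'} Δ_p(N + ν − 1, 1). -/
open Finset

section Aux
variable {ι : Type*} [Fintype ι] [DecidableEq ι]

/-- Support: functions with total sum `K`. -/
def SS (ι : Type*) [Fintype ι] [DecidableEq ι] (K : ℕ) : Finset (ι → ℕ) :=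
  Finset.piAntidiag Finset.univ K

lemma mem_SS {K : ℕ} {f : ι → ℕ} : f ∈ SS ι K ↔ ∑ i, f i = K := by
  simp [SS, Finset.mem_piAntidiag]

/-- Multinomial weight. -/
noncomputable def WW (q : ι → ℝ) (f : ι → ℕ) : ℝ :=
  (Nat.multinomial Finset.univ f : ℝ) * ∏ i, q i ^ f i

/-- Increment `f` at `i0`. -/
def bump (f : ι → ℕ) (i0 : ι) : ι → ℕ := fun i => f i + if i = i0 then 1 else 0

lemma sum_bump (f : ι → ℕ) (i0 : ι) : ∑ i, bump f i0 i = (∑ i, f i) + 1 := by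
  simp [bump, Finset.sum_add_distrib]

lemma WW_norm (q : ι → ℝ) (hq : ∑ i, q i = 1) (K : ℕ) : ∑ f ∈ SS ι K, WW q f = 1 := by
  have := Finset.sum_pow_eq_sum_piAntidiag (univ : Finset ι) q K
  rw [hq, one_pow] at this
  simpa [WW, SS] using this.symm

lemma WW_bump (q : ι → ℝ) {K : ℕ} {f : ι → ℕ} (hf : ∑ i, f i = K) (i0 : ι) :
    ((f i0 : ℝ) + 1) * WW q (bump f i0) = ((K : ℝ) + 1) * (q i0 * WW q f) := by
  have hmul : (f i0 + 1) * Nat.multinomial Finset.univ (bump f i0)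
      = (K + 1) * Nat.multinomial Finset.univ f := by
    have key : ∀ g : ι → ℕ, ∏ i, (g i).factorial
        = (g i0).factorial * ∏ i ∈ Finset.univ.erase i0, (g i).factorial := by
      intro g
      rw [← Finset.mul_prod_erase Finset.univ _ (Finset.mem_univ i0)]
    have hprodpos : 0 < ∏ i, (f i).factorial :=
      Finset.prod_pos fun i _ => Nat.factorial_pos _
    apply Nat.eq_of_mul_eq_mul_left hprodpos
    calc (∏ i, (f i).factorial) * ((f i0 + 1) * Nat.multinomial Finset.univ (bump f i0))
        = (∏ i, (bump f i0 i).factorial) * Nat.multinomial Finset.univ (bump f i0) := by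
          rw [key (bump f i0), key f]
          have h1 : bump f i0 i0 = f i0 + 1 := by simp [bump]
          have h2 : ∀ i ∈ Finset.univ.erase i0, (bump f i0 i).factorial = (f i).factorial := by
            intro i hi
            simp [bump, Finset.ne_of_mem_erase hi]
          rw [h1, Finset.prod_congr rfl h2, Nat.factorial_succ]
          ring
      _ = (∑ i, bump f i0 i).factorial := Nat.multinomial_spec _ _
      _ = (K + 1).factorial := by rw [sum_bump, hf]
      _ = (∏ i, (f i).factorial) * ((K + 1) * Nat.multinomial Finset.univ f) := by
          rw [Nat.factorial_succ, ← hf, ← Nat.multinomial_spec Finset.univ f, hf]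
          ring
  have hpow : ∏ i, q i ^ bump f i0 i = q i0 * ∏ i, q i ^ f i := by
    have : ∀ i, q i ^ bump f i0 i = q i ^ f i * (if i = i0 then q i else 1) := by
      intro i
      by_cases h : i = i0 <;> simp [bump, h, pow_succ]
    rw [Finset.prod_congr rfl fun i _ => this i, Finset.prod_mul_distrib,
      Finset.prod_ite_eq' Finset.univ i0 q]
    simp [mul_comm]
  unfold WW
  calc ((f i0 : ℝ) + 1) * ((Nat.multinomial Finset.univ (bump f i0) : ℝ) * ∏ i, q i ^ bump f i0 i)
      = (((f i0 + 1) * Nat.multinomial Finset.univ (bump f i0) : ℕ) : ℝ) * ∏ i, q i ^ bump f i0 i := by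
        push_cast; ring
    _ = (((K + 1) * Nat.multinomial Finset.univ f : ℕ) : ℝ) * (q i0 * ∏ i, q i ^ f i) := by
        rw [hmul, hpow]
    _ = ((K : ℝ) + 1) * (q i0 * ((Nat.multinomial Finset.univ f : ℝ) * ∏ i, q i ^ f i)) := by
        push_cast; ring


def unbump (g : ι → ℕ) (i0 : ι) : ι → ℕ := fun i => g i - if i = i0 then 1 else 0

lemma peel_aux (q : ι → ℝ) (K : ℕ) (F : (ι → ℕ) → ℝ) (i0 : ι) :
    ∑ f ∈ SS ι K, q i0 * (WW q f * F (bump f i0))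
      = ∑ g ∈ (SS ι (K+1)).filter (fun g => g i0 ≠ 0),
          ((g i0 : ℝ) / ((K : ℝ) + 1)) * (WW q g * F g) := by
  refine Finset.sum_nbij' (fun f => bump f i0) (fun g => unbump g i0) ?_ ?_ ?_ ?_ ?_
  · intro f hf
    rw [mem_SS] at hf
    refine Finset.mem_filter.mpr ⟨mem_SS.mpr ?_, ?_⟩
    · rw [sum_bump, hf]
    · simp [bump]
  · intro g hg
    rw [Finset.mem_filter, mem_SS] at hg
    rw [mem_SS]
    have hb : bump (unbump g i0) i0 = g := by
      funext i
      by_cases h : i = i0 <;> simp [bump, unbump, h]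
      omega
    have := sum_bump (unbump g i0) i0
    rw [hb, hg.1] at this
    show ∑ i, unbump g i0 i = K
    omega
  · intro f hf
    funext i
    by_cases h : i = i0 <;> simp [bump, unbump, h]
  · intro g hg
    rw [Finset.mem_filter, mem_SS] at hg
    funext i
    by_cases h : i = i0 <;> simp [bump, unbump, h]
    omega
  · intro f hf
    rw [mem_SS] at hf
    have hb : bump f i0 i0 = f i0 + 1 := by simp [bump]
    show q i0 * (WW q f * F (bump f i0))
      = ((bump f i0 i0 : ℝ)) / ((K : ℝ) + 1) * (WW q (bump f i0) * F (bump f i0))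
    rw [hb]
    have hW := WW_bump q hf i0
    have hK : ((K : ℝ) + 1) ≠ 0 := by positivity
    rw [div_mul_eq_mul_div, eq_div_iff hK]
    push_cast
    linear_combination (-(F (bump f i0))) * hW

lemma peel (q : ι → ℝ) (K : ℕ) (F : (ι → ℕ) → ℝ) :
    ∑ f ∈ SS ι (K+1), WW q f * F f
      = ∑ i0, q i0 * ∑ f ∈ SS ι K, WW q f * F (bump f i0) := by
  have step1 : ∀ g ∈ SS ι (K+1), WW q g * F g
      = ∑ i0, ((g i0 : ℝ) / ((K : ℝ) + 1)) * (WW q g * F g) := by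
    intro g hg
    rw [mem_SS] at hg
    rw [← Finset.sum_mul, ← Finset.sum_div]
    rw [show ∑ i, (g i : ℝ) = ((K : ℝ) + 1) by exact_mod_cast congrArg (Nat.cast (R := ℝ)) hg]
    rw [div_self (by positivity), one_mul]
  rw [Finset.sum_congr rfl step1, Finset.sum_comm]
  refine Finset.sum_congr rfl fun i0 _ => ?_
  rw [Finset.mul_sum, peel_aux]
  rw [Finset.sum_filter_of_ne]
  intro g hg h
  simp only [ne_eq]
  intro h0
  apply h
  rw [h0]
  simp


lemma SS_zero_sum (F : (ι → ℕ) → ℝ) (q : ι → ℝ) :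
    ∑ f ∈ SS ι 0, WW q f * F f = F (fun _ => 0) := by
  have h : SS ι 0 = {fun _ => 0} := by
    ext f
    simp [mem_SS, Finset.sum_eq_zero_iff, funext_iff]
  rw [h, Finset.sum_singleton]
  have : WW q (fun _ => 0) = 1 := by
    simp [WW, Nat.multinomial]
  rw [this, one_mul]

end Aux

section Two
variable {ι κ : Type*} [Fintype ι] [DecidableEq ι] [Fintype κ] [DecidableEq κ]

lemma rows_bump (g : ι × κ → ℕ) (k0 : ι × κ) (i : ι) :
    ∑ j, bump g k0 (i, j) = bump (fun i' => ∑ j, g (i', j)) k0.1 i := by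
  simp only [bump, Finset.sum_add_distrib]
  congr 1
  by_cases h : i = k0.1
  · subst h
    simp [Prod.ext_iff, ite_and]
  · simp [Prod.ext_iff, h]

lemma conv_lemma (Q : ι × κ → ℝ) (M K : ℕ) (G : (ι → ℕ) → ℝ) :
    ∑ g ∈ SS (ι × κ) M, ∑ f ∈ SS ι K,
        WW Q g * WW (fun i => ∑ j, Q (i, j)) f * G (fun i => (∑ j, g (i, j)) + f i)
      = ∑ g ∈ SS (ι × κ) (M + K), WW Q g * G (fun i => ∑ j, g (i, j)) := by
  induction K generalizing G with
  | zero =>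
      simp only [Nat.add_zero]
      refine Finset.sum_congr rfl fun g hg => ?_
      have : ∀ f0 : (ι → ℕ) → ℝ, ∑ f ∈ SS ι 0, WW (fun i => ∑ j, Q (i, j)) f * f0 f
          = f0 (fun _ => 0) := fun f0 => SS_zero_sum f0 _
      calc ∑ f ∈ SS ι 0, WW Q g * WW (fun i => ∑ j, Q (i, j)) f * G (fun i => (∑ j, g (i, j)) + f i)
          = WW Q g * ∑ f ∈ SS ι 0, WW (fun i => ∑ j, Q (i, j)) f
              * G (fun i => (∑ j, g (i, j)) + f i) := by
            rw [Finset.mul_sum]; exact Finset.sum_congr rfl fun f _ => by ring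
        _ = WW Q g * G (fun i => (∑ j, g (i, j)) + (fun _ : ι => 0) i) := by
            rw [this (fun f => G (fun i => (∑ j, g (i, j)) + f i))]
        _ = WW Q g * G (fun i => ∑ j, g (i, j)) := by
            have harg : (fun i => (∑ j, g (i, j)) + (fun _ : ι => 0) i)
                = fun i => ∑ j, g (i, j) := by funext i; simp
            rw [harg]
  | succ K ih =>
      have lhs_eq : ∀ g, ∑ f ∈ SS ι (K+1),
          WW Q g * WW (fun i => ∑ j, Q (i, j)) f * G (fun i => (∑ j, g (i, j)) + f i)
          = ∑ i0, (∑ j, Q (i0, j)) * ∑ f ∈ SS ι K,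
              WW (fun i => ∑ j, Q (i, j)) f
                * (WW Q g * G (bump (fun i => (∑ j, g (i, j)) + f i) i0)) := by
        intro g
        have := peel (fun i => ∑ j, Q (i, j)) K
          (fun f => WW Q g * G (fun i => (∑ j, g (i, j)) + f i))
        calc ∑ f ∈ SS ι (K+1),
            WW Q g * WW (fun i => ∑ j, Q (i, j)) f * G (fun i => (∑ j, g (i, j)) + f i)
            = ∑ f ∈ SS ι (K+1), WW (fun i => ∑ j, Q (i, j)) f
                * (WW Q g * G (fun i => (∑ j, g (i, j)) + f i)) :=
              Finset.sum_congr rfl fun f _ => by ring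
          _ = ∑ i0, (∑ j, Q (i0, j)) * ∑ f ∈ SS ι K, WW (fun i => ∑ j, Q (i, j)) f
                * (WW Q g * G (fun i => (∑ j, g (i, j)) + bump f i0 i)) := this
          _ = _ := by
              refine Finset.sum_congr rfl fun i0 _ => ?_
              congr 1
              refine Finset.sum_congr rfl fun f _ => ?_
              have harg : (fun i => (∑ j, g (i, j)) + bump f i0 i)
                  = bump (fun i => (∑ j, g (i, j)) + f i) i0 := by
                funext i; simp only [bump]; ring
              rw [harg]
      rw [Finset.sum_congr rfl fun g _ => lhs_eq g, Finset.sum_comm]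
      have swap_eq : ∀ i0 : ι, ∑ g ∈ SS (ι × κ) M, (∑ j, Q (i0, j)) * ∑ f ∈ SS ι K,
            WW (fun i => ∑ j, Q (i, j)) f
              * (WW Q g * G (bump (fun i => (∑ j, g (i, j)) + f i) i0))
          = (∑ j, Q (i0, j)) * ∑ g ∈ SS (ι × κ) (M + K),
              WW Q g * G (bump (fun i => ∑ j, g (i, j)) i0) := by
        intro i0
        rw [← Finset.mul_sum]
        congr 1
        have := ih (fun s => G (bump s i0))
        calc ∑ g ∈ SS (ι × κ) M, ∑ f ∈ SS ι K, WW (fun i => ∑ j, Q (i, j)) f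
              * (WW Q g * G (bump (fun i => (∑ j, g (i, j)) + f i) i0))
            = ∑ g ∈ SS (ι × κ) M, ∑ f ∈ SS ι K, WW Q g * WW (fun i => ∑ j, Q (i, j)) f
              * G (bump (fun i => (∑ j, g (i, j)) + f i) i0) := by
              refine Finset.sum_congr rfl fun g _ => Finset.sum_congr rfl fun f _ => by ring
          _ = ∑ g ∈ SS (ι × κ) (M + K), WW Q g * G (bump (fun i => ∑ j, g (i, j)) i0) := this
      rw [Finset.sum_congr rfl fun i0 _ => swap_eq i0]
      have rhs_eq := peel Q (M + K) (fun g => G (fun i => ∑ j, g (i, j)))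
      rw [show M + (K + 1) = (M + K) + 1 by ring, rhs_eq, Fintype.sum_prod_type]
      refine Finset.sum_congr rfl fun i0 _ => ?_
      rw [Finset.sum_mul]
      refine Finset.sum_congr rfl fun j0 _ => ?_
      congr 1
      refine Finset.sum_congr rfl fun g _ => ?_
      have harg2 : (fun i => ∑ j, bump g (i0, j0) (i, j))
          = bump (fun i => ∑ j, g (i, j)) i0 := by
        funext i
        exact rows_bump g (i0, j0) i
      rw [harg2]

end Two


section Bridge
variable {m n : ℕ}

lemma bridgeY (N' : ℕ) (p : Fin (m+1) → Fin (n+1) → ℝ) (F : (Fin (m+1) → ℕ) → ℝ) :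
    ∑ y ∈ suppY m N', wY (n := n) p y * F (fun i => (y i : ℕ))
      = ∑ f ∈ SS (Fin (m+1)) N', WW (fun i => ∑ j, p i j) f * F f := by
  refine Finset.sum_nbij' (fun y => fun i => (y i : ℕ))
    (fun f => fun i => (⟨min (f i) N', by omega⟩ : Fin (N'+1))) ?_ ?_ ?_ ?_ ?_
  · intro y hy
    rw [mem_SS]
    exact (Finset.mem_filter.mp hy).2
  · intro f hf
    rw [mem_SS] at hf
    refine Finset.mem_filter.mpr ⟨Finset.mem_univ _, ?_⟩
    have hle : ∀ i, f i ≤ N' := fun i =>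
      hf ▸ Finset.single_le_sum (fun i _ => Nat.zero_le (f i)) (Finset.mem_univ i)
    calc ∑ i, ((⟨min (f i) N', by omega⟩ : Fin (N'+1)) : ℕ) = ∑ i, f i := by
          refine Finset.sum_congr rfl fun i _ => ?_
          simp [Nat.min_eq_left (hle i)]
      _ = N' := hf
  · intro y hy
    funext i
    ext
    simp [Nat.min_eq_left (Nat.lt_succ_iff.mp (y i).isLt)]
  · intro f hf
    rw [mem_SS] at hf
    have hle : ∀ i, f i ≤ N' := fun i =>
      hf ▸ Finset.single_le_sum (fun i _ => Nat.zero_le (f i)) (Finset.mem_univ i)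
    funext i
    simp [Nat.min_eq_left (hle i)]
  · intro y hy
    rfl

lemma bridgeX (N : ℕ) (p : Fin (m+1) → Fin (n+1) → ℝ)
    (F : ((Fin (m+1) × Fin (n+1)) → ℕ) → ℝ) :
    ∑ x ∈ suppX m n N, wX p x * F (fun k => (x k.1 k.2 : ℕ))
      = ∑ g ∈ SS (Fin (m+1) × Fin (n+1)) N, WW (fun k => p k.1 k.2) g * F g := by
  refine Finset.sum_nbij' (fun x => fun k => (x k.1 k.2 : ℕ))
    (fun g => fun i j => (⟨min (g (i, j)) N, by omega⟩ : Fin (N+1))) ?_ ?_ ?_ ?_ ?_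
  · intro x hx
    rw [mem_SS, Fintype.sum_prod_type]
    exact (Finset.mem_filter.mp hx).2
  · intro g hg
    rw [mem_SS] at hg
    refine Finset.mem_filter.mpr ⟨Finset.mem_univ _, ?_⟩
    have hle : ∀ k, g k ≤ N := fun k =>
      hg ▸ Finset.single_le_sum (fun k _ => Nat.zero_le (g k)) (Finset.mem_univ k)
    calc ∑ i, ∑ j, (((⟨min (g (i, j)) N, by omega⟩ : Fin (N+1))) : ℕ)
        = ∑ i, ∑ j, g (i, j) := by
          refine Finset.sum_congr rfl fun i _ => Finset.sum_congr rfl fun j _ => ?_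
          simp [Nat.min_eq_left (hle (i, j))]
      _ = N := by rw [← Fintype.sum_prod_type]; exact hg
  · intro x hx
    funext i j
    ext
    simp [Nat.min_eq_left (Nat.lt_succ_iff.mp (x i j).isLt)]
  · intro g hg
    rw [mem_SS] at hg
    have hle : ∀ k, g k ≤ N := fun k =>
      hg ▸ Finset.single_le_sum (fun k _ => Nat.zero_le (g k)) (Finset.mem_univ k)
    funext k
    simp [Nat.min_eq_left (hle k)]
  · intro x hx
    unfold wX WW
    rw [Fintype.prod_prod_type]

end Bridge

noncomputable def Hf (m n M t : ℕ) : ℝ :=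
  Real.log ((t : ℝ) + (1 + n) / 2) - Real.log ((M : ℝ) + (1 + m) * (1 + n) / 2)

lemma P1 {m n N N' : ℕ} (p : Fin (m+1) → Fin (n+1) → ℝ) (hp : ∀ i j, 0 < p i j)
    (x : Fin (m+1) → Fin (n+1) → Fin (N+1)) (y : Fin (m+1) → Fin (N'+1)) :
    entropyLoss (phat x y) p - entropyLoss (ptilde x) p
      = ∑ i, (∑ j, p i j) *
          (Hf m n N (∑ j, (x i j : ℕ)) - Hf m n (N+N') ((∑ j, (x i j : ℕ)) + (y i : ℕ))) := by
  unfold entropyLoss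
  rw [← Finset.sum_sub_distrib]
  refine Finset.sum_congr rfl fun i _ => ?_
  rw [← Finset.sum_sub_distrib, Finset.sum_mul]
  refine Finset.sum_congr rfl fun j _ => ?_
  have hpij := hp i j
  have ha : (0:ℝ) < (x i j : ℝ) + 1/2 := by positivity
  have hb : (0:ℝ) < (((∑ j', (x i j' : ℕ)) : ℕ) : ℝ) + (1 + (n:ℝ))/2 := by positivity
  have hu : (0:ℝ) < (((∑ j', (x i j' : ℕ)) : ℕ) : ℝ) + (y i : ℝ) + (1 + (n:ℝ))/2 := by
    positivity
  have hDN : (0:ℝ) < (N:ℝ) + (1 + (m:ℝ)) * (1 + (n:ℝ))/2 := by positivity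
  have hDM : (0:ℝ) < (N:ℝ) + (N':ℝ) + (1 + (m:ℝ)) * (1 + (n:ℝ))/2 := by positivity
  have hptilde : ptilde x i j
      = ((x i j : ℝ) + 1/2) / ((N:ℝ) + (1 + (m:ℝ)) * (1 + (n:ℝ))/2) := rfl
  have hphat : phat x y i j
      = (((((∑ j', (x i j' : ℕ)) : ℕ) : ℝ) + (y i : ℝ) + (1 + (n:ℝ)) / 2) /
          ((N : ℝ) + (N' : ℝ) + (1 + (m:ℝ)) * (1 + (n:ℝ)) / 2)) *
        (((x i j : ℝ) + 1/2) / ((((∑ j', (x i j' : ℕ)) : ℕ) : ℝ) + (1 + (n:ℝ)) / 2)) := rfl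
  rw [hphat, hptilde, Real.log_div hpij.ne' (by positivity),
      Real.log_div hpij.ne' (by positivity),
      Real.log_mul (by positivity) (by positivity),
      Real.log_div hu.ne' hDM.ne', Real.log_div ha.ne' hb.ne',
      Real.log_div ha.ne' hDN.ne']
  unfold Hf
  push_cast
  ring

noncomputable def psi (m n : ℕ) (p : Fin (m+1) → Fin (n+1) → ℝ) (M : ℕ) : ℝ :=
  ∑ g ∈ SS (Fin (m+1) × Fin (n+1)) M, WW (fun k => p k.1 k.2) g *
    ∑ i, (∑ j, p i j) * Hf m n M (∑ j, g (i, j))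

lemma main_eq (m n N N' : ℕ) (p : Fin (m+1) → Fin (n+1) → ℝ) (hp : ∀ i j, 0 < p i j)
    (hsum : ∑ i, ∑ j, p i j = 1) :
    riskDiff m n p N N' = psi m n p N - psi m n p (N + N') := by
  have hY1 : ∑ y ∈ suppY m N', wY (n := n) p y = 1 := by
    have h0 := bridgeY N' p (fun _ => (1:ℝ))
    simp only [mul_one] at h0
    rw [h0]
    exact WW_norm (fun i => ∑ j, p i j) hsum N'
  unfold riskDiff
  have step : ∀ x : Fin (m+1) → Fin (n+1) → Fin (N+1), ∀ y ∈ suppY m N',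
      wX p x * wY p y * (entropyLoss (phat x y) p - entropyLoss (ptilde x) p)
      = wX p x * wY p y * (∑ i, (∑ j, p i j) * Hf m n N (∑ j, (x i j : ℕ)))
        - wX p x * (wY p y *
            (∑ i, (∑ j, p i j) * Hf m n (N+N') ((∑ j, (x i j : ℕ)) + (y i : ℕ)))) := by
    intro x y _
    rw [P1 p hp x y]
    have hsplit : ∑ i, (∑ j, p i j) *
        (Hf m n N (∑ j, (x i j : ℕ)) - Hf m n (N+N') ((∑ j, (x i j : ℕ)) + (y i : ℕ)))
        = (∑ i, (∑ j, p i j) * Hf m n N (∑ j, (x i j : ℕ)))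
          - ∑ i, (∑ j, p i j) * Hf m n (N+N') ((∑ j, (x i j : ℕ)) + (y i : ℕ)) := by
      rw [← Finset.sum_sub_distrib]
      exact Finset.sum_congr rfl fun i _ => by ring
    rw [hsplit]
    ring
  rw [Finset.sum_congr rfl fun x _ => Finset.sum_congr rfl fun y hy => step x y hy]
  rw [Finset.sum_congr rfl fun x _ => Finset.sum_sub_distrib _ _, Finset.sum_sub_distrib]
  have hT1 : ∑ x ∈ suppX m n N, ∑ y ∈ suppY m N',
      wX p x * wY p y * (∑ i, (∑ j, p i j) * Hf m n N (∑ j, (x i j : ℕ)))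
      = psi m n p N := by
    calc ∑ x ∈ suppX m n N, ∑ y ∈ suppY m N',
        wX p x * wY p y * (∑ i, (∑ j, p i j) * Hf m n N (∑ j, (x i j : ℕ)))
        = ∑ x ∈ suppX m n N,
            wX p x * (∑ i, (∑ j, p i j) * Hf m n N (∑ j, (x i j : ℕ))) := by
          refine Finset.sum_congr rfl fun x _ => ?_
          rw [← Finset.sum_mul, ← Finset.mul_sum, hY1, mul_one]
      _ = psi m n p N := by
          exact bridgeX N p (fun g => ∑ i, (∑ j, p i j) * Hf m n N (∑ j, g (i, j)))
  have hT2 : ∑ x ∈ suppX m n N, ∑ y ∈ suppY m N',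
      wX p x * (wY p y *
        (∑ i, (∑ j, p i j) * Hf m n (N+N') ((∑ j, (x i j : ℕ)) + (y i : ℕ))))
      = psi m n p (N + N') := by
    calc ∑ x ∈ suppX m n N, ∑ y ∈ suppY m N',
        wX p x * (wY p y *
          (∑ i, (∑ j, p i j) * Hf m n (N+N') ((∑ j, (x i j : ℕ)) + (y i : ℕ))))
        = ∑ x ∈ suppX m n N, wX p x * ∑ f ∈ SS (Fin (m+1)) N',
            WW (fun i => ∑ j, p i j) f *
              (∑ i, (∑ j, p i j) * Hf m n (N+N') ((∑ j, (x i j : ℕ)) + f i)) := by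
          refine Finset.sum_congr rfl fun x _ => ?_
          rw [← Finset.mul_sum]
          congr 1
          exact bridgeY N' p
            (fun f => ∑ i, (∑ j, p i j) * Hf m n (N+N') ((∑ j, (x i j : ℕ)) + f i))
      _ = ∑ g ∈ SS (Fin (m+1) × Fin (n+1)) N, WW (fun k => p k.1 k.2) g *
            ∑ f ∈ SS (Fin (m+1)) N', WW (fun i => ∑ j, p i j) f *
              (∑ i, (∑ j, p i j) * Hf m n (N+N') ((∑ j, g (i, j)) + f i)) := by
          exact bridgeX N p (fun g => ∑ f ∈ SS (Fin (m+1)) N',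
            WW (fun i => ∑ j, p i j) f *
              (∑ i, (∑ j, p i j) * Hf m n (N+N') ((∑ j, g (i, j)) + f i)))
      _ = ∑ g ∈ SS (Fin (m+1) × Fin (n+1)) N, ∑ f ∈ SS (Fin (m+1)) N',
            WW (fun k => p k.1 k.2) g * WW (fun i => ∑ j, (fun k : Fin (m+1) × Fin (n+1) => p k.1 k.2) (i, j)) f *
              (∑ i, (∑ j, p i j) * Hf m n (N+N') ((∑ j, g (i, j)) + f i)) := by
          refine Finset.sum_congr rfl fun g _ => ?_
          rw [Finset.mul_sum]
          exact Finset.sum_congr rfl fun f _ => by ring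
      _ = psi m n p (N + N') := by
          exact conv_lemma (fun k : Fin (m+1) × Fin (n+1) => p k.1 k.2) N N'
            (fun s => ∑ i, (∑ j, p i j) * Hf m n (N+N') (s i))
  rw [hT1, hT2]


theorem risk_difference_telescopes (m n N N' : ℕ)
    (hm : 1 ≤ m) (hn : 1 ≤ n) (hN : 1 ≤ N) (hN' : 1 ≤ N')
    (p : Fin (m+1) → Fin (n+1) → ℝ) (hp : ∀ i j, 0 < p i j)
    (hsum : ∑ i, ∑ j, p i j = 1) :
    riskDiff m n p N N' = ∑ ν ∈ Finset.Icc 1 N', riskDiff m n p (N + ν - 1) 1 := by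
  have key : ∀ a b : ℕ, riskDiff m n p a b = psi m n p a - psi m n p (a + b) :=
    fun a b => main_eq m n a b p hp hsum
  have claim : ∀ K : ℕ, ∑ ν ∈ Finset.Icc 1 K, riskDiff m n p (N + ν - 1) 1
      = psi m n p N - psi m n p (N + K) := by
    intro K
    induction K with
    | zero => simp
    | succ K ih =>
        rw [Finset.sum_Icc_succ_top (by omega : 1 ≤ K + 1), ih]
        have h1 : N + (K + 1) - 1 = N + K := by omega
        rw [h1, key (N + K) 1]
        have h2 : N + K + 1 = N + (K + 1) := by omega
        rw [h2]
        ring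
  rw [key N N', claim N']
end

section
/- Let m, n, N be positive integers and let p = (p_{i,j})_{0≤i≤m,0≤j≤n} be positive reals summing to 1, with p_i = Σ_{j=0}^n p_{i,j}. Then Δ_p(N, 1) = log(1 + 1/(N + (1+m)(1+n)/2)) − Σ_{i=0}^m H(p_i), where H(q) = q² · Σ_{x=0}^N C(N,x) q^x (1−q)^{N−x} · (− log(1 − 1/(x + 1 + (1+n)/2))) for q ∈ (0,1). -/
open Finset

section Aux
open scoped Nat

lemma mult_union' {ι : Type*} [DecidableEq ι] {A B : Finset ι} (h : Disjoint A B) (f : ι → ℕ) :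
    Nat.multinomial (A ∪ B) f =
      (∑ i ∈ A, f i + ∑ i ∈ B, f i).choose (∑ i ∈ A, f i) *
        Nat.multinomial A f * Nat.multinomial B f := by
  have hpos : 0 < ∏ i ∈ A ∪ B, (f i)! := Nat.prod_factorial_pos _ _
  refine Nat.eq_of_mul_eq_mul_left hpos ?_
  rw [Nat.multinomial_spec, Finset.sum_union h, Finset.prod_union h]
  have hA := Nat.multinomial_spec A f
  have hB := Nat.multinomial_spec B f
  have : (∏ i ∈ A, (f i)!) * (∏ i ∈ B, (f i)!) *
      ((∑ i ∈ A, f i + ∑ i ∈ B, f i).choose (∑ i ∈ A, f i) *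
        Nat.multinomial A f * Nat.multinomial B f)
      = (∑ i ∈ A, f i + ∑ i ∈ B, f i).choose (∑ i ∈ A, f i) *
        ((∏ i ∈ A, (f i)!) * Nat.multinomial A f) *
        ((∏ i ∈ B, (f i)!) * Nat.multinomial B f) := by ring
  rw [this, hA, hB, Nat.choose_symm_add, Nat.add_choose_mul_factorial_mul_factorial]

lemma key_marginal' {ι : Type*} [Fintype ι] [DecidableEq ι] (A : Finset ι) (p : ι → ℝ)
    (N : ℕ) (g : ℕ → ℝ) :
    ∑ f ∈ Finset.piAntidiag (Finset.univ : Finset ι) N,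
      (Nat.multinomial Finset.univ f : ℝ) * (∏ i, p i ^ f i) * g (∑ i ∈ A, f i)
    = ∑ k ∈ Finset.range (N+1),
      (N.choose k : ℝ) * (∑ i ∈ A, p i) ^ k * (∑ i ∈ Aᶜ, p i) ^ (N - k) * g k := by
  have hmaps : ∀ f ∈ Finset.piAntidiag (Finset.univ : Finset ι) N,
      (∑ i ∈ A, f i) ∈ Finset.range (N+1) := by
    intro f hf
    rw [Finset.mem_piAntidiag] at hf
    rw [Finset.mem_range, Nat.lt_succ_iff, ← hf.1]
    exact Finset.sum_le_sum_of_subset (Finset.subset_univ A)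
  rw [← Finset.sum_fiberwise_of_maps_to hmaps]
  refine Finset.sum_congr rfl fun k hk => ?_
  rw [Finset.mem_range, Nat.lt_succ_iff] at hk
  have step : ∑ f ∈ (Finset.piAntidiag (Finset.univ : Finset ι) N).filter
        (fun f => ∑ i ∈ A, f i = k),
      (Nat.multinomial Finset.univ f : ℝ) * (∏ i, p i ^ f i) * g (∑ i ∈ A, f i)
    = ∑ fp ∈ (Finset.piAntidiag A k) ×ˢ (Finset.piAntidiag Aᶜ (N - k)),
      ((N.choose k : ℝ) * ((Nat.multinomial A fp.1 : ℝ) * ∏ i ∈ A, p i ^ fp.1 i) *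
        ((Nat.multinomial Aᶜ fp.2 : ℝ) * ∏ i ∈ Aᶜ, p i ^ fp.2 i)) * g k := by
    refine Finset.sum_nbij'
      (i := fun f => (fun i => if i ∈ A then f i else 0, fun i => if i ∈ A then 0 else f i))
      (j := fun fp => fp.1 + fp.2) ?_ ?_ ?_ ?_ ?_
    · intro f hf
      simp only [Finset.mem_filter, Finset.mem_piAntidiag] at hf
      obtain ⟨⟨hsum, -⟩, hA⟩ := hf
      simp only [Finset.mem_product, Finset.mem_piAntidiag]
      refine ⟨⟨?_, ?_⟩, ?_, ?_⟩
      · rw [← hA]; exact Finset.sum_congr rfl fun i hi => if_pos hi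
      · intro i hi; by_contra hiA; exact hi (if_neg hiA)
      · have h2 : ∑ i ∈ Aᶜ, (if i ∈ A then 0 else f i) = ∑ i ∈ Aᶜ, f i :=
          Finset.sum_congr rfl fun i hi => if_neg (Finset.mem_compl.mp hi)
        rw [h2]
        have h3 := Finset.sum_add_sum_compl A f
        have hsum' : ∑ i : ι, f i = N := hsum
        have hA' : ∑ i ∈ A, f i = k := hA
        omega
      · intro i hi
        simp only [Finset.mem_compl]
        intro hiA
        exact hi (if_pos hiA)
    · intro fp hfp
      simp only [Finset.mem_product, Finset.mem_piAntidiag] at hfp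
      obtain ⟨⟨h1, h1s⟩, h2, h2s⟩ := hfp
      simp only [Finset.mem_filter, Finset.mem_piAntidiag]
      have e1 : ∑ i, fp.1 i = k := by
        rw [← h1]
        exact (Finset.sum_subset (Finset.subset_univ A)
          (fun i _ hi => by_contra fun h => hi (h1s i h))).symm
      have e2 : ∑ i, fp.2 i = N - k := by
        rw [← h2]
        exact (Finset.sum_subset (Finset.subset_univ Aᶜ)
          (fun i _ hi => by_contra fun h => hi (h2s i h))).symm
      have eA1 : ∑ i ∈ A, fp.1 i = k := h1
      have eA2 : ∑ i ∈ A, fp.2 i = 0 := by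
        refine Finset.sum_eq_zero fun i hi => ?_
        by_contra h
        exact (Finset.mem_compl.mp (h2s i h)) hi
      refine ⟨⟨?_, fun i _ => Finset.mem_univ i⟩, ?_⟩
      · simp only [Pi.add_apply, Finset.sum_add_distrib, e1, e2]; omega
      · simp only [Pi.add_apply, Finset.sum_add_distrib, eA1, eA2]
        omega
    · intro f hf
      funext i
      by_cases hi : i ∈ A <;> simp [hi]
    · intro fp hfp
      simp only [Finset.mem_product, Finset.mem_piAntidiag] at hfp
      obtain ⟨⟨-, h1s⟩, -, h2s⟩ := hfp
      ext i
      · by_cases hi : i ∈ A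
        · have h0 : fp.2 i = 0 := by
            by_contra h; exact (Finset.mem_compl.mp (h2s i h)) hi
          simp only [Pi.add_apply, if_pos hi]
          omega
        · have h0 : fp.1 i = 0 := by
            by_contra h; exact hi (h1s i h)
          simp only [Pi.add_apply, if_neg hi]
          omega
      · by_cases hi : i ∈ A
        · have h0 : fp.2 i = 0 := by
            by_contra h; exact (Finset.mem_compl.mp (h2s i h)) hi
          simp only [Pi.add_apply, if_pos hi]
          omega
        · have h0 : fp.1 i = 0 := by
            by_contra h; exact hi (h1s i h)
          simp only [Pi.add_apply, if_neg hi]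
          omega
    · intro f hf
      simp only [Finset.mem_filter, Finset.mem_piAntidiag] at hf
      obtain ⟨⟨hsum, -⟩, hA⟩ := hf
      have hAc : ∑ i ∈ Aᶜ, f i = N - k := by
        have h3 := Finset.sum_add_sum_compl A f
        have hsum' : ∑ i : ι, f i = N := hsum
        have hA' : ∑ i ∈ A, f i = k := hA
        omega
      have huniv : (Finset.univ : Finset ι) = A ∪ Aᶜ := (Finset.union_compl A).symm
      have hdisj : Disjoint A Aᶜ := disjoint_compl_right
      have hmult : Nat.multinomial Finset.univ f =
          N.choose k * Nat.multinomial A f * Nat.multinomial Aᶜ f := by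
        rw [huniv, mult_union' hdisj, hA, hAc, Nat.add_sub_cancel' hk]
      have hprod : (∏ i, p i ^ f i) = (∏ i ∈ A, p i ^ f i) * ∏ i ∈ Aᶜ, p i ^ f i := by
        rw [← Finset.prod_union hdisj, ← huniv]
      have hm1 : Nat.multinomial A (fun i => if i ∈ A then f i else 0) =
          Nat.multinomial A f :=
        Nat.multinomial_congr fun i hi => if_pos hi
      have hm2 : Nat.multinomial Aᶜ (fun i => if i ∈ A then 0 else f i) =
          Nat.multinomial Aᶜ f :=
        Nat.multinomial_congr fun i hi => if_neg (Finset.mem_compl.mp hi)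
      have hp1 : (∏ i ∈ A, p i ^ (if i ∈ A then f i else 0)) = ∏ i ∈ A, p i ^ f i :=
        Finset.prod_congr rfl fun i hi => by rw [if_pos hi]
      have hp2 : (∏ i ∈ Aᶜ, p i ^ (if i ∈ A then 0 else f i)) = ∏ i ∈ Aᶜ, p i ^ f i :=
        Finset.prod_congr rfl fun i hi => by rw [if_neg (Finset.mem_compl.mp hi)]
      simp only [hm1, hm2, hp1, hp2, hmult, hprod, hA, Nat.cast_mul]
      ring
  rw [step, Finset.sum_product]
  simp only [← Finset.sum_mul, ← Finset.mul_sum]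
  rw [← Finset.sum_pow_eq_sum_piAntidiag, ← Finset.sum_pow_eq_sum_piAntidiag]

open Fin.NatCast in
lemma suppX_sum_eq {m n N : ℕ} (G : (Fin (m+1) × Fin (n+1) → ℕ) → ℝ) :
    ∑ x ∈ suppX m n N, G (fun k => (x k.1 k.2 : ℕ)) =
    ∑ f ∈ Finset.piAntidiag (Finset.univ : Finset (Fin (m+1) × Fin (n+1))) N, G f := by
  refine Finset.sum_nbij' (i := fun x => fun k => (x k.1 k.2 : ℕ))
    (j := fun f => fun i j => ((f (i, j) : ℕ) : Fin (N+1))) ?_ ?_ ?_ ?_ ?_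
  · intro x hx
    simp only [suppX, Finset.mem_filter, Finset.mem_univ, true_and] at hx
    simp only [Finset.mem_piAntidiag]
    refine ⟨?_, fun k _ => Finset.mem_univ k⟩
    rw [Fintype.sum_prod_type]
    exact hx
  · intro f hf
    simp only [Finset.mem_piAntidiag] at hf
    obtain ⟨hsum, -⟩ := hf
    have hb : ∀ k : Fin (m+1) × Fin (n+1), f k ≤ N := by
      intro k
      rw [← hsum]
      exact Finset.single_le_sum (fun i _ => Nat.zero_le _) (Finset.mem_univ k)
    simp only [suppX, Finset.mem_filter, Finset.mem_univ, true_and]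
    have : ∀ i j, (((f (i, j) : ℕ) : Fin (N+1)) : ℕ) = f (i, j) := fun i j =>
      Fin.val_cast_of_lt (Nat.lt_succ_of_le (hb (i, j)))
    simp only [this]
    rw [← Fintype.sum_prod_type]
    exact hsum
  · intro x hx
    funext i j
    exact Fin.cast_val_eq_self (x i j)
  · intro f hf
    simp only [Finset.mem_piAntidiag] at hf
    obtain ⟨hsum, -⟩ := hf
    have hb : ∀ k : Fin (m+1) × Fin (n+1), f k ≤ N := by
      intro k
      rw [← hsum]
      exact Finset.single_le_sum (fun i _ => Nat.zero_le _) (Finset.mem_univ k)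
    funext k
    simp only
    rw [Fin.val_cast_of_lt (Nat.lt_succ_of_le (hb (k.1, k.2)))]
  · intro x hx
    rfl

lemma marginal' {m n N : ℕ} (p : Fin (m+1) → Fin (n+1) → ℝ)
    (hsum : ∑ i, ∑ j, p i j = 1) (i₀ : Fin (m+1)) (g : ℕ → ℝ) :
    ∑ x ∈ suppX m n N, wX p x * g (∑ j, (x i₀ j : ℕ)) =
    ∑ k ∈ Finset.range (N+1), binPMF N (∑ j, p i₀ j) k * g k := by
  classical
  set A : Finset (Fin (m+1) × Fin (n+1)) := {i₀} ×ˢ Finset.univ with hA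
  have h1 : ∀ x : Fin (m+1) → Fin (n+1) → Fin (N+1),
      wX p x * g (∑ j, (x i₀ j : ℕ)) =
      (Nat.multinomial Finset.univ (fun k : Fin (m+1) × Fin (n+1) => (x k.1 k.2 : ℕ)) : ℝ) *
        (∏ k : Fin (m+1) × Fin (n+1), p k.1 k.2 ^ (x k.1 k.2 : ℕ)) *
        g (∑ k ∈ A, (x k.1 k.2 : ℕ)) := by
    intro x
    rw [wX, Fintype.prod_prod_type]
    congr 2
    rw [hA, Finset.sum_product, Finset.sum_singleton]
  simp only [h1]
  rw [suppX_sum_eq (G := fun f =>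
    (Nat.multinomial Finset.univ f : ℝ) * (∏ k : Fin (m+1) × Fin (n+1), p k.1 k.2 ^ f k) *
      g (∑ k ∈ A, f k))]
  rw [key_marginal' A (fun k => p k.1 k.2) N g]
  have hqA : ∑ k ∈ A, p k.1 k.2 = ∑ j, p i₀ j := by
    rw [hA, Finset.sum_product, Finset.sum_singleton]
  have htot : ∑ k : Fin (m+1) × Fin (n+1), p k.1 k.2 = 1 := by
    rw [Fintype.sum_prod_type]; exact hsum
  have hqAc : ∑ k ∈ Aᶜ, p k.1 k.2 = 1 - ∑ j, p i₀ j := by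
    have := Finset.sum_add_sum_compl A (fun k : Fin (m+1) × Fin (n+1) => p k.1 k.2)
    rw [htot, hqA] at this
    linarith
  rw [hqA, hqAc]
  rfl

lemma binPMF_sum (N : ℕ) (q : ℝ) : ∑ k ∈ Finset.range (N+1), binPMF N q k = 1 := by
  have h := add_pow q (1 - q) N
  simp only [add_sub_cancel, one_pow] at h
  have h2 : ∑ k ∈ Finset.range (N+1), binPMF N q k =
      ∑ k ∈ Finset.range (N+1), q ^ k * (1 - q) ^ (N - k) * (N.choose k : ℝ) := by
    refine Finset.sum_congr rfl fun k hk => ?_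
    rw [binPMF]; ring
  rw [h2, ← h]

def eY (m : ℕ) (i₀ : Fin (m+1)) : Fin (m+1) → Fin (1+1) :=
  fun i => if i = i₀ then 1 else 0

lemma eY_val (m : ℕ) (i₀ i : Fin (m+1)) :
    ((eY m i₀ i : ℕ)) = if i = i₀ then 1 else 0 := by
  rw [eY]; split <;> rfl

lemma suppY_eq_image (m : ℕ) :
    suppY m 1 = Finset.image (eY m) Finset.univ := by
  ext y
  simp only [suppY, Finset.mem_filter, Finset.mem_univ, true_and, Finset.mem_image]
  constructor
  · intro hy
    have hex : ∃ i₀, (y i₀ : ℕ) ≠ 0 := by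
      by_contra h
      push_neg at h
      rw [Finset.sum_eq_zero (fun i _ => h i)] at hy
      exact absurd hy (by norm_num)
    obtain ⟨i₀, hi₀⟩ := hex
    refine ⟨i₀, ?_⟩
    have hsplit : (y i₀ : ℕ) + ∑ i ∈ Finset.univ.erase i₀, (y i : ℕ) = 1 := by
      rw [Finset.add_sum_erase Finset.univ (fun i => (y i : ℕ)) (Finset.mem_univ i₀)]
      exact hy
    have h1 : (y i₀ : ℕ) = 1 ∧ ∑ i ∈ Finset.univ.erase i₀, (y i : ℕ) = 0 := by omega
    funext i
    by_cases hii : i = i₀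
    · subst hii
      rw [eY, if_pos rfl]
      have := h1.1
      exact Fin.ext (by simpa using this.symm)
    · rw [eY, if_neg hii]
      have h0 : (y i : ℕ) = 0 :=
        Finset.sum_eq_zero_iff.mp h1.2 i (Finset.mem_erase.mpr ⟨hii, Finset.mem_univ i⟩)
      exact Fin.ext (by simpa using h0.symm)
  · rintro ⟨i₀, rfl⟩
    simp only [eY_val]
    rw [Finset.sum_ite_eq' Finset.univ i₀ (fun _ => 1)]
    simp

lemma eY_injective (m : ℕ) : Function.Injective (eY m) := by
  intro a b hab
  have := congrFun hab a
  rw [eY, eY, if_pos rfl] at this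
  by_contra hne
  rw [if_neg hne] at this
  exact absurd this (by decide)

lemma wY_eY {m n : ℕ} (p : Fin (m+1) → Fin (n+1) → ℝ) (i₀ : Fin (m+1)) :
    wY p (eY m i₀) = ∑ j, p i₀ j := by
  rw [wY]
  have hm : Nat.multinomial Finset.univ (fun i => (eY m i₀ i : ℕ)) = 1 := by
    rw [Nat.multinomial]
    simp only [eY_val]
    rw [Finset.sum_ite_eq' Finset.univ i₀ (fun _ => 1)]
    have : ∏ i : Fin (m+1), (if i = i₀ then 1 else 0)! = 1 := by
      refine Finset.prod_eq_one fun i _ => ?_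
      split <;> rfl
    rw [this]
    simp
  rw [hm]
  simp only [eY_val]
  have : ∀ i : Fin (m+1), (∑ j, p i j) ^ (if i = i₀ then 1 else 0) =
      if i = i₀ then (∑ j, p i j) else 1 := by
    intro i; split <;> simp
  simp only [this]
  rw [Finset.prod_ite_eq' Finset.univ i₀ (fun i => ∑ j, p i j)]
  simp

lemma suppY_sum {m n : ℕ} (p : Fin (m+1) → Fin (n+1) → ℝ)
    (F : (Fin (m+1) → Fin (1+1)) → ℝ) :
    ∑ y ∈ suppY m 1, wY p y * F y =
    ∑ i₀ : Fin (m+1), (∑ j, p i₀ j) * F (eY m i₀) := by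
  rw [suppY_eq_image, Finset.sum_image (fun a _ b _ h => eY_injective m h)]
  exact Finset.sum_congr rfl fun i₀ _ => by rw [wY_eY]

lemma log_ratio (P v D1 D2 S W a : ℝ) (hP : P ≠ 0) (hv : 0 < v) (hD1 : 0 < D1)
    (hD2 : 0 < D2) (hS : 0 < S + a) (hW : 0 < S + W + a) :
    P * Real.log (P / ((S + W + a) / D2 * (v / (S + a)))) -
      P * Real.log (P / (v / D1)) =
    P * ((Real.log D2 - Real.log D1) + (Real.log (S + a) - Real.log (S + W + a))) := by
  rw [Real.log_div hP (by positivity), Real.log_div hP (by positivity),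
      Real.log_mul (by positivity) (by positivity),
      Real.log_div hW.ne' hD2.ne', Real.log_div hv.ne' hS.ne', Real.log_div hv.ne' hD1.ne']
  ring

end Aux

theorem risk_difference_single_aggregated (m n N : ℕ)
    (hm : 1 ≤ m) (hn : 1 ≤ n) (hN : 1 ≤ N)
    (p : Fin (m+1) → Fin (n+1) → ℝ) (hp : ∀ i j, 0 < p i j)
    (hsum : ∑ i, ∑ j, p i j = 1)
    (H : ℝ → ℝ)
    (hH : ∀ q : ℝ, H q = q ^ 2 * ∑ x ∈ Finset.range (N+1),
      binPMF N q x * (- Real.log (1 - 1 / ((x : ℝ) + 1 + (1 + n) / 2)))) :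
    riskDiff m n p N 1 =
      Real.log (1 + 1 / ((N : ℝ) + (1 + m) * (1 + n) / 2)) - ∑ i, H (∑ j, p i j) := by
  classical
  -- step 1 : pointwise identity for the loss difference
  have hterm : ∀ (x : Fin (m+1) → Fin (n+1) → Fin (N+1)) (y : Fin (m+1) → Fin (1+1)),
      entropyLoss (phat x y) p - entropyLoss (ptilde x) p =
      (Real.log ((N:ℝ) + 1 + (1 + (m:ℝ)) * (1 + (n:ℝ)) / 2) -
        Real.log ((N:ℝ) + (1 + (m:ℝ)) * (1 + (n:ℝ)) / 2)) +
      ∑ i, (∑ j, p i j) *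
        (Real.log ((((∑ j', (x i j' : ℕ)) : ℕ) : ℝ) + (1 + (n:ℝ)) / 2) -
         Real.log ((((∑ j', (x i j' : ℕ)) : ℕ) : ℝ) + ((y i : ℕ) : ℝ) + (1 + (n:ℝ)) / 2)) := by
    intro x y
    simp only [entropyLoss, ← Finset.sum_sub_distrib]
    have hstep : ∀ i, ∑ j, (p i j * Real.log (p i j / phat x y i j) -
        p i j * Real.log (p i j / ptilde x i j)) =
        (∑ j, p i j) *
          ((Real.log ((N:ℝ) + 1 + (1 + (m:ℝ)) * (1 + (n:ℝ)) / 2) -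
            Real.log ((N:ℝ) + (1 + (m:ℝ)) * (1 + (n:ℝ)) / 2)) +
           (Real.log ((((∑ j', (x i j' : ℕ)) : ℕ) : ℝ) + (1 + (n:ℝ)) / 2) -
            Real.log ((((∑ j', (x i j' : ℕ)) : ℕ) : ℝ) + ((y i : ℕ) : ℝ) + (1 + (n:ℝ)) / 2))) := by
      intro i
      rw [Finset.sum_mul]
      refine Finset.sum_congr rfl fun j _ => ?_
      simp only [phat, ptilde, Nat.cast_one]
      exact log_ratio (p i j) ((x i j : ℝ) + 1/2)
        ((N:ℝ) + (1 + (m:ℝ)) * (1 + (n:ℝ)) / 2)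
        ((N:ℝ) + 1 + (1 + (m:ℝ)) * (1 + (n:ℝ)) / 2)
        ((((∑ j', (x i j' : ℕ)) : ℕ) : ℝ)) (((y i : ℕ) : ℝ)) ((1 + (n:ℝ)) / 2)
        (hp i j).ne' (by positivity) (by positivity) (by positivity)
        (by positivity) (by positivity)
    calc ∑ i, ∑ j, (p i j * Real.log (p i j / phat x y i j) -
          p i j * Real.log (p i j / ptilde x i j))
        = ∑ i, (∑ j, p i j) *
          ((Real.log ((N:ℝ) + 1 + (1 + (m:ℝ)) * (1 + (n:ℝ)) / 2) -
            Real.log ((N:ℝ) + (1 + (m:ℝ)) * (1 + (n:ℝ)) / 2)) +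
           (Real.log ((((∑ j', (x i j' : ℕ)) : ℕ) : ℝ) + (1 + (n:ℝ)) / 2) -
            Real.log ((((∑ j', (x i j' : ℕ)) : ℕ) : ℝ) + ((y i : ℕ) : ℝ) + (1 + (n:ℝ)) / 2))) :=
          Finset.sum_congr rfl fun i _ => hstep i
      _ = _ := by
          simp only [mul_add, Finset.sum_add_distrib, ← Finset.sum_mul]
          rw [hsum, one_mul]
  -- step 2 : sum over y
  have hYsum : ∀ x : Fin (m+1) → Fin (n+1) → Fin (N+1),
      ∑ y ∈ suppY m 1, wX p x * wY p y *
        (entropyLoss (phat x y) p - entropyLoss (ptilde x) p)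
      = wX p x *
        ((Real.log ((N:ℝ) + 1 + (1 + (m:ℝ)) * (1 + (n:ℝ)) / 2) -
          Real.log ((N:ℝ) + (1 + (m:ℝ)) * (1 + (n:ℝ)) / 2)) +
         ∑ i, (∑ j, p i j) ^ 2 *
           (Real.log ((((∑ j', (x i j' : ℕ)) : ℕ) : ℝ) + (1 + (n:ℝ)) / 2) -
            Real.log ((((∑ j', (x i j' : ℕ)) : ℕ) : ℝ) + 1 + (1 + (n:ℝ)) / 2))) := by
    intro x
    have e1 : ∀ y : Fin (m+1) → Fin (1+1),
        wX p x * wY p y * (entropyLoss (phat x y) p - entropyLoss (ptilde x) p)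
        = wX p x * (wY p y * ((Real.log ((N:ℝ) + 1 + (1 + (m:ℝ)) * (1 + (n:ℝ)) / 2) -
            Real.log ((N:ℝ) + (1 + (m:ℝ)) * (1 + (n:ℝ)) / 2)) +
          ∑ i, (∑ j, p i j) *
            (Real.log ((((∑ j', (x i j' : ℕ)) : ℕ) : ℝ) + (1 + (n:ℝ)) / 2) -
             Real.log ((((∑ j', (x i j' : ℕ)) : ℕ) : ℝ) + ((y i : ℕ) : ℝ) + (1 + (n:ℝ)) / 2)))) := by
      intro y
      rw [hterm x y, mul_assoc]
    rw [Finset.sum_congr rfl fun y _ => e1 y, ← Finset.mul_sum]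
    congr 1
    rw [suppY_sum p]
    have e2 : ∀ i₀ : Fin (m+1),
        ∑ i, (∑ j, p i j) *
          (Real.log ((((∑ j', (x i j' : ℕ)) : ℕ) : ℝ) + (1 + (n:ℝ)) / 2) -
           Real.log ((((∑ j', (x i j' : ℕ)) : ℕ) : ℝ) + ((eY m i₀ i : ℕ) : ℝ) + (1 + (n:ℝ)) / 2))
        = (∑ j, p i₀ j) *
          (Real.log ((((∑ j', (x i₀ j' : ℕ)) : ℕ) : ℝ) + (1 + (n:ℝ)) / 2) -
           Real.log ((((∑ j', (x i₀ j' : ℕ)) : ℕ) : ℝ) + 1 + (1 + (n:ℝ)) / 2)) := by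
      intro i₀
      rw [Finset.sum_eq_single i₀]
      · rw [eY_val, if_pos rfl, Nat.cast_one]
      · intro i _ hne
        rw [eY_val, if_neg hne, Nat.cast_zero, add_zero, sub_self, mul_zero]
      · intro h
        exact absurd (Finset.mem_univ i₀) h
    calc ∑ i₀, (∑ j, p i₀ j) *
          ((Real.log ((N:ℝ) + 1 + (1 + (m:ℝ)) * (1 + (n:ℝ)) / 2) -
            Real.log ((N:ℝ) + (1 + (m:ℝ)) * (1 + (n:ℝ)) / 2)) +
           ∑ i, (∑ j, p i j) *
             (Real.log ((((∑ j', (x i j' : ℕ)) : ℕ) : ℝ) + (1 + (n:ℝ)) / 2) -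
              Real.log ((((∑ j', (x i j' : ℕ)) : ℕ) : ℝ) + ((eY m i₀ i : ℕ) : ℝ) + (1 + (n:ℝ)) / 2)))
        = ∑ i₀, ((∑ j, p i₀ j) *
            (Real.log ((N:ℝ) + 1 + (1 + (m:ℝ)) * (1 + (n:ℝ)) / 2) -
             Real.log ((N:ℝ) + (1 + (m:ℝ)) * (1 + (n:ℝ)) / 2)) +
          (∑ j, p i₀ j) ^ 2 *
            (Real.log ((((∑ j', (x i₀ j' : ℕ)) : ℕ) : ℝ) + (1 + (n:ℝ)) / 2) -
             Real.log ((((∑ j', (x i₀ j' : ℕ)) : ℕ) : ℝ) + 1 + (1 + (n:ℝ)) / 2))) := by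
          refine Finset.sum_congr rfl fun i₀ _ => ?_
          rw [mul_add, e2 i₀]
          ring
      _ = _ := by
          rw [Finset.sum_add_distrib, ← Finset.sum_mul, hsum, one_mul]
  rw [riskDiff]
  rw [Finset.sum_congr rfl fun x _ => hYsum x]
  -- step 3 : sum over x
  have hX1 : ∑ x ∈ suppX m n N, wX p x = 1 := by
    have h := marginal' (N := N) p hsum 0 (fun _ => (1:ℝ))
    simpa [binPMF_sum] using h
  have hmarg : ∀ i : Fin (m+1),
      ∑ x ∈ suppX m n N, wX p x *
        (Real.log ((((∑ j', (x i j' : ℕ)) : ℕ) : ℝ) + (1 + (n:ℝ)) / 2) -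
         Real.log ((((∑ j', (x i j' : ℕ)) : ℕ) : ℝ) + 1 + (1 + (n:ℝ)) / 2))
      = ∑ k ∈ Finset.range (N+1), binPMF N (∑ j, p i j) k *
          (Real.log ((k:ℝ) + (1 + (n:ℝ)) / 2) - Real.log ((k:ℝ) + 1 + (1 + (n:ℝ)) / 2)) :=
    fun i => marginal' p hsum i
      (fun k => Real.log ((k:ℝ) + (1 + (n:ℝ)) / 2) - Real.log ((k:ℝ) + 1 + (1 + (n:ℝ)) / 2))
  have hmain : ∑ x ∈ suppX m n N, wX p x *
      ((Real.log ((N:ℝ) + 1 + (1 + (m:ℝ)) * (1 + (n:ℝ)) / 2) -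
        Real.log ((N:ℝ) + (1 + (m:ℝ)) * (1 + (n:ℝ)) / 2)) +
       ∑ i, (∑ j, p i j) ^ 2 *
         (Real.log ((((∑ j', (x i j' : ℕ)) : ℕ) : ℝ) + (1 + (n:ℝ)) / 2) -
          Real.log ((((∑ j', (x i j' : ℕ)) : ℕ) : ℝ) + 1 + (1 + (n:ℝ)) / 2)))
      = (Real.log ((N:ℝ) + 1 + (1 + (m:ℝ)) * (1 + (n:ℝ)) / 2) -
         Real.log ((N:ℝ) + (1 + (m:ℝ)) * (1 + (n:ℝ)) / 2)) +
        ∑ i, (∑ j, p i j) ^ 2 *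
          ∑ k ∈ Finset.range (N+1), binPMF N (∑ j, p i j) k *
            (Real.log ((k:ℝ) + (1 + (n:ℝ)) / 2) - Real.log ((k:ℝ) + 1 + (1 + (n:ℝ)) / 2)) := by
    simp only [mul_add, Finset.sum_add_distrib, Finset.mul_sum]
    congr 1
    · rw [← Finset.sum_mul, hX1, one_mul]
    · rw [Finset.sum_comm]
      refine Finset.sum_congr rfl fun i _ => ?_
      calc ∑ x ∈ suppX m n N, wX p x * ((∑ j, p i j) ^ 2 *
            (Real.log ((((∑ j', (x i j' : ℕ)) : ℕ) : ℝ) + (1 + (n:ℝ)) / 2) -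
             Real.log ((((∑ j', (x i j' : ℕ)) : ℕ) : ℝ) + 1 + (1 + (n:ℝ)) / 2)))
          = (∑ j, p i j) ^ 2 * ∑ x ∈ suppX m n N, wX p x *
            (Real.log ((((∑ j', (x i j' : ℕ)) : ℕ) : ℝ) + (1 + (n:ℝ)) / 2) -
             Real.log ((((∑ j', (x i j' : ℕ)) : ℕ) : ℝ) + 1 + (1 + (n:ℝ)) / 2)) := by
            rw [Finset.mul_sum]
            exact Finset.sum_congr rfl fun x _ => by ring
        _ = (∑ j, p i j) ^ 2 * ∑ k ∈ Finset.range (N+1), binPMF N (∑ j, p i j) k *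
            (Real.log ((k:ℝ) + (1 + (n:ℝ)) / 2) - Real.log ((k:ℝ) + 1 + (1 + (n:ℝ)) / 2)) := by
            rw [hmarg i]
        _ = _ := Finset.mul_sum _ _ _
  rw [hmain]
  -- step 4 : identify the two sides
  have hC : Real.log (1 + 1 / ((N : ℝ) + (1 + (m:ℝ)) * (1 + (n:ℝ)) / 2)) =
      Real.log ((N:ℝ) + 1 + (1 + (m:ℝ)) * (1 + (n:ℝ)) / 2) -
      Real.log ((N:ℝ) + (1 + (m:ℝ)) * (1 + (n:ℝ)) / 2) := by
    have hD : (0:ℝ) < (N : ℝ) + (1 + (m:ℝ)) * (1 + (n:ℝ)) / 2 := by positivity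
    have : (1:ℝ) + 1 / ((N : ℝ) + (1 + (m:ℝ)) * (1 + (n:ℝ)) / 2) =
        ((N:ℝ) + 1 + (1 + (m:ℝ)) * (1 + (n:ℝ)) / 2) /
          ((N:ℝ) + (1 + (m:ℝ)) * (1 + (n:ℝ)) / 2) := by
      field_simp
      ring
    rw [this, Real.log_div (by positivity) (by positivity)]
  have hHi : ∀ i : Fin (m+1), H (∑ j, p i j) =
      -((∑ j, p i j) ^ 2 * ∑ k ∈ Finset.range (N+1), binPMF N (∑ j, p i j) k *
        (Real.log ((k:ℝ) + (1 + (n:ℝ)) / 2) - Real.log ((k:ℝ) + 1 + (1 + (n:ℝ)) / 2))) := by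
    intro i
    rw [hH]
    have hk : ∀ k ∈ Finset.range (N+1),
        binPMF N (∑ j, p i j) k * (- Real.log (1 - 1 / ((k : ℝ) + 1 + (1 + (n:ℝ)) / 2)))
        = -(binPMF N (∑ j, p i j) k *
            (Real.log ((k:ℝ) + (1 + (n:ℝ)) / 2) - Real.log ((k:ℝ) + 1 + (1 + (n:ℝ)) / 2))) := by
      intro k _
      have h1 : (0:ℝ) < (k:ℝ) + (1 + (n:ℝ)) / 2 := by positivity
      have h2 : (0:ℝ) < (k:ℝ) + 1 + (1 + (n:ℝ)) / 2 := by positivity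
      have h3 : (1:ℝ) - 1 / ((k:ℝ) + 1 + (1 + (n:ℝ)) / 2) =
          ((k:ℝ) + (1 + (n:ℝ)) / 2) / ((k:ℝ) + 1 + (1 + (n:ℝ)) / 2) := by
        rw [eq_div_iff h2.ne', sub_mul, one_mul, one_div, inv_mul_cancel₀ h2.ne']
        ring
      rw [h3, Real.log_div h1.ne' h2.ne']
      ring
    rw [Finset.sum_congr rfl hk, Finset.sum_neg_distrib]
    ring
  simp only [hHi]
  rw [hC, Finset.sum_neg_distrib, sub_neg_eq_add]
end

section
/- Let N ≥ 1 and n ≥ 3 be integers. Then the function H : (0,1) → (0,∞) defined by H(q) = q² · Σ_{x=0}^N C(N,x) q^x (1−q)^{N−x} · (− log(1 − 1/(x + 1 + (1+n)/2))) is convex on (0,1). -/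
open Finset

set_option maxHeartbeats 2000000

section Aux

open Set Polynomial

lemma log_ratio_lower_aux {x : ℝ} (h0 : 0 ≤ x) (h1 : x < 1) :
    2*x + 2*x^3/3 ≤ Real.log (1+x) - Real.log (1-x) := by
  set g : ℝ → ℝ := fun t => Real.log (1+t) - Real.log (1-t) - (2*t + 2*t^3/3) with hg
  have hd : ∀ t ∈ Ioo (-1:ℝ) 1, HasDerivAt g (2*t^4/(1-t^2)) t := by
    intro t ht
    have h1t : (0:ℝ) < 1 + t := by linarith [ht.1]
    have h2t : (0:ℝ) < 1 - t := by linarith [ht.2]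
    have d1 : HasDerivAt (fun t : ℝ => Real.log (1+t)) (1/(1+t)) t := by
      have := (Real.hasDerivAt_log h1t.ne').comp t ((hasDerivAt_id t).const_add 1)
      simpa [one_div, Function.comp_def] using this
    have d2 : HasDerivAt (fun t : ℝ => Real.log (1-t)) (-(1/(1-t))) t := by
      have := (Real.hasDerivAt_log h2t.ne').comp t ((hasDerivAt_id t).neg.const_add 1)
      simpa [one_div, Function.comp_def] using this
    have d3 : HasDerivAt (fun t : ℝ => 2*t + 2*t^3/3) (2 + 2*t^2) t := by
      have := ((hasDerivAt_pow 3 t).const_mul (2:ℝ)).div_const 3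
      have := ((hasDerivAt_id t).const_mul (2:ℝ)).add this
      refine this.congr_deriv ?_; norm_num; ring
    have := (d1.sub d2).sub d3
    refine this.congr_deriv ?_
    have hne : (1:ℝ) - t^2 ≠ 0 := by nlinarith [ht.1, ht.2]
    field_simp
    ring
  have hmono : MonotoneOn g (Icc 0 x) := by
    apply monotoneOn_of_deriv_nonneg (convex_Icc 0 x)
    · apply ContinuousOn.mono _ (Set.Icc_subset_Icc le_rfl le_rfl)
      intro t ht
      exact ((hd t ⟨by linarith [ht.1], by linarith [ht.2]⟩).continuousAt).continuousWithinAt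
    · intro t ht
      rw [interior_Icc] at ht
      exact ((hd t ⟨by linarith [ht.1], by linarith [ht.2]⟩).differentiableAt).differentiableWithinAt
    · intro t ht
      rw [interior_Icc] at ht
      rw [(hd t ⟨by linarith [ht.1], by linarith [ht.2]⟩).deriv]
      have : (0:ℝ) < 1 - t^2 := by nlinarith [ht.1, ht.2]
      positivity
  have h0' : g 0 = 0 := by simp [hg]
  have := hmono (Set.left_mem_Icc.2 h0) (Set.right_mem_Icc.2 h0) h0
  rw [h0'] at this
  simp only [hg] at this
  linarith

lemma log_ratio_upper_aux {x : ℝ} (h0 : 0 ≤ x) (h1 : x ≤ 1/5) :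
    Real.log (1+x) - Real.log (1-x) ≤ 2*x + 2*x^3/3 + x^5/2 := by
  set g : ℝ → ℝ := fun t => 2*t + 2*t^3/3 + t^5/2 - (Real.log (1+t) - Real.log (1-t)) with hg
  have hd : ∀ t ∈ Icc (0:ℝ) (1/5), HasDerivAt g (t^4*(1-5*t^2)/(2*(1-t^2))) t := by
    intro t ht
    have h1t : (0:ℝ) < 1 + t := by linarith [ht.1]
    have h2t : (0:ℝ) < 1 - t := by linarith [ht.2]
    have d1 : HasDerivAt (fun t : ℝ => Real.log (1+t)) (1/(1+t)) t := by
      have := (Real.hasDerivAt_log h1t.ne').comp t ((hasDerivAt_id t).const_add 1)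
      simpa [one_div, Function.comp_def] using this
    have d2 : HasDerivAt (fun t : ℝ => Real.log (1-t)) (-(1/(1-t))) t := by
      have := (Real.hasDerivAt_log h2t.ne').comp t ((hasDerivAt_id t).neg.const_add 1)
      simpa [one_div, Function.comp_def] using this
    have d3 : HasDerivAt (fun t : ℝ => 2*t + 2*t^3/3 + t^5/2) (2 + 2*t^2 + 5*t^4/2) t := by
      have h3 := ((hasDerivAt_pow 3 t).const_mul (2:ℝ)).div_const 3
      have h5 := (hasDerivAt_pow 5 t).div_const 2
      have := (((hasDerivAt_id t).const_mul (2:ℝ)).add h3).add h5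
      refine this.congr_deriv ?_; norm_num; ring
    have := d3.sub (d1.sub d2)
    refine this.congr_deriv ?_
    have hne : (1:ℝ) - t^2 ≠ 0 := by nlinarith [ht.1, ht.2]
    field_simp
    ring
  have hmono : MonotoneOn g (Icc 0 (1/5)) := by
    apply monotoneOn_of_deriv_nonneg (convex_Icc 0 (1/5))
    · intro t ht
      exact ((hd t ht).continuousAt).continuousWithinAt
    · intro t ht
      rw [interior_Icc] at ht
      exact ((hd t ⟨le_of_lt ht.1, le_of_lt ht.2⟩).differentiableAt).differentiableWithinAt
    · intro t ht
      rw [interior_Icc] at ht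
      rw [(hd t ⟨le_of_lt ht.1, le_of_lt ht.2⟩).deriv]
      have h1 : (0:ℝ) < 1 - t^2 := by nlinarith [ht.1, ht.2]
      have h2 : (0:ℝ) ≤ 1 - 5*t^2 := by nlinarith [ht.1, ht.2]
      positivity
  have h0' : g 0 = 0 := by simp [hg]
  have := hmono (Set.left_mem_Icc.2 (by norm_num)) ⟨h0, h1⟩ h0
  rw [h0'] at this
  simp only [hg] at this
  linarith

lemma poly_ineq_aux {y u : ℝ} (hy : 1 ≤ y) (hu : y + 1 ≤ u) :
    2*y*(y+1) * (2/(2*u+1) + 2/(3*(2*u+1)^3) + 1/(2*(2*u+1)^5))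
      ≤ (y+1)*(y+2) * (2/(2*u+3) + 2/(3*(2*u+3)^3))
        + y*(y-1) * (2/(2*u-1) + 2/(3*(2*u-1)^3)) := by
  have ht : (0:ℝ) ≤ y - 1 := by linarith
  have hs : (0:ℝ) ≤ u - y - 1 := by linarith
  set t : ℝ := y - 1 with htdef
  set s : ℝ := u - y - 1 with hsdef
  have hA : (0:ℝ) < 2*u+3 := by linarith
  have hB : (0:ℝ) < 2*u+1 := by linarith
  have hC : (0:ℝ) < 2*u-1 := by linarith
  have hP : (0:ℝ) ≤ (9027234:ℝ) + (58353480:ℝ)*s^1 + (154720296:ℝ)*s^2 + (228659840:ℝ)*s^3 + (211948384:ℝ)*s^4 + (129954944:ℝ)*s^5 + (53702272:ℝ)*s^6 + (14830592:ℝ)*s^7 + (2627584:ℝ)*s^8 + (270336:ℝ)*s^9 + (12288:ℝ)*s^10 + (32019331:ℝ)*t^1 + (189345812:ℝ)*t^1*s^1 + (450384964:ℝ)*t^1*s^2 + (585363296:ℝ)*t^1*s^3 + (466153296:ℝ)*t^1*s^4 + (238289728:ℝ)*t^1*s^5 + (78706112:ℝ)*t^1*s^6 + (16271360:ℝ)*t^1*s^7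 + (1916928:ℝ)*t^1*s^8 + (98304:ℝ)*t^1*s^9 + (49214133:ℝ)*t^2 + (264492148:ℝ)*t^2*s^1 + (557854732:ℝ)*t^2*s^2 + (626541664:ℝ)*t^2*s^3 + (417778352:ℝ)*t^2*s^4 + (171266880:ℝ)*t^2*s^5 + (42458944:ℝ)*t^2*s^6 + (5849088:ℝ)*t^2*s^7 + (344064:ℝ)*t^2*s^8 + (42767024:ℝ)*t^3 + (207413112:ℝ)*t^3*s^1 + (382254656:ℝ)*t^3*s^2 + (362261568:ℝ)*t^3*s^3 + (194813440:ℝ)*t^3*s^4 + (60199808:ℝ)*t^3*s^5 + (9977856:ℝ)*t^3*s^6 + (688128:ℝ)*t^3*s^7 + (22973292:ℝ)*t^4 + (99722784:ℝ)*t^4*s^1 + (157477792:ℝ)*t^4*s^2 + (121636480:ℝ)*t^4*s^3 + (49681600:ℝ)*t^4*s^4 + (10321920:ℝ)*t^4*s^5 + (860160:ℝ)*t^4*s^6 + (7811440:ℝ)*t^5 + (30049280:ℝ)*t^5*s^1 + (39548352:ℝ)*t^5*s^2 + (23554304:ℝ)*t^5*s^3 + (6537216:ℝ)*t^5*s^4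 + (688128:ℝ)*t^5*s^5 + (1642160:ℝ)*t^6 + (5529152:ℝ)*t^6*s^1 + (5813440:ℝ)*t^6*s^2 + (2408448:ℝ)*t^6*s^3 + (344064:ℝ)*t^6*s^4 + (195200:ℝ)*t^7 + (566144:ℝ)*t^7*s^1 + (442368:ℝ)*t^7*s^2 + (98304:ℝ)*t^7*s^3 + (10048:ℝ)*t^8 + (24576:ℝ)*t^8*s^1 + (12288:ℝ)*t^8*s^2 := by
    repeat' apply add_nonneg
    all_goals first
      | positivity
      | exact mul_nonneg (mul_nonneg (by norm_num) (pow_nonneg ht _)) (pow_nonneg hs _)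
      | exact mul_nonneg (by norm_num) (pow_nonneg hs _)
      | exact mul_nonneg (by norm_num) (pow_nonneg ht _)
  rw [← sub_nonneg]
  have hEq : (y+1)*(y+2) * (2/(2*u+3) + 2/(3*(2*u+3)^3))
        + y*(y-1) * (2/(2*u-1) + 2/(3*(2*u-1)^3))
      - 2*y*(y+1) * (2/(2*u+1) + 2/(3*(2*u+1)^3) + 1/(2*(2*u+1)^5))
      = ((9027234:ℝ) + (58353480:ℝ)*s^1 + (154720296:ℝ)*s^2 + (228659840:ℝ)*s^3 + (211948384:ℝ)*s^4 + (129954944:ℝ)*s^5 + (53702272:ℝ)*s^6 + (14830592:ℝ)*s^7 + (2627584:ℝ)*s^8 + (270336:ℝ)*s^9 + (12288:ℝ)*s^10 + (32019331:ℝ)*t^1 + (189345812:ℝ)*t^1*s^1 + (450384964:ℝ)*t^1*s^2 + (585363296:ℝ)*t^1*s^3 + (466153296:ℝ)*t^1*s^4 + (238289728:ℝ)*t^1*s^5 + (78706112:ℝ)*t^1*s^6 + (16271360:ℝ)*t^1*s^7 + (1916928:ℝ)*t^1*s^8 + (98304:ℝ)*t^1*s^9 + (49214133:ℝ)*t^2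 + (264492148:ℝ)*t^2*s^1 + (557854732:ℝ)*t^2*s^2 + (626541664:ℝ)*t^2*s^3 + (417778352:ℝ)*t^2*s^4 + (171266880:ℝ)*t^2*s^5 + (42458944:ℝ)*t^2*s^6 + (5849088:ℝ)*t^2*s^7 + (344064:ℝ)*t^2*s^8 + (42767024:ℝ)*t^3 + (207413112:ℝ)*t^3*s^1 + (382254656:ℝ)*t^3*s^2 + (362261568:ℝ)*t^3*s^3 + (194813440:ℝ)*t^3*s^4 + (60199808:ℝ)*t^3*s^5 + (9977856:ℝ)*t^3*s^6 + (688128:ℝ)*t^3*s^7 + (22973292:ℝ)*t^4 + (99722784:ℝ)*t^4*s^1 + (157477792:ℝ)*t^4*s^2 + (121636480:ℝ)*t^4*s^3 + (49681600:ℝ)*t^4*s^4 + (10321920:ℝ)*t^4*s^5 + (860160:ℝ)*t^4*s^6 + (7811440:ℝ)*t^5 + (30049280:ℝ)*t^5*s^1 + (39548352:ℝ)*t^5*s^2 + (23554304:ℝ)*t^5*s^3 + (6537216:ℝ)*t^5*s^4 + (688128:ℝ)*t^5*s^5 + (1642160:ℝ)*t^6 + (5529152:ℝ)*t^6*s^1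 + (5813440:ℝ)*t^6*s^2 + (2408448:ℝ)*t^6*s^3 + (344064:ℝ)*t^6*s^4 + (195200:ℝ)*t^7 + (566144:ℝ)*t^7*s^1 + (442368:ℝ)*t^7*s^2 + (98304:ℝ)*t^7*s^3 + (10048:ℝ)*t^8 + (24576:ℝ)*t^8*s^1 + (12288:ℝ)*t^8*s^2) / (3*(2*u+3)^3*(2*u+1)^5*(2*u-1)^3) := by
    rw [htdef, hsdef]
    field_simp
    ring
  rw [hEq]
  exact div_nonneg hP (by positivity)

lemma log_eq_ratio_aux {u : ℝ} (hu : 0 < u) :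
    Real.log (1+1/u) = Real.log (1+1/(2*u+1)) - Real.log (1-1/(2*u+1)) := by
  have hB : (0:ℝ) < 2*u+1 := by linarith
  have h1 : (0:ℝ) < 1+1/(2*u+1) := by positivity
  have h2 : (0:ℝ) < 1-1/(2*u+1) := by
    rw [sub_pos, div_lt_one hB]; linarith
  rw [← Real.log_div h1.ne' h2.ne']
  congr 1
  field_simp
  ring

lemma L_lower_aux {u : ℝ} (hu : 1 ≤ u) :
    2/(2*u+1) + 2/(3*(2*u+1)^3) ≤ Real.log (1+1/u) := by
  have hB : (0:ℝ) < 2*u+1 := by linarith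
  have hx0 : (0:ℝ) ≤ 1/(2*u+1) := by positivity
  have hx1 : 1/(2*u+1) < 1 := by rw [div_lt_one hB]; linarith
  rw [log_eq_ratio_aux (by linarith)]
  calc 2/(2*u+1) + 2/(3*(2*u+1)^3)
      = 2*(1/(2*u+1)) + 2*(1/(2*u+1))^3/3 := by field_simp
    _ ≤ _ := log_ratio_lower_aux hx0 hx1

lemma L_upper_aux {u : ℝ} (hu : 2 ≤ u) :
    Real.log (1+1/u) ≤ 2/(2*u+1) + 2/(3*(2*u+1)^3) + 1/(2*(2*u+1)^5) := by
  have hB : (0:ℝ) < 2*u+1 := by linarith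
  have hx0 : (0:ℝ) ≤ 1/(2*u+1) := by positivity
  have hx1 : 1/(2*u+1) ≤ 1/5 := by
    rw [div_le_div_iff₀ hB (by norm_num)]; linarith
  rw [log_eq_ratio_aux (by linarith)]
  calc Real.log (1+1/(2*u+1)) - Real.log (1-1/(2*u+1))
      ≤ 2*(1/(2*u+1)) + 2*(1/(2*u+1))^3/3 + (1/(2*u+1))^5/2 := log_ratio_upper_aux hx0 hx1
    _ = 2/(2*u+1) + 2/(3*(2*u+1)^3) + 1/(2*(2*u+1)^5) := by field_simp

lemma key_ineq_aux {y u : ℝ} (hy : 1 ≤ y) (hu : y + 1 ≤ u) :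
    2*y*(y+1) * Real.log (1+1/u)
      ≤ (y+1)*(y+2) * Real.log (1+1/(u+1)) + y*(y-1) * Real.log (1+1/(u-1)) := by
  have h1 : Real.log (1+1/u) ≤ 2/(2*u+1) + 2/(3*(2*u+1)^3) + 1/(2*(2*u+1)^5) :=
    L_upper_aux (by linarith)
  have h2 : 2/(2*(u+1)+1) + 2/(3*(2*(u+1)+1)^3) ≤ Real.log (1+1/(u+1)) :=
    L_lower_aux (by linarith)
  have h3 : 2/(2*(u-1)+1) + 2/(3*(2*(u-1)+1)^3) ≤ Real.log (1+1/(u-1)) :=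
    L_lower_aux (by linarith)
  have hc1 : (0:ℝ) ≤ 2*y*(y+1) := by nlinarith
  have hc2 : (0:ℝ) ≤ (y+1)*(y+2) := by nlinarith
  have hc3 : (0:ℝ) ≤ y*(y-1) := by nlinarith
  have key := poly_ineq_aux hy hu
  have e2 : 2*(u+1)+1 = 2*u+3 := by ring
  have e3 : 2*(u-1)+1 = 2*u-1 := by ring
  rw [e2] at h2; rw [e3] at h3
  calc 2*y*(y+1) * Real.log (1+1/u)
      ≤ 2*y*(y+1) * (2/(2*u+1) + 2/(3*(2*u+1)^3) + 1/(2*(2*u+1)^5)) :=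
        mul_le_mul_of_nonneg_left h1 hc1
    _ ≤ (y+1)*(y+2) * (2/(2*u+3) + 2/(3*(2*u+3)^3))
        + y*(y-1) * (2/(2*u-1) + 2/(3*(2*u-1)^3)) := key
    _ ≤ (y+1)*(y+2) * Real.log (1+1/(u+1)) + y*(y-1) * Real.log (1+1/(u-1)) := by
        apply add_le_add (mul_le_mul_of_nonneg_left h2 hc2) (mul_le_mul_of_nonneg_left h3 hc3)

lemma bern2deriv_aux (N x : ℕ) : Polynomial.derivative (Polynomial.derivative (bernsteinPolynomial ℝ (N+2) (x+2)))
    = Polynomial.C (((N:ℝ)+2)*((N:ℝ)+1)) *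
      (bernsteinPolynomial ℝ N x - 2 * bernsteinPolynomial ℝ N (x+1) + bernsteinPolynomial ℝ N (x+2)) := by
  rw [show N+2 = (N+1)+1 from rfl, show x+2 = (x+1)+1 from rfl,
    bernsteinPolynomial.derivative_succ_aux]
  rw [derivative_mul, map_sub, bernsteinPolynomial.derivative_succ_aux,
    bernsteinPolynomial.derivative_succ_aux]
  have h0 : Polynomial.derivative ((↑(N+1) : ℝ[X]) + 1) = 0 := by simp
  rw [h0]
  have hC : ((↑(N+1) : ℝ[X]) + 1) = Polynomial.C ((N:ℝ)+2) := by
    rw [map_add, show (2:ℝ) = ((2:ℕ):ℝ) by norm_num, Polynomial.C_eq_natCast,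
      Polynomial.C_eq_natCast]
    push_cast; ring
  have hC2 : ((↑N : ℝ[X]) + 1) = Polynomial.C ((N:ℝ)+1) := by
    rw [map_add, show (1:ℝ) = ((1:ℕ):ℝ) by norm_num, Polynomial.C_eq_natCast,
      Polynomial.C_eq_natCast]
    push_cast; ring
  rw [hC, hC2, map_mul]
  ring

lemma regroup_aux (M : ℕ) (d b : ℕ → ℝ) :
    ∑ x ∈ Finset.range (M+1), d x * (b x - 2*b (x+1) + b (x+2))
      = ∑ y ∈ Finset.range (M+3),
          ((if y ≤ M then d y else 0) - 2 * (if 1 ≤ y ∧ y ≤ M+1 then d (y-1) else 0)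
            + (if 2 ≤ y ∧ y ≤ M+2 then d (y-2) else 0)) * b y := by
  have E1 : ∑ y ∈ Finset.range (M+3), (if y ≤ M then d y else 0) * b y
      = ∑ x ∈ Finset.range (M+1), d x * b x := by
    rw [← Finset.sum_subset (Finset.range_subset_range.2 (by omega : M+1 ≤ M+3))]
    · exact Finset.sum_congr rfl fun x hx => by
        rw [if_pos (by simpa using Nat.lt_succ_iff.1 (Finset.mem_range.1 hx))]
    · intro y hy hy'
      rw [if_neg (by simp at hy hy' ⊢; omega), zero_mul]
  have E2 : ∑ y ∈ Finset.range (M+3), (if 1 ≤ y ∧ y ≤ M+1 then d (y-1) else 0) * b y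
      = ∑ x ∈ Finset.range (M+1), d x * b (x+1) := by
    rw [Finset.sum_range_succ']
    simp only [Nat.add_sub_cancel]
    rw [if_neg (by omega), zero_mul, add_zero, Finset.sum_range_succ,
      if_neg (by omega), zero_mul, add_zero]
    exact Finset.sum_congr rfl fun x hx => by
      rw [if_pos ⟨by omega, by simp at hx; omega⟩]
  have E3 : ∑ y ∈ Finset.range (M+3), (if 2 ≤ y ∧ y ≤ M+2 then d (y-2) else 0) * b y
      = ∑ x ∈ Finset.range (M+1), d x * b (x+2) := by
    rw [Finset.sum_range_succ']
    rw [if_neg (by omega), zero_mul, add_zero, Finset.sum_range_succ']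
    rw [if_neg (by omega), zero_mul, add_zero]
    exact Finset.sum_congr rfl fun x hx => by
      simp only [show x+1+1-2 = x from by omega]
      rw [if_pos ⟨by omega, by simp at hx; omega⟩]
  simp only [sub_mul, add_mul, mul_assoc, Finset.sum_add_distrib, Finset.sum_sub_distrib,
    mul_sub, mul_add, ← Finset.mul_sum]
  rw [E1, E2, E3] at *
  rw [Finset.mul_sum]
  congr 1
  congr 1
  exact Finset.sum_congr rfl fun x _ => by ring

end Aux

theorem H_convex (N n : ℕ) (hN : 1 ≤ N) (hn : 3 ≤ n) :
    ConvexOn ℝ (Set.Ioo (0 : ℝ) 1)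
      (fun q : ℝ => q ^ 2 * ∑ x ∈ Finset.range (N+1),
        binPMF N q x * (- Real.log (1 - 1 / ((x : ℝ) + 1 + (1 + n) / 2)))) := by
  set β : ℝ := (1 + (n:ℝ)) / 2 with hβdef
  have hβ : 2 ≤ β := by
    have : (3:ℝ) ≤ (n:ℝ) := by exact_mod_cast hn
    rw [hβdef]; linarith
  set c : ℕ → ℝ := fun x => Real.log (1 + 1/((x:ℝ) + β)) with hcdef
  have hcpos : ∀ x : ℕ, 0 < (x:ℝ) + β := fun x => by positivity
  have hc : ∀ x : ℕ, - Real.log (1 - 1 / ((x : ℝ) + 1 + (1 + n) / 2)) = c x := by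
    intro x
    have h1 : (1:ℝ) - 1 / ((x:ℝ) + 1 + β) = (1 + 1/((x:ℝ) + β))⁻¹ := by
      have h2 : (0:ℝ) < (x:ℝ) + 1 + β := by have := hcpos x; linarith
      field_simp
      ring
    show - Real.log (1 - 1 / ((x : ℝ) + 1 + β)) = c x
    rw [h1, Real.log_inv, neg_neg]
  have hNN : (0:ℝ) < ((N:ℝ)+1) * ((N:ℝ)+2) := by positivity
  set w : ℕ → ℝ := fun x => c x * ((x:ℝ)+1) * ((x:ℝ)+2) / (((N:ℝ)+1) * ((N:ℝ)+2)) with hwdef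
  set P : Polynomial ℝ :=
    ∑ x ∈ Finset.range (N+1), Polynomial.C (w x) * bernsteinPolynomial ℝ (N+2) (x+2) with hPdef
  have choose_id : ∀ x : ℕ,
      ((x:ℝ)+1) * ((x:ℝ)+2) * (((N+2).choose (x+2) : ℕ) : ℝ)
        = ((N:ℝ)+1) * ((N:ℝ)+2) * ((N.choose x : ℕ) : ℝ) := by
    intro x
    have h1 : (N+1) * N.choose x = (N+1).choose (x+1) * (x+1) := Nat.add_one_mul_choose_eq N x
    have h2 : (N+2) * (N+1).choose (x+1) = (N+2).choose (x+2) * (x+2) :=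
      Nat.add_one_mul_choose_eq (N+1) (x+1)
    have : (x+1) * (x+2) * ((N+2).choose (x+2)) = (N+1) * (N+2) * (N.choose x) := by
      calc (x+1) * (x+2) * ((N+2).choose (x+2)) = (x+1) * ((N+2).choose (x+2) * (x+2)) := by ring
        _ = (x+1) * ((N+2) * (N+1).choose (x+1)) := by rw [h2]
        _ = (N+2) * ((N+1).choose (x+1) * (x+1)) := by ring
        _ = (N+2) * ((N+1) * N.choose x) := by rw [h1]
        _ = (N+1) * (N+2) * (N.choose x) := by ring
    exact_mod_cast congrArg (Nat.cast : ℕ → ℝ) this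
  have funeq : (fun q : ℝ => q ^ 2 * ∑ x ∈ Finset.range (N+1),
        binPMF N q x * (- Real.log (1 - 1 / ((x : ℝ) + 1 + (1 + n) / 2))))
      = fun q : ℝ => P.eval q := by
    funext q
    rw [hPdef, Polynomial.eval_finset_sum, Finset.mul_sum]
    refine Finset.sum_congr rfl fun x hx => ?_
    rw [hc x, Polynomial.eval_mul, Polynomial.eval_C]
    have hbe : (bernsteinPolynomial ℝ (N+2) (x+2)).eval q
        = (((N+2).choose (x+2) : ℕ) : ℝ) * q^(x+2) * (1-q)^(N-x) := by
      have : N + 2 - (x+2) = N - x := by omega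
      simp [bernsteinPolynomial, this]
      try ring
    rw [hbe, hwdef]
    simp only [binPMF]
    have hkey := choose_id x
    rw [div_mul_eq_mul_div, eq_div_iff hNN.ne']
    linear_combination (-(c x * q^(x+2) * (1-q)^(N-x))) * hkey
  rw [funeq]
  -- second derivative of P
  set d : ℕ → ℝ := fun x => c x * ((x:ℝ)+1) * ((x:ℝ)+2) with hddef
  have hP2 : Polynomial.derivative (Polynomial.derivative P)
      = ∑ x ∈ Finset.range (N+1), Polynomial.C (d x) *
          (bernsteinPolynomial ℝ N x - 2 * bernsteinPolynomial ℝ N (x+1)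
            + bernsteinPolynomial ℝ N (x+2)) := by
    rw [hPdef, map_sum, map_sum]
    refine Finset.sum_congr rfl fun x _ => ?_
    have hw : w x * (((N:ℝ)+2)*((N:ℝ)+1)) = d x := by
      rw [hwdef, hddef, div_mul_eq_mul_div, div_eq_iff hNN.ne']
      ring
    rw [Polynomial.derivative_C_mul, Polynomial.derivative_C_mul, bern2deriv_aux N x,
      ← mul_assoc, ← Polynomial.C_mul, hw]
  -- nonnegativity of the second derivative on (0,1)
  have hsecond : ∀ q ∈ Set.Ioo (0:ℝ) 1,
      0 ≤ (Polynomial.derivative (Polynomial.derivative P)).eval q := by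
    intro q hq
    obtain ⟨hq0, hq1⟩ := hq
    set b : ℕ → ℝ := fun y => ((N.choose y : ℕ) : ℝ) * q^y * (1-q)^(N-y) with hbdef
    have hbe : ∀ y : ℕ, (bernsteinPolynomial ℝ N y).eval q = b y := by
      intro y
      simp only [hbdef, bernsteinPolynomial]
      simp
      try ring
    have hev : (Polynomial.derivative (Polynomial.derivative P)).eval q
        = ∑ x ∈ Finset.range (N+1), d x * (b x - 2*b (x+1) + b (x+2)) := by
      rw [hP2, Polynomial.eval_finset_sum]
      refine Finset.sum_congr rfl fun x _ => ?_
      simp only [Polynomial.eval_mul, Polynomial.eval_C, Polynomial.eval_add,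
        Polynomial.eval_sub, Polynomial.eval_ofNat, hbe]
    rw [hev, regroup_aux N d b]
    apply Finset.sum_nonneg
    intro y hy
    by_cases hyN : y ≤ N
    · have hb : 0 ≤ b y := by
        rw [hbdef]
        have : (0:ℝ) ≤ 1 - q := by linarith
        positivity
      refine mul_nonneg ?_ hb
      match y, hyN with
      | 0, _ =>
        simp only [if_pos (Nat.zero_le N), if_neg (by omega : ¬(1 ≤ 0 ∧ 0 ≤ N+1)),
          if_neg (by omega : ¬(2 ≤ 0 ∧ 0 ≤ N+2))]
        have hβ0 : (0:ℝ) < (0:ℕ) + β := hcpos 0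
        have hc0 : 0 ≤ c 0 := by
          rw [hcdef]
          apply Real.log_nonneg
          have h : (0:ℝ) ≤ 1/(((0:ℕ):ℝ) + β) := by positivity
          linarith
        rw [hddef]
        push_cast
        nlinarith [hc0]
      | 1, h1N =>
        rw [if_pos h1N, if_pos (by omega : 1 ≤ 1 ∧ 1 ≤ N+1),
          if_neg (by omega : ¬(2 ≤ 1 ∧ 1 ≤ N+2))]
        have key := key_ineq_aux (le_refl (1:ℝ)) (by linarith : (1:ℝ) + 1 ≤ β)
        have hc0 : c 0 = Real.log (1 + 1/β) := by
          rw [hcdef]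
          simp only [Nat.cast_zero, zero_add]
        have hc1 : c 1 = Real.log (1 + 1/(β+1)) := by
          rw [hcdef]
          simp only [show ((1:ℕ):ℝ) + β = β + 1 from by push_cast; ring]
        simp only [hddef, Nat.sub_self]
        rw [hc1, hc0]
        push_cast
        nlinarith [key]
      | (z+2), hzN =>
        rw [if_pos hzN, if_pos (by omega : 1 ≤ z+2 ∧ z+2 ≤ N+1),
          if_pos (by omega : 2 ≤ z+2 ∧ z+2 ≤ N+2)]
        have hu : ((z:ℝ)+2) + 1 ≤ (z:ℝ) + 1 + β := by linarith
        have key := key_ineq_aux (by linarith : (1:ℝ) ≤ (z:ℝ)+2) hu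
        have e1 : (z:ℝ) + 1 + β + 1 = ((z+2:ℕ):ℝ) + β := by push_cast; ring
        have e2 : (z:ℝ) + 1 + β - 1 = ((z:ℕ):ℝ) + β := by push_cast; ring
        have hcz2 : c (z+2) = Real.log (1 + 1/((z:ℝ) + 1 + β + 1)) := by
          rw [hcdef]
          simp only [show ((z+2:ℕ):ℝ) + β = (z:ℝ) + 1 + β + 1 from by push_cast; ring]
        have hcz1 : c (z+1) = Real.log (1 + 1/((z:ℝ) + 1 + β)) := by
          rw [hcdef]
          simp only [show ((z+1:ℕ):ℝ) + β = (z:ℝ) + 1 + β from by push_cast; ring]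
        have hcz : c z = Real.log (1 + 1/((z:ℝ) + 1 + β - 1)) := by
          rw [hcdef]
          simp only [show ((z:ℕ):ℝ) + β = (z:ℝ) + 1 + β - 1 from by push_cast; ring]
        have n1 : z + 2 - 1 = z + 1 := by omega
        have n2 : z + 2 - 2 = z := by omega
        rw [n1, n2]
        simp only [hddef]
        rw [hcz2, hcz1, hcz]
        push_cast
        nlinarith [key]
    · -- y > N : b y = 0
      have : b y = 0 := by
        simp only [hbdef]
        rw [Nat.choose_eq_zero_of_lt (by omega : N < y)]
        norm_num
      rw [this, mul_zero]
  -- conclude convexity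
  apply convexOn_of_deriv2_nonneg (convex_Ioo 0 1)
  · exact (Polynomial.continuous P).continuousOn
  · exact fun x _ => (Polynomial.differentiable P).differentiableAt.differentiableWithinAt
  · have h1 : deriv (fun q : ℝ => P.eval q) = fun q => (Polynomial.derivative P).eval q :=
      funext fun x => Polynomial.deriv (p := P)
    rw [h1]
    exact fun x _ =>
      (Polynomial.differentiable (Polynomial.derivative P)).differentiableAt.differentiableWithinAt
  · intro q hq
    rw [interior_Ioo] at hq
    have h1 : deriv (fun q : ℝ => P.eval q) = fun q => (Polynomial.derivative P).eval q :=
      funext fun x => Polynomial.deriv (p := P)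
    have h2 : deriv^[2] (fun q : ℝ => P.eval q) q
        = (Polynomial.derivative (Polynomial.derivative P)).eval q := by
      show deriv (deriv (fun q : ℝ => P.eval q)) q = _
      rw [h1]
      exact Polynomial.deriv (p := Polynomial.derivative P)
    rw [h2]
    exact hsecond q hq
end

section
/- Let m ≥ 1, n ≥ 3, N ≥ 1 be integers, and let p* denote the uniform probability vector with p*_{i,j} = 1/((1+m)(1+n)) for all i, j. Then for every vector p = (p_{i,j}) of positive reals summing to 1, Δ_p(N, 1) ≤ Δ_{p*}(N, 1); that is, the risk difference Δ_p(N, 1) is maximized over the simplex at p = p*. -/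
open Finset

/-- Lower bound for log: `2(u-1)/(u+1) ≤ log u` for `u ≥ 1`. -/

lemma log_lb {u : ℝ} (hu : 1 ≤ u) : 2*(u-1)/(u+1) ≤ Real.log u := by
  rcases eq_or_lt_of_le hu with rfl | hu'
  · simp
  have key : StrictMonoOn (fun v : ℝ => Real.log v - 2*(v-1)/(v+1)) (Set.Ici 1) := by
    apply strictMonoOn_of_hasDerivWithinAt_pos (convex_Ici 1)
    · apply ContinuousOn.sub
      · exact Real.continuousOn_log.mono (by intro v hv; simp at hv ⊢; linarith)
      · apply ContinuousOn.div
        · fun_prop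
        · fun_prop
        · intro v hv; simp at hv; intro h; linarith
    · intro v hv
      rw [interior_Ici] at hv
      simp only [Set.mem_Ioi] at hv
      have hv0 : (0:ℝ) < v := by linarith
      have h1 : v + 1 ≠ 0 := by positivity
      exact HasDerivAt.hasDerivWithinAt <| by
        have hlog : HasDerivAt Real.log v⁻¹ v := Real.hasDerivAt_log (ne_of_gt hv0)
        have hnum : HasDerivAt (fun v : ℝ => 2*(v-1)) 2 v := by
          simpa using ((hasDerivAt_id v).sub_const 1).const_mul (2:ℝ)
        have hden : HasDerivAt (fun v : ℝ => v+1) 1 v := (hasDerivAt_id v).add_const 1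
        exact hlog.sub ((hnum.div hden h1))
    · intro v hv
      rw [interior_Ici] at hv
      simp only [Set.mem_Ioi] at hv
      have hv0 : (0:ℝ) < v := by linarith
      have : v⁻¹ - (2 * (v+1) - 2*(v-1)*1)/(v+1)^2 = (v-1)^2/(v*(v+1)^2) := by
        field_simp; ring
      rw [this]
      have h1 : (0:ℝ) < (v-1)^2 := by nlinarith
      have h2 : (0:ℝ) < v*(v+1)^2 := by positivity
      exact div_pos h1 h2
  have h0 : (fun v : ℝ => Real.log v - 2*(v-1)/(v+1)) 1 < _ :=
    key (Set.self_mem_Ici) (Set.mem_Ici.2 hu) hu'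
  simp at h0
  linarith

/-- `log s - log (s-1) ≥ 2/(2s-1)` for `s > 1`. -/

lemma log_diff_lb {s : ℝ} (hs : 1 < s) : 2/(2*s-1) ≤ Real.log s - Real.log (s-1) := by
  have h1 : (0:ℝ) < s - 1 := by linarith
  have h2 : (1:ℝ) ≤ s/(s-1) := by rw [le_div_iff₀ h1]; linarith
  have := log_lb h2
  rw [Real.log_div (by linarith) (ne_of_gt h1)] at this
  have he : 2*(s/(s-1)-1)/(s/(s-1)+1) = 2/(2*s-1) := by
    rw [div_eq_div_iff (by positivity) (by nlinarith)]
    field_simp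
    ring
  rw [he] at this
  exact this

noncomputable def hAux (c t : ℝ) : ℝ := (t^2 - t) * (Real.log (t+c) - Real.log (t+c-1))

lemma hAux_convexOn {c : ℝ} (hc : 1 ≤ c) : ConvexOn ℝ (Set.Ici 1) (hAux c) := by
  have hd1 : ∀ t : ℝ, 1 ≤ t → HasDerivAt (hAux c)
      ((2*t-1) * (Real.log (t+c) - Real.log (t+c-1)) + (t^2-t) * (1/(t+c) - 1/(t+c-1))) t := by
    intro t ht
    have hpos1 : (0:ℝ) < t + c := by linarith
    have hpos2 : (0:ℝ) < t + c - 1 := by linarith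
    have hA : HasDerivAt (fun t : ℝ => t^2 - t) (2*t-1) t := by
      simpa using (hasDerivAt_pow 2 t).fun_sub (hasDerivAt_id t)
    have hL : HasDerivAt (fun t : ℝ => Real.log (t+c) - Real.log (t+c-1))
        (1/(t+c) - 1/(t+c-1)) t := by
      have l1 : HasDerivAt (fun t : ℝ => Real.log (t+c)) (1/(t+c)) t := by
        simpa using (((hasDerivAt_id t).add_const c).log (ne_of_gt hpos1))
      have l2 : HasDerivAt (fun t : ℝ => Real.log (t+c-1)) (1/(t+c-1)) t := by
        have hb : HasDerivAt (fun t : ℝ => t+c-1) 1 t := by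
          simpa using (((hasDerivAt_id t).add_const c).sub_const 1)
        simpa using (hb.log (ne_of_gt hpos2))
      exact l1.sub l2
    have := hA.fun_mul hL
    unfold hAux
    convert this using 1
    all_goals ring
  have hd2 : ∀ t : ℝ, 1 ≤ t → HasDerivAt
      (fun t => (2*t-1) * (Real.log (t+c) - Real.log (t+c-1)) + (t^2-t) * (1/(t+c) - 1/(t+c-1)))
      (2 * (Real.log (t+c) - Real.log (t+c-1)) + 2*(2*t-1) * (1/(t+c) - 1/(t+c-1))
        + (t^2-t) * (1/(t+c-1)^2 - 1/(t+c)^2)) t := by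
    intro t ht
    have hpos1 : (0:ℝ) < t + c := by linarith
    have hpos2 : (0:ℝ) < t + c - 1 := by linarith
    have hA : HasDerivAt (fun t : ℝ => 2*t-1) 2 t := by
      simpa using ((hasDerivAt_id t).const_mul (2:ℝ)).sub_const 1
    have hB : HasDerivAt (fun t : ℝ => t^2 - t) (2*t-1) t := by
      simpa using (hasDerivAt_pow 2 t).fun_sub (hasDerivAt_id t)
    have hL : HasDerivAt (fun t : ℝ => Real.log (t+c) - Real.log (t+c-1))
        (1/(t+c) - 1/(t+c-1)) t := by
      have l1 : HasDerivAt (fun t : ℝ => Real.log (t+c)) (1/(t+c)) t := by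
        simpa using (((hasDerivAt_id t).add_const c).log (ne_of_gt hpos1))
      have l2 : HasDerivAt (fun t : ℝ => Real.log (t+c-1)) (1/(t+c-1)) t := by
        have hb : HasDerivAt (fun t : ℝ => t+c-1) 1 t := by
          simpa using (((hasDerivAt_id t).add_const c).sub_const 1)
        simpa using (hb.log (ne_of_gt hpos2))
      exact l1.sub l2
    have hM : HasDerivAt (fun t : ℝ => 1/(t+c) - 1/(t+c-1))
        (-(1/(t+c)^2) + 1/(t+c-1)^2) t := by
      have l1 : HasDerivAt (fun t : ℝ => 1/(t+c)) (-(1/(t+c)^2)) t := by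
        have h := ((hasDerivAt_id t).add_const c).fun_inv (ne_of_gt hpos1)
        simp only [one_div]
        convert! h using 1
        simp only [id]; field_simp
      have l2 : HasDerivAt (fun t : ℝ => 1/(t+c-1)) (-(1/(t+c-1)^2)) t := by
        have hb : HasDerivAt (fun t : ℝ => t+c-1) 1 t := by
          simpa using (((hasDerivAt_id t).add_const c).sub_const 1)
        have h := hb.fun_inv (ne_of_gt hpos2)
        simp only [one_div]
        convert! h using 1
        field_simp
      have := l1.fun_sub l2
      convert! this using 1
      all_goals ring
    have := (hA.fun_mul hL).fun_add (hB.fun_mul hM)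
    convert! this using 1
    all_goals ring
  apply convexOn_of_hasDerivWithinAt2_nonneg (convex_Ici 1)
    (f' := fun t => (2*t-1) * (Real.log (t+c) - Real.log (t+c-1)) + (t^2-t) * (1/(t+c) - 1/(t+c-1)))
    (f'' := fun t => 2 * (Real.log (t+c) - Real.log (t+c-1)) + 2*(2*t-1) * (1/(t+c) - 1/(t+c-1))
        + (t^2-t) * (1/(t+c-1)^2 - 1/(t+c)^2))
  · -- continuity
    intro t ht
    exact ((hd1 t ht).continuousAt).continuousWithinAt
  · intro t ht
    rw [interior_Ici] at ht
    exact (hd1 t (le_of_lt ht)).hasDerivWithinAt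
  · intro t ht
    rw [interior_Ici] at ht
    exact (hd2 t (le_of_lt ht)).hasDerivWithinAt
  · intro t ht
    rw [interior_Ici] at ht
    simp only [Set.mem_Ioi] at ht
    set s : ℝ := t + c with hs
    have hs1 : (1:ℝ) < s := by simp [hs]; linarith
    have hs0 : (0:ℝ) < s := by linarith
    have hsm : (0:ℝ) < s - 1 := by linarith
    have h2s : (0:ℝ) < 2*s - 1 := by linarith
    have hlog := log_diff_lb hs1
    have hP : (0:ℝ) ≤ 4*s^2*(s-1)^2 - 2*(2*t-1)*s*(s-1)*(2*s-1) + (t^2-t)*(2*s-1)^2 := by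
      have hc' : 1 ≤ c := hc
      have ht' : 1 ≤ t := le_of_lt ht
      rw [hs]
      nlinarith [sq_nonneg (t-1), sq_nonneg (c-1), sq_nonneg (t+c-2),
        mul_nonneg (sub_nonneg.2 ht') (sub_nonneg.2 hc'), sq_nonneg (t*c-1), sq_nonneg c, sq_nonneg t]
    have hkey : 2 * (2/(2*s-1)) + 2*(2*t-1) * (1/s - 1/(s-1)) + (t^2-t) * (1/(s-1)^2 - 1/s^2)
        = (4*s^2*(s-1)^2 - 2*(2*t-1)*s*(s-1)*(2*s-1) + (t^2-t)*(2*s-1)^2) / (s^2*(s-1)^2*(2*s-1)) := by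
      field_simp
      ring
    have h2 : (0:ℝ) ≤ 2 * (2/(2*s-1)) + 2*(2*t-1) * (1/s - 1/(s-1)) + (t^2-t) * (1/(s-1)^2 - 1/s^2) := by
      rw [hkey]; positivity
    have hmono : 2 * (2/(2*s-1)) ≤ 2 * (Real.log s - Real.log (s-1)) := by linarith
    linarith

noncomputable def bern (M : ℕ) (f : ℕ → ℝ) (q : ℝ) : ℝ :=
  ∑ z ∈ Finset.range (M+1), binPMF M q z * f z

lemma nat_succ_mul_choose (M z : ℕ) (hM : 1 ≤ M) :
    M * (M-1).choose z = M.choose (z+1) * (z+1) := by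
  obtain ⟨M', rfl⟩ : ∃ M', M = M'+1 := ⟨M-1, by omega⟩
  simpa using Nat.add_one_mul_choose_eq M' z

lemma nat_sub_mul_choose (M z : ℕ) (hz : z < M) :
    (M - z) * M.choose z = M * (M-1).choose z := by
  have h1 : M.choose (M - z) = M.choose z := Nat.choose_symm (le_of_lt hz)
  obtain ⟨k, hk⟩ : ∃ k, M - z = k + 1 := ⟨M - z - 1, by omega⟩
  have h2 : M * (M-1).choose k = M.choose (k+1) * (k+1) := nat_succ_mul_choose M k (by omega)
  have h3 : (M-1).choose k = (M-1).choose z := by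
    have : (M-1) - k = z := by omega
    rw [← this, Nat.choose_symm (by omega)]
  calc (M - z) * M.choose z = (k+1) * M.choose (M-z) := by rw [h1, hk]
    _ = M.choose (k+1) * (k+1) := by rw [hk]; ring
    _ = M * (M-1).choose k := h2.symm
    _ = M * (M-1).choose z := by rw [h3]

lemma bern_hasDerivAt (M : ℕ) (hM : 1 ≤ M) (f : ℕ → ℝ) (q : ℝ) :
    HasDerivAt (fun q => bern M f q)
      ((M:ℝ) * bern (M-1) (fun z => f (z+1) - f z) q) q := by
  have hterm : ∀ z ∈ Finset.range (M+1), HasDerivAt (fun q : ℝ => binPMF M q z * f z)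
      (((M.choose z : ℝ) * ((z:ℝ) * q^(z-1)) * (1-q)^(M-z)
        - (M.choose z : ℝ) * q^z * (((M-z : ℕ):ℝ) * (1-q)^(M-z-1))) * f z) q := by
    intro z _
    have h1 : HasDerivAt (fun q : ℝ => q^z) ((z:ℝ) * q^(z-1)) q := hasDerivAt_pow z q
    have h2 : HasDerivAt (fun q : ℝ => (1-q)^(M-z))
        (((M-z:ℕ):ℝ) * (1-q)^(M-z-1) * (-1)) q := by
      exact (((hasDerivAt_id q).const_sub 1)).pow (M-z)
    have h3 := ((h1.const_mul ((M.choose z : ℝ))).fun_mul h2).mul_const (f z)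
    convert! h3 using 1
    ring
  have hsum := HasDerivAt.fun_sum hterm
  convert! hsum using 1
  have split : ∀ z ∈ Finset.range (M+1),
      ((M.choose z : ℝ) * ((z:ℝ) * q^(z-1)) * (1-q)^(M-z)
        - (M.choose z : ℝ) * q^z * (((M-z : ℕ):ℝ) * (1-q)^(M-z-1))) * f z
      = ((M.choose z : ℝ) * (z:ℝ) * q^(z-1) * (1-q)^(M-z)) * f z
        - ((M.choose z : ℝ) * (((M-z : ℕ):ℝ)) * q^z * (1-q)^(M-z-1)) * f z := by
    intro z _; ring
  have e1 : ∑ z ∈ Finset.range (M+1), ((M.choose z : ℝ) * (z:ℝ) * q^(z-1) * (1-q)^(M-z)) * f z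
      = ∑ z ∈ Finset.range M, ((M:ℝ) * ((M-1).choose z : ℝ) * q^z * (1-q)^(M-1-z)) * f (z+1) := by
    rw [Finset.sum_range_succ']
    simp only [Nat.cast_zero, mul_zero, zero_mul, mul_zero, add_zero]
    apply Finset.sum_congr rfl
    intro z hz
    simp only [Finset.mem_range] at hz
    have hc : (M.choose (z+1) * (z+1) : ℕ) = (M * (M-1).choose z : ℕ) :=
      (nat_succ_mul_choose M z hM).symm
    have hcast : (M.choose (z+1) : ℝ) * ((z+1:ℕ):ℝ) = (M:ℝ) * ((M-1).choose z : ℝ) := by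
      exact_mod_cast congrArg (Nat.cast (R := ℝ)) hc
    have hexp : M - (z+1) = M - 1 - z := by omega
    have hexp2 : (z+1) - 1 = z := by omega
    rw [hexp, hexp2]
    linear_combination (q^z * (1-q)^(M-1-z) * f (z+1)) * hcast
  have e2 : ∑ z ∈ Finset.range (M+1), ((M.choose z : ℝ) * (((M-z : ℕ):ℝ)) * q^z * (1-q)^(M-z-1)) * f z
      = ∑ z ∈ Finset.range M, ((M:ℝ) * ((M-1).choose z : ℝ) * q^z * (1-q)^(M-1-z)) * f z := by
    rw [Finset.sum_range_succ]
    have : ((M.choose M : ℝ) * (((M-M : ℕ):ℝ)) * q^M * (1-q)^(M-M-1)) * f M = 0 := by simp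
    rw [this, add_zero]
    apply Finset.sum_congr rfl
    intro z hz
    simp only [Finset.mem_range] at hz
    have hc : ((M-z) * M.choose z : ℕ) = (M * (M-1).choose z : ℕ) := nat_sub_mul_choose M z hz
    have hcast : (((M-z:ℕ)):ℝ) * (M.choose z : ℝ) = (M:ℝ) * ((M-1).choose z : ℝ) := by
      exact_mod_cast congrArg (Nat.cast (R := ℝ)) hc
    have hexp : M - z - 1 = M - 1 - z := by omega
    rw [hexp]
    linear_combination (q^z * (1-q)^(M-1-z) * f z) * hcast
  have hM1 : M - 1 + 1 = M := by omega
  symm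
  rw [Finset.sum_congr rfl split, Finset.sum_sub_distrib, e1, e2, ← Finset.sum_sub_distrib]
  unfold bern binPMF
  rw [hM1, Finset.mul_sum]
  apply Finset.sum_congr rfl
  intro z hz
  ring

lemma bern_convexOn (M : ℕ) (hM : 2 ≤ M) (f : ℕ → ℝ)
    (hconv : ∀ z, z + 2 ≤ M → 2 * f (z+1) ≤ f z + f (z+2)) :
    ConvexOn ℝ (Set.Icc 0 1) (bern M f) := by
  have hM1 : 1 ≤ M := by omega
  have hM2 : 1 ≤ M - 1 := by omega
  have hd1 : ∀ q : ℝ, HasDerivAt (fun q => bern M f q)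
      ((M:ℝ) * bern (M-1) (fun z => f (z+1) - f z) q) q := fun q => bern_hasDerivAt M hM1 f q
  have hd2 : ∀ q : ℝ, HasDerivAt (fun q => (M:ℝ) * bern (M-1) (fun z => f (z+1) - f z) q)
      ((M:ℝ) * (((M-1:ℕ):ℝ) * bern (M-1-1) (fun z => (f (z+1+1) - f (z+1)) - (f (z+1) - f z)) q)) q :=
    fun q => (bern_hasDerivAt (M-1) hM2 (fun z => f (z+1) - f z) q).const_mul (M:ℝ)
  apply convexOn_of_hasDerivWithinAt2_nonneg (convex_Icc 0 1)
    (f' := fun q => (M:ℝ) * bern (M-1) (fun z => f (z+1) - f z) q)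
    (f'' := fun q => (M:ℝ) * (((M-1:ℕ):ℝ) * bern (M-1-1) (fun z => (f (z+1+1) - f (z+1)) - (f (z+1) - f z)) q))
  · intro q _
    exact (hd1 q).continuousAt.continuousWithinAt
  · intro q _
    exact (hd1 q).hasDerivWithinAt
  · intro q _
    exact (hd2 q).hasDerivWithinAt
  · intro q hq
    rw [interior_Icc] at hq
    obtain ⟨hq0, hq1⟩ := hq
    apply mul_nonneg (by positivity)
    apply mul_nonneg (by positivity)
    unfold bern
    apply Finset.sum_nonneg
    intro z hz
    simp only [Finset.mem_range] at hz
    apply mul_nonneg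
    · unfold binPMF
      have : (0:ℝ) ≤ 1 - q := by linarith
      positivity
    · have hz2 : z + 2 ≤ M := by omega
      have := hconv z hz2
      show 0 ≤ f (z + 1 + 1) - f (z + 1) - (f (z + 1) - f z)
      have h12 : z + 1 + 1 = z + 2 := by omega
      rw [h12]
      linarith

lemma marginal_lemma {κ : Type*} [Fintype κ] [DecidableEq κ] (S : Finset κ) (f : κ → ℝ)
    (F : ℕ → ℝ) (N : ℕ) :
    ∑ k ∈ Finset.piAntidiag (Finset.univ : Finset κ) N,
      ((Nat.multinomial Finset.univ k : ℝ) * ∏ j, f j ^ k j) * F (∑ j ∈ S, k j)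
      = ∑ s ∈ Finset.range (N+1),
        ((N.choose s : ℝ) * (∑ j ∈ S, f j)^s * (∑ j ∈ Sᶜ, f j)^(N-s)) * F s := by
  set A := ∑ j ∈ S, f j with hA
  set B := ∑ j ∈ Sᶜ, f j with hB
  -- coefficient identity via polynomials
  set Pl : Polynomial ℝ := ∑ k ∈ Finset.piAntidiag (Finset.univ : Finset κ) N,
      Polynomial.monomial (∑ j ∈ S, k j) ((Nat.multinomial Finset.univ k : ℝ) * ∏ j, f j ^ k j)
    with hPl
  set Pr : Polynomial ℝ := ∑ s ∈ Finset.range (N+1),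
      Polynomial.monomial s ((N.choose s : ℝ) * A^s * B^(N-s)) with hPr
  have heval : ∀ u : ℝ, Pl.eval u = Pr.eval u := by
    intro u
    have hL : Pl.eval u = (u * A + B)^N := by
      rw [hPl, Polynomial.eval_finset_sum]
      simp only [Polynomial.eval_monomial]
      have hsp := Finset.sum_pow_eq_sum_piAntidiag (Finset.univ : Finset κ)
        (fun j => if j ∈ S then u * f j else f j) N
      have hsum2 : ∑ j, (if j ∈ S then u * f j else f j) = u * A + B := by
        rw [← Finset.sum_add_sum_compl S]
        congr 1
        · rw [Finset.mul_sum]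
          exact Finset.sum_congr rfl fun j hj => by simp [hj]
        · exact Finset.sum_congr rfl fun j hj => by
            simp only [Finset.mem_compl] at hj; simp [hj]
      rw [hsum2] at hsp
      rw [hsp]
      apply Finset.sum_congr rfl
      intro k hk
      rw [Finset.mem_piAntidiag] at hk
      have hprod : ∏ j, (if j ∈ S then u * f j else f j) ^ k j
          = u ^ (∑ j ∈ S, k j) * ∏ j, f j ^ k j := by
        rw [← Finset.prod_mul_prod_compl S (fun j => (if j ∈ S then u * f j else f j) ^ k j),
            ← Finset.prod_mul_prod_compl S (fun j => f j ^ k j)]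
        have e1 : ∏ j ∈ S, (if j ∈ S then u * f j else f j) ^ k j
            = u ^ (∑ j ∈ S, k j) * ∏ j ∈ S, f j ^ k j := by
          rw [← Finset.prod_pow_eq_pow_sum, ← Finset.prod_mul_distrib]
          exact Finset.prod_congr rfl fun j hj => by rw [if_pos hj, mul_pow]
        have e2 : ∏ j ∈ Sᶜ, (if j ∈ S then u * f j else f j) ^ k j = ∏ j ∈ Sᶜ, f j ^ k j :=
          Finset.prod_congr rfl fun j hj => by rw [if_neg (Finset.mem_compl.1 hj)]
        rw [e1, e2]; ring
      rw [hprod]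
      ring
    have hR : Pr.eval u = (u * A + B)^N := by
      rw [hPr, Polynomial.eval_finset_sum]
      simp only [Polynomial.eval_monomial]
      rw [add_pow]
      apply Finset.sum_congr rfl
      intro s hs
      rw [mul_pow]
      ring
    rw [hL, hR]
  have hPlPr : Pl = Pr := Polynomial.funext heval
  -- extract coefficients
  have hcoeff : ∀ s, s ∈ Finset.range (N+1) →
      (∑ k ∈ (Finset.piAntidiag (Finset.univ : Finset κ) N).filter (fun k => ∑ j ∈ S, k j = s),
        ((Nat.multinomial Finset.univ k : ℝ) * ∏ j, f j ^ k j))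
      = (N.choose s : ℝ) * A^s * B^(N-s) := by
    intro s hs
    have h1 : Pl.coeff s = ∑ k ∈ (Finset.piAntidiag (Finset.univ : Finset κ) N).filter
        (fun k => ∑ j ∈ S, k j = s), ((Nat.multinomial Finset.univ k : ℝ) * ∏ j, f j ^ k j) := by
      rw [hPl, Polynomial.finset_sum_coeff]
      rw [Finset.sum_filter]
      apply Finset.sum_congr rfl
      intro k hk
      rw [Polynomial.coeff_monomial]
    have h2 : Pr.coeff s = (N.choose s : ℝ) * A^s * B^(N-s) := by
      rw [hPr, Polynomial.finset_sum_coeff]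
      rw [Finset.sum_eq_single_of_mem s hs]
      · rw [Polynomial.coeff_monomial, if_pos rfl]
      · intro b _ hb
        rw [Polynomial.coeff_monomial, if_neg hb]
    rw [← h1, hPlPr, h2]
  -- group the sum by the value of ∑_{j ∈ S} k j
  have hmaps : ∀ k ∈ Finset.piAntidiag (Finset.univ : Finset κ) N,
      (∑ j ∈ S, k j) ∈ Finset.range (N+1) := by
    intro k hk
    rw [Finset.mem_piAntidiag] at hk
    rw [Finset.mem_range, Nat.lt_succ_iff, ← hk.1]
    exact Finset.sum_le_sum_of_subset (Finset.subset_univ S)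
  rw [← Finset.sum_fiberwise_of_maps_to hmaps]
  apply Finset.sum_congr rfl
  intro s hs
  rw [← hcoeff s hs, Finset.sum_mul]
  apply Finset.sum_congr rfl
  intro k hk
  rw [Finset.mem_filter] at hk
  rw [hk.2]

lemma sum_suppX_eq {m n N : ℕ} (G : (Fin (m+1) × Fin (n+1) → ℕ) → ℝ) :
    ∑ x ∈ suppX m n N, G (fun k => (x k.1 k.2 : ℕ))
      = ∑ k ∈ Finset.piAntidiag (Finset.univ : Finset (Fin (m+1) × Fin (n+1))) N, G k := by
  refine Finset.sum_bij' (i := fun x _ => fun k : Fin (m+1) × Fin (n+1) => (x k.1 k.2 : ℕ))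
    (j := fun k _ => fun a b => (⟨min (k (a, b)) N, by omega⟩ : Fin (N+1)))
    ?_ ?_ ?_ ?_ ?_
  · intro x hx
    rw [Finset.mem_piAntidiag]
    simp only [suppX, Finset.mem_filter] at hx
    exact ⟨by rw [Fintype.sum_prod_type]; exact hx.2, fun _ _ => Finset.mem_univ _⟩
  · intro k hk
    simp only [suppX, Finset.mem_filter]
    refine ⟨Finset.mem_univ _, ?_⟩
    rw [Finset.mem_piAntidiag] at hk
    have hle : ∀ a b, k (a, b) ≤ N := by
      intro a b
      have h1 : k (a, b) ≤ Finset.univ.sum k :=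
        Finset.single_le_sum (f := k) (fun _ _ => Nat.zero_le _) (Finset.mem_univ (a, b))
      have h2 := hk.1
      omega
    have : ∀ a b, ((⟨min (k (a, b)) N, by omega⟩ : Fin (N+1)) : ℕ) = k (a, b) := by
      intro a b
      simp [Nat.min_eq_left (hle a b)]
    calc ∑ a, ∑ b, ((⟨min (k (a, b)) N, by omega⟩ : Fin (N+1)) : ℕ)
        = ∑ a, ∑ b, k (a, b) := by
          exact Finset.sum_congr rfl fun a _ => Finset.sum_congr rfl fun b _ => this a b
      _ = N := by rw [← Fintype.sum_prod_type]; exact hk.1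
  · intro x hx
    simp only [suppX, Finset.mem_filter] at hx
    funext a b
    apply Fin.ext
    simp only []
    have : (x a b : ℕ) ≤ N := by
      have h1 : (x a b : ℕ) ≤ ∑ i, ∑ j, (x i j : ℕ) := by
        calc (x a b : ℕ) ≤ ∑ j, (x a j : ℕ) :=
              Finset.single_le_sum (f := fun j => (x a j : ℕ))
                (fun _ _ => Nat.zero_le _) (Finset.mem_univ b)
          _ ≤ ∑ i, ∑ j, (x i j : ℕ) :=
              Finset.single_le_sum (f := fun i => ∑ j, (x i j : ℕ))
                (fun _ _ => Nat.zero_le _) (Finset.mem_univ a)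
      omega
    simp [Nat.min_eq_left this]
  · intro k hk
    rw [Finset.mem_piAntidiag] at hk
    funext ab
    have h1 : k ab ≤ Finset.univ.sum k :=
      Finset.single_le_sum (f := k) (fun _ _ => Nat.zero_le _) (Finset.mem_univ ab)
    have h2 := hk.1
    have hle : k ab ≤ N := by omega
    simp [Nat.min_eq_left hle]
  · intro x hx
    rfl

lemma sum_suppY_one {m : ℕ} (G : (Fin (m+1) → Fin 2) → ℝ) :
    ∑ y ∈ suppY m 1, G y = ∑ k : Fin (m+1), G (fun i => if i = k then 1 else 0) := by
  have himg : suppY m 1 = Finset.image (fun k => fun i => if i = k then (1 : Fin 2) else 0)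
      (Finset.univ : Finset (Fin (m+1))) := by
    ext y
    simp only [suppY, Finset.mem_filter, Finset.mem_image, Finset.mem_univ, true_and]
    constructor
    · intro hy
      have hne : ∃ k, (y k : ℕ) ≠ 0 := by
        by_contra h
        push_neg at h
        rw [Finset.sum_eq_zero (fun i _ => h i)] at hy
        omega
      obtain ⟨k, hk⟩ := hne
      have hk1 : (y k : ℕ) = 1 := by have := (y k).isLt; omega
      refine ⟨k, ?_⟩
      have hrest : ∑ i ∈ Finset.univ.erase k, (y i : ℕ) = 0 := by
        have h := Finset.sum_erase_add Finset.univ (fun i => (y i : ℕ)) (Finset.mem_univ k)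
        omega
      have hy0 : ∀ i, i ≠ k → (y i : ℕ) = 0 := by
        intro i hik
        have hmem : i ∈ Finset.univ.erase k := Finset.mem_erase.2 ⟨hik, Finset.mem_univ _⟩
        exact Nat.eq_zero_of_le_zero (le_trans (Finset.single_le_sum
          (f := fun i => (y i : ℕ)) (fun _ _ => Nat.zero_le _) hmem) (le_of_eq hrest))
      funext i
      by_cases hik : i = k
      · subst hik
        simp only [if_pos rfl]
        exact (Fin.ext (by simpa using hk1)).symm
      · simp only [if_neg hik]
        exact (Fin.ext (by simpa using hy0 i hik)).symm
    · rintro ⟨k, rfl⟩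
      rw [Finset.sum_eq_single_of_mem k (Finset.mem_univ k)]
      · simp
      · intro i _ hik
        simp [hik]
  rw [himg, Finset.sum_image]
  intro k _ k' _ h
  have hc := congrFun h k
  simp only [if_pos rfl] at hc
  by_cases hkk : k = k'
  · exact hkk
  · rw [if_neg hkk] at hc
    exact absurd hc (by decide)

lemma multinomial_delta {m : ℕ} (k : Fin (m+1)) :
    Nat.multinomial Finset.univ (fun i : Fin (m+1) => if i = k then 1 else 0) = 1 := by
  have hs : ∑ i : Fin (m+1), (if i = k then 1 else 0 : ℕ) = 1 := by simp
  have hp : ∏ i : Fin (m+1), Nat.factorial (if i = k then 1 else 0) = 1 := by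
    apply Finset.prod_eq_one
    intro i _
    split_ifs <;> rfl
  unfold Nat.multinomial
  rw [hs, hp]
  rfl

lemma loss_diff {m n N : ℕ} (p : Fin (m+1) → Fin (n+1) → ℝ) (hp : ∀ i j, 0 < p i j)
    (x : Fin (m+1) → Fin (n+1) → Fin (N+1)) (y : Fin (m+1) → Fin 2) :
    entropyLoss (phat x y) p - entropyLoss (ptilde x) p
      = ∑ i, (∑ j, p i j) *
        ((Real.log ((N:ℝ) + 1 + (1 + m) * (1 + n) / 2)
            - Real.log ((N:ℝ) + (1 + m) * (1 + n) / 2))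
          + (Real.log (((∑ j', (x i j' : ℕ) : ℕ) : ℝ) + (1 + n) / 2)
            - Real.log (((∑ j', (x i j' : ℕ) : ℕ) : ℝ) + ((y i : ℕ) : ℝ) + (1 + n) / 2))) := by
  unfold entropyLoss
  rw [← Finset.sum_sub_distrib]
  apply Finset.sum_congr rfl
  intro i _
  rw [← Finset.sum_sub_distrib, Finset.sum_mul]
  apply Finset.sum_congr rfl
  intro j _
  have hpij := hp i j
  have hxr : (0:ℝ) < (x i j : ℝ) + 1/2 := by positivity
  have hsxr : (0:ℝ) ≤ (((∑ j', (x i j' : ℕ)) : ℕ) : ℝ) := Nat.cast_nonneg _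
  have hyr : (0:ℝ) ≤ ((y i : ℕ) : ℝ) := Nat.cast_nonneg _
  have ha : (0:ℝ) < (1 + (n:ℝ)) / 2 := by positivity
  have hc : (0:ℝ) < (1 + (m:ℝ)) * (1 + (n:ℝ)) / 2 := by positivity
  have hd1 : (0:ℝ) < (N:ℝ) + (1 + m) * (1 + n) / 2 := by positivity
  have hd2 : (0:ℝ) < (N:ℝ) + 1 + (1 + m) * (1 + n) / 2 := by positivity
  have hs1 : (0:ℝ) < (((∑ j', (x i j' : ℕ)) : ℕ) : ℝ) + (1 + n) / 2 := by positivity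
  have hs2 : (0:ℝ) < (((∑ j', (x i j' : ℕ)) : ℕ) : ℝ) + ((y i : ℕ) : ℝ) + (1 + n) / 2 := by
    positivity
  have hphat : phat x y i j
      = ((((∑ j', (x i j' : ℕ)) : ℕ) : ℝ) + ((y i : ℕ) : ℝ) + (1 + n) / 2) /
          ((N:ℝ) + 1 + (1 + m) * (1 + n) / 2) *
        (((x i j : ℝ) + 1/2) / ((((∑ j', (x i j' : ℕ)) : ℕ) : ℝ) + (1 + n) / 2)) := by
    simp [phat]
  have hptilde : ptilde x i j = ((x i j : ℝ) + 1/2) / ((N:ℝ) + (1 + m) * (1 + n) / 2) := rfl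
  rw [hphat, hptilde]
  rw [div_mul_div_comm]
  rw [Real.log_div (ne_of_gt hpij) (by positivity)]
  rw [Real.log_div (ne_of_gt hpij) (by positivity)]
  rw [Real.log_div (by positivity) (by positivity)]
  rw [Real.log_div (ne_of_gt hxr) (ne_of_gt hd1)]
  rw [Real.log_mul (by positivity) (ne_of_gt hxr)]
  rw [Real.log_mul (ne_of_gt hd2) (ne_of_gt hs1)]
  ring

lemma wY_delta {m n : ℕ} (p : Fin (m+1) → Fin (n+1) → ℝ) (k : Fin (m+1)) :
    wY (N' := 1) p (fun i => if i = k then 1 else 0) = ∑ j, p k j := by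
  unfold wY
  have hcast : (fun i => (((if i = k then (1 : Fin 2) else 0) : Fin 2) : ℕ))
      = fun i : Fin (m+1) => if i = k then 1 else 0 := by
    funext i; split_ifs <;> rfl
  rw [hcast, multinomial_delta]
  rw [Finset.prod_congr rfl (fun i (_ : i ∈ Finset.univ) => by
    rw [show (((if i = k then (1 : Fin 2) else 0) : Fin 2) : ℕ) = if i = k then 1 else 0
      from by split_ifs <;> rfl])]
  rw [Finset.prod_eq_single_of_mem k (Finset.mem_univ k)]
  · simp
  · intro i _ hik
    simp [hik]

lemma riskDiff_eq (m n N : ℕ) (p : Fin (m+1) → Fin (n+1) → ℝ) (hp : ∀ i j, 0 < p i j)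
    (hsum : ∑ i, ∑ j, p i j = 1) :
    riskDiff m n p N 1 = (Real.log ((N:ℝ) + 1 + (1 + m) * (1 + n) / 2)
        - Real.log ((N:ℝ) + (1 + m) * (1 + n) / 2))
      + ∑ i, (∑ j, p i j)^2 * (∑ s ∈ Finset.range (N+1), binPMF N (∑ j, p i j) s *
          (Real.log ((s:ℝ) + (1 + n) / 2) - Real.log ((s:ℝ) + 1 + (1 + n) / 2))) := by
  set K := Real.log ((N:ℝ) + 1 + (1 + m) * (1 + n) / 2)
      - Real.log ((N:ℝ) + (1 + m) * (1 + n) / 2) with hK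
  set P : Fin (m+1) → ℝ := fun i => ∑ j, p i j with hPdef
  have hPsum : ∑ i, P i = 1 := hsum
  set GG : ℕ → ℝ := fun s => Real.log ((s:ℝ) + (1 + n) / 2)
      - Real.log ((s:ℝ) + 1 + (1 + n) / 2) with hGG
  -- Step 1: inner sum over y
  have step1 : ∀ x : Fin (m+1) → Fin (n+1) → Fin (N+1),
      ∑ y ∈ suppY m 1, wX p x * wY p y * (entropyLoss (phat x y) p - entropyLoss (ptilde x) p)
      = wX p x * (K + ∑ k, (P k)^2 * GG (∑ j', (x k j' : ℕ))) := by
    intro x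
    rw [sum_suppY_one (fun y => wX p x * wY p y *
      (entropyLoss (phat x y) p - entropyLoss (ptilde x) p))]
    have hterm : ∀ k : Fin (m+1),
        wX p x * wY p ((fun i => if i = k then 1 else 0) : Fin (m+1) → Fin 2) *
          (entropyLoss (phat x ((fun i => if i = k then 1 else 0) : Fin (m+1) → Fin 2)) p
            - entropyLoss (ptilde x) p)
        = wX p x * (P k * (K + P k * GG (∑ j', (x k j' : ℕ)))) := by
      intro k
      rw [wY_delta, loss_diff p hp x]
      have hD : ∑ i, (∑ j, p i j) *
          ((Real.log ((N:ℝ) + 1 + (1 + m) * (1 + n) / 2)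
              - Real.log ((N:ℝ) + (1 + m) * (1 + n) / 2))
            + (Real.log (((∑ j', (x i j' : ℕ) : ℕ) : ℝ) + (1 + n) / 2)
              - Real.log (((∑ j', (x i j' : ℕ) : ℕ) : ℝ) +
                (((((if i = k then (1:Fin 2) else 0)) : Fin 2) : ℕ) : ℝ) + (1 + n) / 2)))
          = K + P k * GG (∑ j', (x k j' : ℕ)) := by
        have hsplit : ∀ i : Fin (m+1), (∑ j, p i j) *
            ((Real.log ((N:ℝ) + 1 + (1 + m) * (1 + n) / 2)
                - Real.log ((N:ℝ) + (1 + m) * (1 + n) / 2))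
              + (Real.log (((∑ j', (x i j' : ℕ) : ℕ) : ℝ) + (1 + n) / 2)
                - Real.log (((∑ j', (x i j' : ℕ) : ℕ) : ℝ) +
                  (((((if i = k then (1:Fin 2) else 0)) : Fin 2) : ℕ) : ℝ) + (1 + n) / 2)))
            = P i * K + (if i = k then P k * GG (∑ j', (x k j' : ℕ)) else 0) := by
          intro i
          by_cases hik : i = k
          · subst hik
            rw [if_pos rfl, if_pos rfl]
            show P i * (K + (Real.log _ - Real.log (_ + ((((1:Fin 2) : ℕ)):ℝ) + _))) = _
            have : ((((1:Fin 2) : ℕ)):ℝ) = 1 := by norm_num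
            rw [this, hGG]
            push_cast
            ring
          · rw [if_neg hik, if_neg hik]
            show P i * (K + (Real.log _ - Real.log (_ + ((((0:Fin 2) : ℕ)):ℝ) + _))) = _
            have : ((((0:Fin 2) : ℕ)):ℝ) = 0 := by norm_num
            rw [this]
            simp only [add_zero, sub_self]
            try ring
        rw [Finset.sum_congr rfl (fun i _ => hsplit i)]
        rw [Finset.sum_add_distrib, ← Finset.sum_mul, hPsum, one_mul]
        rw [Finset.sum_ite_eq' Finset.univ k (fun _ => P k * GG (∑ j', (x k j' : ℕ)))]
        simp [hK]
      rw [hD]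
      ring
    rw [Finset.sum_congr rfl (fun k _ => hterm k)]
    rw [← Finset.mul_sum]
    congr 1
    have : ∀ k : Fin (m+1), P k * (K + P k * GG (∑ j', (x k j' : ℕ)))
        = P k * K + (P k)^2 * GG (∑ j', (x k j' : ℕ)) := fun k => by ring
    rw [Finset.sum_congr rfl (fun k _ => this k)]
    rw [Finset.sum_add_distrib, ← Finset.sum_mul, hPsum, one_mul]
  unfold riskDiff
  rw [Finset.sum_congr rfl (fun x _ => step1 x)]
  -- Step 2: distribute
  have expand : ∀ x : Fin (m+1) → Fin (n+1) → Fin (N+1),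
      wX p x * (K + ∑ k, (P k)^2 * GG (∑ j', (x k j' : ℕ)))
      = wX p x * K + ∑ k, (P k)^2 * (wX p x * GG (∑ j', (x k j' : ℕ))) := by
    intro x
    rw [mul_add, Finset.mul_sum]
    congr 1
    exact Finset.sum_congr rfl (fun k _ => by ring)
  rw [Finset.sum_congr rfl (fun x _ => expand x), Finset.sum_add_distrib, ← Finset.sum_mul]
  rw [Finset.sum_comm]
  -- Step 3: total mass one
  have huncurry : ∀ x : Fin (m+1) → Fin (n+1) → Fin (N+1),
      wX p x = (Nat.multinomial Finset.univ (fun k : Fin (m+1) × Fin (n+1) => (x k.1 k.2 : ℕ)) : ℝ)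
        * ∏ ab : Fin (m+1) × Fin (n+1), p ab.1 ab.2 ^ ((fun k : Fin (m+1) × Fin (n+1) => (x k.1 k.2 : ℕ)) ab) := by
    intro x
    unfold wX
    rw [Fintype.prod_prod_type]
  have hmass : ∑ x ∈ suppX m n N, wX p x = 1 := by
    rw [Finset.sum_congr rfl (fun x _ => huncurry x)]
    rw [sum_suppX_eq (fun k => (Nat.multinomial Finset.univ k : ℝ)
      * ∏ ab : Fin (m+1) × Fin (n+1), p ab.1 ab.2 ^ k ab)]
    have := (Finset.sum_pow_eq_sum_piAntidiag (Finset.univ : Finset (Fin (m+1) × Fin (n+1)))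
      (fun ab => p ab.1 ab.2) N).symm
    rw [this]
    rw [Fintype.sum_prod_type]
    rw [hsum, one_pow]
  rw [hmass, one_mul]
  congr 1
  -- Step 4: marginals
  apply Finset.sum_congr rfl
  intro k₀ _
  rw [← Finset.mul_sum]
  simp only [hPdef]
  congr 1
  have hrow : ∀ x : Fin (m+1) → Fin (n+1) → Fin (N+1),
      wX p x * GG (∑ j', (x k₀ j' : ℕ))
      = ((Nat.multinomial Finset.univ (fun k : Fin (m+1) × Fin (n+1) => (x k.1 k.2 : ℕ)) : ℝ)
        * ∏ ab : Fin (m+1) × Fin (n+1), p ab.1 ab.2 ^ ((fun k : Fin (m+1) × Fin (n+1) => (x k.1 k.2 : ℕ)) ab))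
        * GG (∑ ab ∈ ({k₀} ×ˢ Finset.univ : Finset (Fin (m+1) × Fin (n+1))),
            ((fun k : Fin (m+1) × Fin (n+1) => (x k.1 k.2 : ℕ)) ab)) := by
    intro x
    rw [← huncurry x]
    congr 2
    rw [Finset.sum_product, Finset.sum_singleton]
  rw [Finset.sum_congr rfl (fun x _ => hrow x)]
  rw [sum_suppX_eq (fun k => ((Nat.multinomial Finset.univ k : ℝ)
    * ∏ ab : Fin (m+1) × Fin (n+1), p ab.1 ab.2 ^ k ab)
    * GG (∑ ab ∈ ({k₀} ×ˢ Finset.univ : Finset (Fin (m+1) × Fin (n+1))), k ab))]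
  rw [marginal_lemma ({k₀} ×ˢ Finset.univ) (fun ab => p ab.1 ab.2) GG N]
  have hA : ∑ ab ∈ ({k₀} ×ˢ Finset.univ : Finset (Fin (m+1) × Fin (n+1))), p ab.1 ab.2
      = P k₀ := by
    rw [Finset.sum_product, Finset.sum_singleton]
  have hB : ∑ ab ∈ ({k₀} ×ˢ Finset.univ : Finset (Fin (m+1) × Fin (n+1)))ᶜ, p ab.1 ab.2
      = 1 - P k₀ := by
    have := Finset.sum_add_sum_compl ({k₀} ×ˢ Finset.univ : Finset (Fin (m+1) × Fin (n+1)))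
      (fun ab => p ab.1 ab.2)
    rw [hA] at this
    rw [Fintype.sum_prod_type, hsum] at this
    linarith
  rw [hA, hB]
  apply Finset.sum_congr rfl
  intro s _
  rw [binPMF]

lemma choose2 (N s : ℕ) : ((N:ℝ)+2) * (((N:ℝ)+1) * (N.choose s : ℝ))
    = ((N+2).choose (s+2) : ℝ) * (((s:ℝ)+2) * ((s:ℝ)+1)) := by
  have h1 := Nat.add_one_mul_choose_eq (N+1) (s+1)
  have h2 := Nat.add_one_mul_choose_eq N s
  have h1c : ((N:ℝ)+2) * ((N+1).choose (s+1) : ℝ) = ((N+2).choose (s+2) : ℝ) * ((s:ℝ)+2) := by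
    exact_mod_cast congrArg (Nat.cast (R := ℝ)) h1
  have h2c : ((N:ℝ)+1) * ((N).choose s : ℝ) = ((N+1).choose (s+1) : ℝ) * ((s:ℝ)+1) := by
    exact_mod_cast congrArg (Nat.cast (R := ℝ)) h2
  linear_combination ((s:ℝ)+1) * h1c + ((N:ℝ)+2) * h2c

lemma key_reindex (N : ℕ) (a q : ℝ) :
    bern (N+2) (fun z => hAux (a-1) (z:ℝ)) q
      = -(((N:ℝ)+2) * (((N:ℝ)+1) * (q^2 * ∑ s ∈ Finset.range (N+1), binPMF N q s *
          (Real.log ((s:ℝ) + a) - Real.log ((s:ℝ) + 1 + a))))) := by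
  unfold bern
  have h3 : N + 2 + 1 = (N + 1) + 1 + 1 := by omega
  rw [h3, Finset.sum_range_succ', Finset.sum_range_succ']
  have hz0 : binPMF (N+2) q 0 * hAux (a-1) ((0:ℕ):ℝ) = 0 := by
    norm_num [hAux]
  have hz1 : binPMF (N+2) q (0+1) * hAux (a-1) ((0+1:ℕ):ℝ) = 0 := by
    norm_num [hAux]
  rw [hz0, hz1, add_zero, add_zero]
  have hR : -(((N:ℝ)+2) * (((N:ℝ)+1) * (q^2 * ∑ s ∈ Finset.range (N+1), binPMF N q s *
        (Real.log ((s:ℝ) + a) - Real.log ((s:ℝ) + 1 + a)))))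
      = ∑ s ∈ Finset.range (N+1), -(((N:ℝ)+2) * (((N:ℝ)+1) * (q^2 * (binPMF N q s *
        (Real.log ((s:ℝ) + a) - Real.log ((s:ℝ) + 1 + a)))))) := by
    rw [Finset.mul_sum, Finset.mul_sum, Finset.mul_sum, ← Finset.sum_neg_distrib]
  rw [hR]
  apply Finset.sum_congr rfl
  intro s hs
  rw [Finset.mem_range] at hs
  have hs2 : s + 1 + 1 = s + 2 := by omega
  rw [hs2]
  have harg1 : ((s+2:ℕ):ℝ) + (a-1) = (s:ℝ) + 1 + a := by push_cast; ring
  have harg2 : ((s+2:ℕ):ℝ) + (a-1) - 1 = (s:ℝ) + a := by push_cast; ring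
  have hh : hAux (a-1) ((s+2:ℕ):ℝ)
      = ((((s+2:ℕ):ℝ))^2 - ((s+2:ℕ):ℝ)) *
        (Real.log ((s:ℝ) + 1 + a) - Real.log ((s:ℝ) + a)) := by
    rw [hAux, harg2, harg1]
  show binPMF (N+2) q (s+2) * hAux (a-1) ((s+2:ℕ):ℝ)
      = -(((N:ℝ)+2) * (((N:ℝ)+1) * (q^2 * (binPMF N q s *
        (Real.log ((s:ℝ) + a) - Real.log ((s:ℝ) + 1 + a))))))
  rw [hh]
  unfold binPMF
  have hexp : N + 2 - (s + 2) = N - s := by omega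
  rw [hexp]
  have hcast : (((s+2:ℕ)):ℝ) = (s:ℝ) + 2 := by push_cast; ring
  rw [hcast]
  have := choose2 N s
  set L1 := Real.log ((s:ℝ) + a)
  set L2 := Real.log ((s:ℝ) + 1 + a)
  linear_combination (-(q^(s+2) * (1-q)^(N-s) * (L2 - L1))) * this

theorem risk_difference_maximized_at_uniform (m n N : ℕ)
    (hm : 1 ≤ m) (hn : 3 ≤ n) (hN : 1 ≤ N)
    (p : Fin (m+1) → Fin (n+1) → ℝ) (hp : ∀ i j, 0 < p i j)
    (hsum : ∑ i, ∑ j, p i j = 1) :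
    riskDiff m n p N 1 ≤
      riskDiff m n (fun _ _ => 1 / ((1 + (m : ℝ)) * (1 + (n : ℝ)))) N 1 := by
  have hm1 : (0:ℝ) < 1 + (m:ℝ) := by positivity
  have hn1 : (0:ℝ) < 1 + (n:ℝ) := by positivity
  have hnr : (3:ℝ) ≤ (n:ℝ) := by exact_mod_cast hn
  set a : ℝ := (1 + (n:ℝ)) / 2 with ha_def
  have ha : 2 ≤ a := by rw [ha_def]; linarith
  set HH : ℕ → ℝ := fun z => hAux (a-1) (z:ℝ) with hHH
  set D : ℝ := ((N:ℝ)+2) * ((N:ℝ)+1) with hD_def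
  have hD : (0:ℝ) < D := by rw [hD_def]; positivity
  -- uniform vector facts
  have hpu : ∀ (i : Fin (m+1)) (j : Fin (n+1)),
      (0:ℝ) < (fun _ _ => 1 / ((1 + (m : ℝ)) * (1 + (n : ℝ)))) i j := by
    intro i j; positivity
  have hPu : (∑ _j : Fin (n+1), (1:ℝ) / ((1 + (m:ℝ)) * (1 + (n:ℝ)))) = 1 / (1 + (m:ℝ)) := by
    rw [Finset.sum_const, Finset.card_univ, Fintype.card_fin, nsmul_eq_mul]
    push_cast
    field_simp
    ring
  have hpusum : ∑ i : Fin (m+1), ∑ j : Fin (n+1),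
      (fun (_ : Fin (m+1)) (_ : Fin (n+1)) => 1 / ((1 + (m : ℝ)) * (1 + (n : ℝ)))) i j = 1 := by
    simp only []
    rw [Finset.sum_congr rfl (fun i _ => hPu)]
    rw [Finset.sum_const, Finset.card_univ, Fintype.card_fin, nsmul_eq_mul]
    push_cast
    field_simp
    ring
  -- rewrite both risk differences
  rw [riskDiff_eq m n N p hp hsum]
  rw [riskDiff_eq m n N _ hpu hpusum]
  apply add_le_add_right
  -- identify the summands via the Bernstein form
  have hq2 : ∀ q : ℝ, q^2 * (∑ s ∈ Finset.range (N+1), binPMF N q s *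
      (Real.log ((s:ℝ) + (1 + n) / 2) - Real.log ((s:ℝ) + 1 + (1 + n) / 2)))
      = -(bern (N+2) HH q) / D := by
    intro q
    have hk := key_reindex N a q
    rw [eq_div_iff (ne_of_gt hD)]
    rw [hD_def]
    rw [hHH] at *
    have harg : ∀ s : ℕ, Real.log ((s:ℝ) + (1 + (n:ℝ)) / 2) = Real.log ((s:ℝ) + a) := by
      intro s; rw [ha_def]
    have harg2 : ∀ s : ℕ, Real.log ((s:ℝ) + 1 + (1 + (n:ℝ)) / 2) = Real.log ((s:ℝ) + 1 + a) := by
      intro s; rw [ha_def]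
    simp only [harg, harg2]
    linarith [hk]
  -- convexity input: discrete convexity of HH
  have hdisc : ∀ z : ℕ, z + 2 ≤ N + 2 → 2 * HH (z+1) ≤ HH z + HH (z+2) := by
    intro z _
    rcases Nat.eq_zero_or_pos z with rfl | hz
    · have h0 : HH 0 = 0 := by norm_num [hHH, hAux]
      have h1 : HH 1 = 0 := by norm_num [hHH, hAux]
      have h2 : 0 ≤ HH 2 := by
        rw [hHH]
        show (0:ℝ) ≤ hAux (a-1) ((2:ℕ):ℝ)
        rw [hAux]
        have : ((2:ℕ):ℝ) = 2 := by norm_num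
        rw [this]
        apply mul_nonneg (by norm_num)
        rw [sub_nonneg]
        apply Real.log_le_log (by linarith)
        linarith
      rw [h0, h1]
      linarith
    · have hcx := hAux_convexOn (c := a - 1) (by linarith)
      have hx : ((z:ℕ):ℝ) ∈ Set.Ici (1:ℝ) := by
        simp only [Set.mem_Ici]
        exact_mod_cast hz
      have hy : (((z+2:ℕ)):ℝ) ∈ Set.Ici (1:ℝ) := by
        simp only [Set.mem_Ici]
        push_cast
        linarith [Nat.cast_nonneg (α := ℝ) z]
      have hcomb := hcx.2 hx hy (by norm_num : (0:ℝ) ≤ 1/2) (by norm_num : (0:ℝ) ≤ 1/2)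
        (by norm_num)
      have hmid : (1/2:ℝ) • ((z:ℕ):ℝ) + (1/2:ℝ) • (((z+2:ℕ)):ℝ) = (((z+1:ℕ)):ℝ) := by
        simp only [smul_eq_mul]
        push_cast
        ring
      rw [hmid] at hcomb
      simp only [smul_eq_mul] at hcomb
      rw [hHH]
      simp only []
      linarith [hcomb]
  have hconvOn := bern_convexOn (N+2) (by omega) HH hdisc
  -- bounds on the marginals P i
  set P : Fin (m+1) → ℝ := fun i => ∑ j, p i j with hP_def
  have hPpos : ∀ i, 0 < P i := fun i => Finset.sum_pos (fun j _ => hp i j) ⟨0, Finset.mem_univ 0⟩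
  have hPsum : ∑ i, P i = 1 := hsum
  have hPle : ∀ i, P i ≤ 1 := by
    intro i
    rw [← hPsum]
    exact Finset.single_le_sum (f := P) (fun i _ => le_of_lt (hPpos i)) (Finset.mem_univ i)
  -- Jensen
  have hw : ∑ _i : Fin (m+1), (1 + (m:ℝ))⁻¹ = 1 := by
    rw [Finset.sum_const, Finset.card_univ, Fintype.card_fin, nsmul_eq_mul]
    push_cast
    field_simp
    ring
  have hjensen := hconvOn.map_sum_le (t := Finset.univ) (w := fun _ => (1 + (m:ℝ))⁻¹)
    (p := fun i => P i) (fun _ _ => by positivity) hw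
    (fun i _ => ⟨le_of_lt (hPpos i), hPle i⟩)
  simp only [smul_eq_mul] at hjensen
  have hmean : ∑ i : Fin (m+1), (1 + (m:ℝ))⁻¹ * P i = 1 / (1 + (m:ℝ)) := by
    rw [← Finset.mul_sum, hPsum]
    rw [one_div]
    ring
  rw [hmean] at hjensen
  -- conclude
  calc ∑ i, (P i)^2 * (∑ s ∈ Finset.range (N+1), binPMF N (P i) s *
        (Real.log ((s:ℝ) + (1 + n) / 2) - Real.log ((s:ℝ) + 1 + (1 + n) / 2)))
      = ∑ i, -(bern (N+2) HH (P i)) / D := by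
        exact Finset.sum_congr rfl (fun i _ => hq2 (P i))
    _ ≤ ∑ _i : Fin (m+1), -(bern (N+2) HH (1 / (1 + (m:ℝ)))) / D := by
        have hineq : (1 + (m:ℝ)) * bern (N+2) HH (1 / (1 + (m:ℝ))) ≤ ∑ i, bern (N+2) HH (P i) := by
          have h2 : ∑ i : Fin (m+1), (1 + (m:ℝ))⁻¹ * bern (N+2) HH (P i)
              = (1 + (m:ℝ))⁻¹ * ∑ i, bern (N+2) HH (P i) := by
            rw [Finset.mul_sum]
          rw [h2] at hjensen
          calc (1 + (m:ℝ)) * bern (N+2) HH (1 / (1 + (m:ℝ)))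
              ≤ (1 + (m:ℝ)) * ((1 + (m:ℝ))⁻¹ * ∑ i, bern (N+2) HH (P i)) := by
                apply mul_le_mul_of_nonneg_left hjensen (le_of_lt hm1)
            _ = ∑ i, bern (N+2) HH (P i) := by
                field_simp
        have hL : ∑ i : Fin (m+1), -bern (N+2) HH (P i) / D
            = -(∑ i, bern (N+2) HH (P i)) / D := by
          rw [← Finset.sum_div, ← Finset.sum_neg_distrib]
        have hRconst : ∑ _i : Fin (m+1), -bern (N+2) HH (1 / (1 + (m:ℝ))) / D
            = -((1+(m:ℝ)) * bern (N+2) HH (1 / (1 + (m:ℝ)))) / D := by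
          rw [Finset.sum_const, Finset.card_univ, Fintype.card_fin, nsmul_eq_mul]
          push_cast
          ring
        rw [hL, hRconst]
        have hnum : -(∑ i, bern (N+2) HH (P i))
            ≤ -((1+(m:ℝ)) * bern (N+2) HH (1 / (1 + (m:ℝ)))) := by linarith
        exact (div_le_div_iff_of_pos_right hD).mpr hnum
    _ = ∑ i : Fin (m+1), (∑ j, (fun (_ : Fin (m+1)) (_ : Fin (n+1)) =>
          1 / ((1 + (m : ℝ)) * (1 + (n : ℝ)))) i j)^2 *
        (∑ s ∈ Finset.range (N+1), binPMF N (∑ j, (fun (_ : Fin (m+1)) (_ : Fin (n+1)) =>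
          1 / ((1 + (m : ℝ)) * (1 + (n : ℝ)))) i j) s *
          (Real.log ((s:ℝ) + (1 + n) / 2) - Real.log ((s:ℝ) + 1 + (1 + n) / 2))) := by
        apply Finset.sum_congr rfl
        intro i _
        simp only []
        rw [hPu]
        exact (hq2 (1 / (1 + (m:ℝ)))).symm
end

section
/- Let N be a positive integer and let h : ℤ → ℝ be any function with h(x) = 0 for x < 0. Define F(p) = Σ_{x=0}^N C(N,x) p^x (1−p)^{N−x} h(x) for p ∈ (0,1). Then for every p ∈ (0,1), F'(p) = Σ_{x=0}^N C(N,x) p^x (1−p)^{N−x} (x − Np) h(x) / (p(1−p)) = (1/p) Σ_{x=0}^N C(N,x) p^x (1−p)^{N−x} · x · (h(x) − h(x−1)). -/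
open Finset

lemma binPMF_deriv (N x : ℕ) (hx : x ≤ N) {p : ℝ} (hp0 : p ≠ 0) (hp1 : (1:ℝ) - p ≠ 0) :
    HasDerivAt (fun q : ℝ => binPMF N q x)
      (binPMF N p x * ((x : ℝ) - N * p) / (p * (1 - p))) p := by
  have h1 : HasDerivAt (fun q : ℝ => (N.choose x : ℝ) * q ^ x)
      ((N.choose x : ℝ) * ((x:ℝ) * p ^ (x - 1))) p := (hasDerivAt_pow x p).const_mul _
  have hlin : HasDerivAt (fun q : ℝ => 1 - q) (-1 : ℝ) p := by
    simpa using (hasDerivAt_id p).const_sub (1:ℝ)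
  have h2 : HasDerivAt (fun q : ℝ => (1 - q) ^ (N - x))
      ((((N - x : ℕ):ℝ) * (1 - p) ^ (N - x - 1)) * (-1)) p := by
    simpa [Function.comp_def] using (hasDerivAt_pow (N - x) (1 - p)).comp p hlin
  have h3 := h1.mul h2
  have h3' : HasDerivAt (fun q : ℝ => binPMF N q x)
      ((N.choose x : ℝ) * ((x:ℝ) * p ^ (x - 1)) * (1 - p) ^ (N - x)
        + ((N.choose x : ℝ) * p ^ x) * ((((N - x : ℕ):ℝ) * (1 - p) ^ (N - x - 1)) * (-1))) p := by
    simp only [binPMF]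
    exact h3.congr_deriv (by ring)
  have e1 : (x:ℝ) * p ^ (x - 1) = (x:ℝ) * p ^ x / p := by
    cases x with
    | zero => simp
    | succ m =>
      simp only [Nat.succ_sub_one]
      rw [pow_succ]
      field_simp
  have e2 : ((N - x : ℕ):ℝ) * (1 - p) ^ (N - x - 1)
      = ((N:ℝ) - x) * (1 - p) ^ (N - x) / (1 - p) := by
    rw [Nat.cast_sub hx]
    rcases eq_or_lt_of_le hx with rfl | hlt
    · simp
    · have hm : N - x = (N - x - 1) + 1 := by omega
      rw [hm, pow_succ]
      simp only [Nat.add_sub_cancel]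
      field_simp
  rw [e1, e2] at h3'
  convert h3' using 1
  simp only [binPMF]
  field_simp
  ring

theorem binomial_score_identity (N : ℕ) (hN : 1 ≤ N) (h : ℤ → ℝ)
    (hneg : ∀ x : ℤ, x < 0 → h x = 0) (p : ℝ) (hp : p ∈ Set.Ioo (0 : ℝ) 1) :
    HasDerivAt (fun q : ℝ => ∑ x ∈ Finset.range (N+1), binPMF N q x * h x)
      (∑ x ∈ Finset.range (N+1),
        binPMF N p x * ((x : ℝ) - N * p) * h x / (p * (1 - p))) p ∧
    (∑ x ∈ Finset.range (N+1), binPMF N p x * ((x : ℝ) - N * p) * h x / (p * (1 - p))) =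
      (1 / p) * ∑ x ∈ Finset.range (N+1),
        binPMF N p x * (x : ℝ) * (h x - h ((x : ℤ) - 1)) := by
  obtain ⟨hp0, hp1⟩ := hp
  have hp0' : p ≠ 0 := ne_of_gt hp0
  have hp1' : (1:ℝ) - p ≠ 0 := ne_of_gt (by linarith)
  constructor
  · have hd : ∀ x ∈ Finset.range (N+1), HasDerivAt (fun q : ℝ => binPMF N q x * h x)
        (binPMF N p x * ((x : ℝ) - N * p) / (p * (1 - p)) * h x) p := fun x hx =>
      (binPMF_deriv N x (Nat.lt_succ_iff.mp (mem_range.mp hx)) hp0' hp1').mul_const _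
    have := HasDerivAt.fun_sum hd
    refine this.congr_deriv ?_
    exact Finset.sum_congr rfl fun x _ => by ring
  · -- step identity
    have step : ∀ x ≤ N, p * ((N:ℝ) - x) * binPMF N p x
        = (1 - p) * ((x:ℝ) + 1) * binPMF N p (x+1) := by
      intro x hx
      rcases eq_or_lt_of_le hx with rfl | hlt
      · simp [binPMF, Nat.choose_eq_zero_of_lt]
      · have hc : ((x:ℝ) + 1) * (N.choose (x+1) : ℝ) = (N.choose x : ℝ) * ((N:ℝ) - x) := by
          have h4 : ((N.choose (x+1) * (x+1) : ℕ) : ℝ) = ((N.choose x * (N - x) : ℕ) : ℝ) := by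
            exact_mod_cast congrArg (Nat.cast : ℕ → ℝ) (Nat.choose_succ_right_eq N x)
          push_cast [Nat.cast_sub hx] at h4
          linarith
        simp only [binPMF]
        have hm : N - x = (N - (x+1)) + 1 := by omega
        rw [hm, pow_succ]
        linear_combination (-(p * p ^ x * (1 - p) ^ (N - (x+1)) * (1 - p))) * hc
    have key : ∑ x ∈ Finset.range (N+1), binPMF N p x * ((x:ℝ) - N*p) * h x
        = (1 - p) * ∑ x ∈ Finset.range (N+1), binPMF N p x * (x:ℝ) * (h x - h ((x:ℤ) - 1)) := by
      have split : ∀ x ∈ Finset.range (N+1), binPMF N p x * ((x:ℝ) - N*p) * h x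
          = (1-p) * (binPMF N p x * (x:ℝ) * h x) - (p * ((N:ℝ)-x) * binPMF N p x) * h x :=
        fun x _ => by ring
      rw [Finset.sum_congr rfl split, Finset.sum_sub_distrib]
      set G : ℕ → ℝ := fun y => (1-p) * (y:ℝ) * binPMF N p y * h ((y:ℤ)-1) with hG
      have e3 : ∑ x ∈ Finset.range (N+1), (p * ((N:ℝ)-x) * binPMF N p x) * h x
          = ∑ x ∈ Finset.range (N+1), G (x+1) := by
        refine Finset.sum_congr rfl fun x hx => ?_
        rw [step x (Nat.lt_succ_iff.mp (mem_range.mp hx))]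
        have hcast : ((x+1 : ℕ) : ℤ) - 1 = (x:ℤ) := by push_cast; ring
        simp only [hG, hcast]
        push_cast
        ring
      have e5 : ∑ x ∈ Finset.range (N+1), G (x+1) = ∑ x ∈ Finset.range (N+1), G x := by
        have h1 := Finset.sum_range_succ' G (N+1)
        have h2 := Finset.sum_range_succ G (N+1)
        have hG0 : G 0 = 0 := by simp [hG]
        have hGN : G (N+1) = 0 := by
          simp [hG, binPMF, Nat.choose_eq_zero_of_lt (Nat.lt_succ_self N)]
        linarith
      rw [e3, e5, Finset.mul_sum, ← Finset.sum_sub_distrib]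
      exact Finset.sum_congr rfl fun x _ => by simp only [hG]; ring
    rw [← Finset.sum_div]
    rw [show (∑ x ∈ Finset.range (N+1), binPMF N p x * ((x:ℝ) - N*p) * h x)
        = (1 - p) * ∑ x ∈ Finset.range (N+1), binPMF N p x * (x:ℝ) * (h x - h ((x:ℤ) - 1)) from key]
    field_simp
end

section
/- Let N be a positive integer and let h : ℤ → ℝ be any function with h(x) = 0 for x < 0. Define F(p) = Σ_{x=0}^N C(N,x) p^x (1−p)^{N−x} h(x) and h̃(x) = (x+2)(x+1)h(x) for x ∈ ℤ. Then for every p ∈ (0,1), the second derivative of p ↦ p² F(p) satisfies d²/dp² [p² F(p)] = Σ_{x=0}^N C(N,x) p^x (1−p)^{N−x} [h̃(x) − 2h̃(x−1) + h̃(x−2)]. -/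
open Finset

private lemma hd1 (k m : ℕ) (q : ℝ) :
    HasDerivAt (fun q : ℝ => q ^ k * (1 - q) ^ m)
      ((k : ℝ) * (q ^ (k - 1) * (1 - q) ^ m) - (m : ℝ) * (q ^ k * (1 - q) ^ (m - 1))) q := by
  have h1 : HasDerivAt (fun q : ℝ => q ^ k) ((k : ℝ) * q ^ (k - 1)) q := hasDerivAt_pow k q
  have h2 : HasDerivAt (fun q : ℝ => (1 - q) ^ m) (-((m : ℝ) * (1 - q) ^ (m - 1))) q := by
    have := (hasDerivAt_pow m (1 - q)).comp q ((hasDerivAt_id q).const_sub 1)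
    simpa [Function.comp_def] using this
  have := h1.fun_mul h2
  exact this.congr_deriv (by ring)

private lemma hd2 (k m : ℕ) (q : ℝ) :
    HasDerivAt (fun q : ℝ =>
        (k : ℝ) * (q ^ (k - 1) * (1 - q) ^ m) - (m : ℝ) * (q ^ k * (1 - q) ^ (m - 1)))
      ((k : ℝ) * (((k - 1 : ℕ) : ℝ) * (q ^ (k - 1 - 1) * (1 - q) ^ m)
          - (m : ℝ) * (q ^ (k - 1) * (1 - q) ^ (m - 1)))
        - (m : ℝ) * ((k : ℝ) * (q ^ (k - 1) * (1 - q) ^ (m - 1))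
          - ((m - 1 : ℕ) : ℝ) * (q ^ k * (1 - q) ^ (m - 1 - 1)))) q :=
  ((hd1 (k - 1) m q).const_mul _).sub ((hd1 k (m - 1) q).const_mul _)

private lemma shift1 (N : ℕ) (h : ℤ → ℝ) (p : ℝ) :
    ∑ x ∈ range (N+1), ((N.choose x : ℝ) * ((x:ℝ)+1) * (x:ℝ)) * h ((x:ℤ)-1)
        * (p ^ x * (1-p) ^ (N-x))
      = ∑ x ∈ range (N+1), ((N.choose x : ℝ) * ((x:ℝ)+2) * ((N-x : ℕ):ℝ)) * h (x:ℤ)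
        * (p ^ (x+1) * (1-p) ^ (N-x-1)) := by
  rw [Finset.sum_range_succ' _ N, Finset.sum_range_succ]
  norm_num
  refine Finset.sum_congr rfl fun x hx => ?_
  have key : (N.choose (x+1) : ℝ) * ((x:ℝ)+1) = (N.choose x : ℝ) * ((N-x : ℕ):ℝ) := by
    exact_mod_cast congrArg (Nat.cast (R := ℝ)) (Nat.choose_succ_right_eq N x)
  rw [show N - (x+1) = N - x - 1 from rfl]
  linear_combination (((x:ℝ)+2) * h (x:ℤ) * (p^(x+1)*(1-p)^(N-x-1))) * key

private lemma shift2 (N : ℕ) (hN : 1 ≤ N) (h : ℤ → ℝ) (p : ℝ) :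
    ∑ x ∈ range (N+1), ((N.choose x : ℝ) * (x:ℝ) * ((x:ℝ)-1)) * h ((x:ℤ)-2)
        * (p ^ x * (1-p) ^ (N-x))
      = ∑ x ∈ range (N+1), ((N.choose x : ℝ) * ((N-x : ℕ):ℝ) * ((N-x-1 : ℕ):ℝ)) * h (x:ℤ)
        * (p ^ (x+2) * (1-p) ^ (N-x-2)) := by
  obtain ⟨k, rfl⟩ : ∃ k, N = k + 1 := ⟨N - 1, (Nat.succ_pred_eq_of_pos hN).symm⟩
  rw [Finset.sum_range_succ' _ (k+1), Finset.sum_range_succ' _ k,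
      Finset.sum_range_succ, Finset.sum_range_succ]
  norm_num
  refine Finset.sum_congr rfl fun x hx => ?_
  have e1 : (Nat.choose (k+1) (x+1) : ℝ) * ((x:ℝ)+1)
      = (Nat.choose (k+1) x : ℝ) * (((k+1)-x : ℕ):ℝ) := by
    exact_mod_cast congrArg (Nat.cast (R := ℝ)) (Nat.choose_succ_right_eq (k+1) x)
  have e2 : (Nat.choose (k+1) (x+2) : ℝ) * ((x:ℝ)+2)
      = (Nat.choose (k+1) (x+1) : ℝ) * (((k+1)-(x+1) : ℕ):ℝ) := by
    exact_mod_cast congrArg (Nat.cast (R := ℝ)) (Nat.choose_succ_right_eq (k+1) (x+1))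
  rw [show ((x:ℤ) + 1 + 1 - 2) = (x:ℤ) by ring]
  rw [show x + 1 + 1 = x + 2 from rfl]
  rw [show (k+1) - (x+2) = (k+1) - x - 2 by omega]
  rw [show (k+1) - (x+1) = (k+1) - x - 1 from rfl] at e2
  linear_combination (((x:ℝ)+1) * h (x:ℤ) * (p^(x+2)*(1-p)^(k+1-x-2))) * e2
    + ((((k+1)-x-1 : ℕ):ℝ) * h (x:ℤ) * (p^(x+2)*(1-p)^(k+1-x-2))) * e1

theorem second_derivative_identity (N : ℕ) (hN : 1 ≤ N) (h : ℤ → ℝ)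
    (hneg : ∀ x : ℤ, x < 0 → h x = 0)
    (htil : ℤ → ℝ) (hhtil : ∀ x : ℤ, htil x = ((x : ℝ) + 2) * ((x : ℝ) + 1) * h x)
    (p : ℝ) (hp : p ∈ Set.Ioo (0 : ℝ) 1) :
    iteratedDeriv 2
        (fun q : ℝ => q ^ 2 * ∑ x ∈ Finset.range (N+1), binPMF N q x * h x) p =
      ∑ x ∈ Finset.range (N+1),
        binPMF N p x * (htil x - 2 * htil ((x : ℤ) - 1) + htil ((x : ℤ) - 2)) := by
  have hfun : (fun q : ℝ => q ^ 2 * ∑ x ∈ range (N+1), binPMF N q x * h x)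
      = fun q : ℝ => ∑ x ∈ range (N+1),
          ((N.choose x : ℝ) * h x) * (q ^ (x+2) * (1 - q) ^ (N-x)) := by
    funext q
    rw [Finset.mul_sum]
    refine Finset.sum_congr rfl fun x _ => ?_
    simp only [binPMF]
    ring
  rw [hfun, iteratedDeriv_succ, iteratedDeriv_one]
  have hderiv1 : deriv (fun q : ℝ => ∑ x ∈ range (N+1),
          ((N.choose x : ℝ) * h x) * (q ^ (x+2) * (1 - q) ^ (N-x)))
      = fun q : ℝ => ∑ x ∈ range (N+1), ((N.choose x : ℝ) * h x) *
          (((x+2 : ℕ) : ℝ) * (q ^ (x+1) * (1 - q) ^ (N-x))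
            - ((N-x : ℕ) : ℝ) * (q ^ (x+2) * (1 - q) ^ (N-x-1))) := by
    funext q
    exact (HasDerivAt.fun_sum fun x _ => (hd1 (x+2) (N-x) q).const_mul _).deriv
  rw [hderiv1]
  have hderiv2 : HasDerivAt (fun q : ℝ => ∑ x ∈ range (N+1), ((N.choose x : ℝ) * h x) *
          (((x+2 : ℕ) : ℝ) * (q ^ (x+1) * (1 - q) ^ (N-x))
            - ((N-x : ℕ) : ℝ) * (q ^ (x+2) * (1 - q) ^ (N-x-1))))
      (∑ x ∈ range (N+1), ((N.choose x : ℝ) * h x) *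
        (((x+2 : ℕ) : ℝ) * (((x+1 : ℕ) : ℝ) * (p ^ x * (1 - p) ^ (N-x))
            - ((N-x : ℕ) : ℝ) * (p ^ (x+1) * (1 - p) ^ (N-x-1)))
          - ((N-x : ℕ) : ℝ) * (((x+2 : ℕ) : ℝ) * (p ^ (x+1) * (1 - p) ^ (N-x-1))
            - ((N-x-1 : ℕ) : ℝ) * (p ^ (x+2) * (1 - p) ^ (N-x-2))))) p :=
    HasDerivAt.fun_sum fun x _ => (hd2 (x+2) (N-x) p).const_mul _
  rw [hderiv2.deriv]
  calc
    ∑ x ∈ range (N+1), ((N.choose x : ℝ) * h x) *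
        (((x+2 : ℕ) : ℝ) * (((x+1 : ℕ) : ℝ) * (p ^ x * (1 - p) ^ (N-x))
            - ((N-x : ℕ) : ℝ) * (p ^ (x+1) * (1 - p) ^ (N-x-1)))
          - ((N-x : ℕ) : ℝ) * (((x+2 : ℕ) : ℝ) * (p ^ (x+1) * (1 - p) ^ (N-x-1))
            - ((N-x-1 : ℕ) : ℝ) * (p ^ (x+2) * (1 - p) ^ (N-x-2))))
      = ∑ x ∈ range (N+1),
          ((((N.choose x : ℝ) * ((x:ℝ)+2) * ((x:ℝ)+1)) * h (x:ℤ) * (p ^ x * (1-p) ^ (N-x)))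
          - 2 * (((N.choose x : ℝ) * ((x:ℝ)+2) * ((N-x : ℕ):ℝ)) * h (x:ℤ)
              * (p ^ (x+1) * (1-p) ^ (N-x-1)))
          + (((N.choose x : ℝ) * ((N-x : ℕ):ℝ) * ((N-x-1 : ℕ):ℝ)) * h (x:ℤ)
              * (p ^ (x+2) * (1-p) ^ (N-x-2)))) := by
        refine Finset.sum_congr rfl fun x _ => ?_
        push_cast
        ring
    _ = (∑ x ∈ range (N+1),
            ((N.choose x : ℝ) * ((x:ℝ)+2) * ((x:ℝ)+1)) * h (x:ℤ) * (p ^ x * (1-p) ^ (N-x)))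
        - 2 * (∑ x ∈ range (N+1), ((N.choose x : ℝ) * ((x:ℝ)+2) * ((N-x : ℕ):ℝ)) * h (x:ℤ)
            * (p ^ (x+1) * (1-p) ^ (N-x-1)))
        + (∑ x ∈ range (N+1), ((N.choose x : ℝ) * ((N-x : ℕ):ℝ) * ((N-x-1 : ℕ):ℝ)) * h (x:ℤ)
            * (p ^ (x+2) * (1-p) ^ (N-x-2))) := by
        rw [Finset.sum_add_distrib, Finset.sum_sub_distrib, ← Finset.mul_sum]
    _ = (∑ x ∈ range (N+1),
            ((N.choose x : ℝ) * ((x:ℝ)+2) * ((x:ℝ)+1)) * h (x:ℤ) * (p ^ x * (1-p) ^ (N-x)))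
        - 2 * (∑ x ∈ range (N+1), ((N.choose x : ℝ) * ((x:ℝ)+1) * (x:ℝ)) * h ((x:ℤ)-1)
            * (p ^ x * (1-p) ^ (N-x)))
        + (∑ x ∈ range (N+1), ((N.choose x : ℝ) * (x:ℝ) * ((x:ℝ)-1)) * h ((x:ℤ)-2)
            * (p ^ x * (1-p) ^ (N-x))) := by
        rw [shift1 N h p, shift2 N hN h p]
    _ = ∑ x ∈ range (N+1),
          ((((N.choose x : ℝ) * ((x:ℝ)+2) * ((x:ℝ)+1)) * h (x:ℤ) * (p ^ x * (1-p) ^ (N-x)))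
          - 2 * (((N.choose x : ℝ) * ((x:ℝ)+1) * (x:ℝ)) * h ((x:ℤ)-1)
              * (p ^ x * (1-p) ^ (N-x)))
          + (((N.choose x : ℝ) * (x:ℝ) * ((x:ℝ)-1)) * h ((x:ℤ)-2)
              * (p ^ x * (1-p) ^ (N-x)))) := by
        rw [Finset.sum_add_distrib, Finset.sum_sub_distrib, ← Finset.mul_sum]
    _ = ∑ x ∈ range (N+1),
          binPMF N p x * (htil x - 2 * htil ((x : ℤ) - 1) + htil ((x : ℤ) - 2)) := by
        refine Finset.sum_congr rfl fun x _ => ?_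
        rw [hhtil, hhtil, hhtil]
        simp only [binPMF]
        push_cast
        ring
end
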